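/- arXiv:math/0605408 — 11 statements merged into one kernel-verified Lean document; each statement's English description precedes it below -/
import Mathlib

section
/- (Mahler's lower bound) For every integer n ≥ 1 and every symmetric convex body C in ℝⁿ, one has vol(C) · vol(C°) ≥ 4ⁿ / (n!)². -/
open MeasureTheory Matrix

/-- The absolutely convex combination lemma. -/
lemma sum_smul_mem_of_symm {E : Type*} [NormedAddCommGroup E] [NormedSpace ℝ E]
    {C : Set E} (hC : Convex ℝ C) (hsymm : C = -C) (h0 : (0:E) ∈ C) {n : ℕ}
    {v : Fin n → E} (hv : ∀ i, v i ∈ C) {t : Fin n → ℝ} (ht : ∑ i, |t i| ≤ 1) :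
    ∑ i, t i • v i ∈ C := by
  classical
  set s := ∑ i, |t i| with hs
  rcases eq_or_lt_of_le (Finset.sum_nonneg fun i _ => abs_nonneg (t i)) with h | hpos
  · have hti : ∀ i, t i = 0 := by
      intro i
      have := Finset.sum_eq_zero_iff_of_nonneg (fun i _ => abs_nonneg (t i)) |>.mp h.symm i
        (Finset.mem_univ i)
      exact abs_eq_zero.mp this
    simp [hti, h0]
  · set p : Fin n → E := fun i => if 0 ≤ t i then v i else -(v i) with hp
    have hpC : ∀ i, p i ∈ C := by
      intro i
      by_cases h : 0 ≤ t i <;> simp only [hp, h, if_true, if_false]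
      · exact hv i
      · rw [hsymm]; exact Set.neg_mem_neg.mpr (hv i)
    have hq : ∑ i, (|t i| / s) • p i ∈ C := by
      refine hC.sum_mem (fun i _ => by positivity) ?_ (fun i _ => hpC i)
      rw [← Finset.sum_div, ← hs, div_self (ne_of_gt hpos)]
    have habs : ∀ i, |t i| • p i = t i • v i := by
      intro i
      by_cases h : 0 ≤ t i
      · simp [hp, h, abs_of_nonneg h]
      · push_neg at h
        simp [hp, not_le.mpr h, abs_of_neg h, smul_neg]
    have hsq : s • (∑ i, (|t i| / s) • p i) = ∑ i, t i • v i := by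
      rw [Finset.smul_sum]
      refine Finset.sum_congr rfl fun i _ => ?_
      rw [smul_smul, mul_div_cancel₀ _ (ne_of_gt hpos), habs]
    have := hC hq h0 (le_of_lt hpos) (by linarith) (by ring : s + (1 - s) = 1)
    rwa [smul_zero, add_zero, hsq] at this

/-- Volume of the open unit `ℓ¹`-ball in Euclidean space. -/
lemma volume_l1_ball (n : ℕ) :
    volume {t : EuclideanSpace ℝ (Fin n) | ∑ i, |t i| < 1} =
      ENNReal.ofReal ((2:ℝ) ^ n / (n.factorial : ℝ)) := by
  have h := MeasureTheory.volume_sum_rpow_lt_one (Fin n) (p := 1) le_rfl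
  simp only [Real.rpow_one, Fintype.card_fin] at h
  have h2 : (1:ℝ)/1 + 1 = 2 := by norm_num
  rw [h2, Real.Gamma_two, mul_one, div_one, Real.Gamma_nat_eq_factorial] at h
  have e := (EuclideanSpace.volume_preserving_symm_measurableEquiv_toLp (Fin n)).symm
  have hset : (MeasurableEquiv.toLp 2 (Fin n → ℝ)).symm.symm ⁻¹'
      {t : EuclideanSpace ℝ (Fin n) | ∑ i, |t i| < 1}
      = {x : Fin n → ℝ | ∑ i, |x i| < 1} := rfl
  rw [← h, ← e.measure_preimage ?_, hset]
  · exact (measurableSet_lt (by fun_prop) measurable_const).nullMeasurableSet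

/-- **Mahler's lower bound.** For every symmetric convex body `C` in `ℝⁿ`,
`vol C * vol C° ≥ 4ⁿ / (n!)²`. -/
theorem mahler_lower_bound (n : ℕ) (hn : 1 ≤ n)
    (C : Set (EuclideanSpace ℝ (Fin n)))
    (hC_conv : Convex ℝ C) (hC_comp : IsCompact C)
    (hC_int : (interior C).Nonempty) (hC_symm : C = -C) :
    ENNReal.ofReal ((4 : ℝ) ^ n / (n.factorial : ℝ) ^ 2) ≤
      volume C *
        volume {y : EuclideanSpace ℝ (Fin n) | ∀ x ∈ C, |(inner ℝ x y : ℝ)| ≤ 1} := by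
  classical
  set P := {y : EuclideanSpace ℝ (Fin n) | ∀ x ∈ C, |(inner ℝ x y : ℝ)| ≤ 1} with hPdef
  -- 0 is in the interior of C
  obtain ⟨z, hz⟩ := hC_int
  have hz' : -z ∈ interior C := by
    have hsub : -interior C ⊆ C := by
      intro y hy
      rw [hC_symm, Set.mem_neg]
      exact interior_subset hy
    exact interior_maximal hsub isOpen_interior.neg (Set.neg_mem_neg.mpr hz)
  have h0int : (0 : EuclideanSpace ℝ (Fin n)) ∈ interior C := by
    have h := hC_conv.interior hz hz' (by norm_num : (0:ℝ) ≤ 1/2)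
      (by norm_num : (0:ℝ) ≤ 1/2) (by norm_num)
    simpa [smul_neg] using h
  obtain ⟨ε, hε, hball⟩ := Metric.mem_nhds_iff.mp (mem_interior_iff_mem_nhds.mp h0int)
  have h0 : (0 : EuclideanSpace ℝ (Fin n)) ∈ C := interior_subset h0int
  -- maximize |det| over rows in C
  set f : (Fin n → EuclideanSpace ℝ (Fin n)) → ℝ :=
    fun w => |(Matrix.of fun i j => w i j).det| with hf
  have hA : Continuous fun w : Fin n → EuclideanSpace ℝ (Fin n) =>
      (Matrix.of fun i j => w i j) :=
    continuous_matrix fun i j => (EuclideanSpace.proj j).continuous.comp (continuous_apply i)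
  have hfc : Continuous f := continuous_abs.comp hA.matrix_det
  have hScomp : IsCompact (Set.univ.pi fun _ : Fin n => C) :=
    isCompact_univ_pi fun _ => hC_comp
  have hSne : (Set.univ.pi fun _ : Fin n => C).Nonempty := ⟨fun _ => 0, fun i _ => h0⟩
  obtain ⟨v, hvS, hvmax0⟩ := hScomp.exists_isMaxOn hSne hfc.continuousOn
  have hvmax : ∀ w ∈ Set.univ.pi fun _ : Fin n => C, f w ≤ f v := fun w hw => hvmax0 hw
  have hrows : ∀ i, v i ∈ C := fun i => hvS i (Set.mem_univ i)
  set M : Matrix (Fin n) (Fin n) ℝ := Matrix.of fun i j => v i j with hM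
  -- the maximum is positive
  have hwS : (fun i => EuclideanSpace.single i (ε/2)) ∈ Set.univ.pi fun _ : Fin n => C := by
    intro i _
    apply hball
    rw [mem_ball_zero_iff, EuclideanSpace.norm_single, Real.norm_eq_abs,
      abs_of_pos (by linarith)]
    linarith
  have hwdet : f (fun i => EuclideanSpace.single i (ε/2)) = (ε/2) ^ n := by
    have : (Matrix.of fun i j => EuclideanSpace.single i (ε/2) j)
        = (ε/2) • (1 : Matrix (Fin n) (Fin n) ℝ) := by
      ext i j
      by_cases h : j = i <;>
        simp [EuclideanSpace.single_apply, Matrix.one_apply, h, eq_comm]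
    rw [hf]
    simp only [this, Matrix.det_smul, Matrix.det_one, mul_one, Fintype.card_fin]
    rw [abs_pow, abs_of_pos (by linarith)]
  have hfvpos : 0 < f v := by
    have := hvmax _ hwS
    rw [hwdet] at this
    exact lt_of_lt_of_le (by positivity) this
  have hMdet : M.det ≠ 0 := by
    intro h
    rw [hf] at hfvpos
    simp only [← hM, h, abs_zero] at hfvpos
    exact lt_irrefl _ hfvpos
  have hMunit : IsUnit M.det := isUnit_iff_ne_zero.mpr hMdet
  set B : Matrix (Fin n) (Fin n) ℝ := M⁻¹ with hB
  have hBM : B * M = 1 := Matrix.nonsing_inv_mul M hMunit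
  -- key estimate : dual vectors have inner products ≤ 1 on C
  have key : ∀ x ∈ C, ∀ i, |∑ j, x j * B j i| ≤ 1 := by
    intro x hx i
    set c : Fin n → ℝ := fun k => ∑ j, x j * B j k with hc
    have hxc : (fun j => x j) = ∑ k, c k • (M k) := by
      funext j
      rw [Finset.sum_apply]
      simp only [Pi.smul_apply, smul_eq_mul]
      have h2 : ∑ k, c k * M k j = (((fun j => x j) ᵥ* B) ᵥ* M) j := rfl
      rw [h2, Matrix.vecMul_vecMul, hBM, Matrix.vecMul_one]
    have hdet : (M.updateRow i (fun j => x j)).det = c i * M.det := by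
      rw [hxc, Matrix.det_updateRow_sum, smul_eq_mul]
    have hmat : (Matrix.of fun i' j => Function.update v i x i' j)
        = M.updateRow i (fun j => x j) := by
      ext i' j
      rw [Matrix.updateRow_apply]
      by_cases h : i' = i <;> simp [Function.update_apply, h, hM]
    have hupd : f (Function.update v i x) = |(M.updateRow i (fun j => x j)).det| := by
      show |(Matrix.of fun i' j => Function.update v i x i' j).det| = _
      rw [hmat]
    have hmem : Function.update v i x ∈ Set.univ.pi fun _ : Fin n => C := by
      intro k _
      by_cases h : k = i
      · subst h; simpa using hx
      · simpa [Function.update_apply, h] using hrows k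
    have hle := hvmax _ hmem
    rw [hupd, hdet, abs_mul] at hle
    have : |c i| * |M.det| ≤ 1 * |M.det| := by
      rw [one_mul]; exact hle
    exact le_of_mul_le_mul_right this (abs_pos.mpr hMdet)
  -- the ℓ¹ ball
  set Bl := {t : EuclideanSpace ℝ (Fin n) | ∑ i, |t i| < 1} with hBl
  set V := ENNReal.ofReal ((2:ℝ) ^ n / (n.factorial : ℝ)) with hV
  have hVBl : volume Bl = V := volume_l1_ball n
  -- C contains the cross-polytope
  have hTdet : LinearMap.det (Matrix.toEuclideanLin Mᵀ) = M.det := by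
    rw [Matrix.toEuclideanLin_eq_toLin, LinearMap.det_toLin, Matrix.det_transpose]
  have hTsub : (Matrix.toEuclideanLin Mᵀ) '' Bl ⊆ C := by
    rintro _ ⟨t, ht, rfl⟩
    have heq : Matrix.toEuclideanLin Mᵀ t = ∑ i, t i • v i := by
      ext j
      rw [Matrix.toEuclideanLin_apply]
      simp only [Matrix.mulVec, dotProduct,
        Matrix.transpose_apply]
      rw [WithLp.ofLp_sum, Finset.sum_apply]
      refine Finset.sum_congr rfl fun i _ => ?_
      simp [hM, mul_comm]
    rw [heq]
    exact sum_smul_mem_of_symm hC_conv hC_symm h0 hrows (le_of_lt ht)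
  have hvolC : ENNReal.ofReal |M.det| * V ≤ volume C := by
    calc ENNReal.ofReal |M.det| * V
        = volume ((Matrix.toEuclideanLin Mᵀ) '' Bl) := by
          rw [Measure.addHaar_image_linearMap, hTdet, hVBl]
      _ ≤ volume C := measure_mono hTsub
  -- the polar contains the dual cross-polytope
  have hSdet : LinearMap.det (Matrix.toEuclideanLin B) = (M.det)⁻¹ := by
    rw [Matrix.toEuclideanLin_eq_toLin, LinearMap.det_toLin, hB, Matrix.det_nonsing_inv,
      Ring.inverse_eq_inv']
  have hSsub : (Matrix.toEuclideanLin B) '' Bl ⊆ P := by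
    rintro _ ⟨t, ht, rfl⟩
    intro x hx
    have hinner : (inner ℝ x (Matrix.toEuclideanLin B t) : ℝ)
        = ∑ i, t i * ∑ j, x j * B j i := by
      calc (inner ℝ x (Matrix.toEuclideanLin B t) : ℝ)
          = ∑ j, x j * ∑ i, B j i * t i := by
            rw [PiLp.inner_apply]
            simp [Matrix.toEuclideanLin_apply, Matrix.mulVec, dotProduct]
            exact Finset.sum_congr rfl fun j _ => mul_comm _ _
        _ = ∑ j, ∑ i, x j * (B j i * t i) := by simp [Finset.mul_sum]
        _ = ∑ i, ∑ j, x j * (B j i * t i) := Finset.sum_comm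
        _ = ∑ i, t i * ∑ j, x j * B j i := by
            refine Finset.sum_congr rfl fun i _ => ?_
            rw [Finset.mul_sum]
            exact Finset.sum_congr rfl fun j _ => by ring
    rw [hinner]
    calc |∑ i, t i * ∑ j, x j * B j i| ≤ ∑ i, |t i * ∑ j, x j * B j i| :=
          Finset.abs_sum_le_sum_abs _ _
      _ ≤ ∑ i, |t i| := by
          refine Finset.sum_le_sum fun i _ => ?_
          rw [abs_mul]
          calc |t i| * |∑ j, x j * B j i| ≤ |t i| * 1 :=
                mul_le_mul_of_nonneg_left (key x hx i) (abs_nonneg _)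
            _ = |t i| := mul_one _
      _ ≤ 1 := le_of_lt ht
  have hvolP : ENNReal.ofReal |M.det|⁻¹ * V ≤ volume P := by
    calc ENNReal.ofReal |M.det|⁻¹ * V
        = volume ((Matrix.toEuclideanLin B) '' Bl) := by
          rw [Measure.addHaar_image_linearMap, hSdet, hVBl, abs_inv]
      _ ≤ volume P := measure_mono hSsub
  -- combine
  calc ENNReal.ofReal ((4 : ℝ) ^ n / (n.factorial : ℝ) ^ 2)
      = (ENNReal.ofReal |M.det| * V) * (ENNReal.ofReal |M.det|⁻¹ * V) := by
        rw [mul_mul_mul_comm, ← ENNReal.ofReal_mul (abs_nonneg _),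
          mul_inv_cancel₀ (abs_ne_zero.mpr hMdet), ENNReal.ofReal_one, one_mul, hV,
          ← ENNReal.ofReal_mul (by positivity)]
        congr 1
        rw [div_mul_div_comm, ← pow_add, ← two_mul, pow_mul]
        norm_num [sq]
      _ ≤ volume C * volume P := mul_le_mul' hvolC hvolP
end

section
/- (John ellipsoid) For every integer n ≥ 1 and every symmetric convex body C in ℝⁿ, there exists a unique ellipsoid J(C) contained in C whose Lebesgue volume is maximal among all ellipsoids contained in C; that is, there exists an ellipsoid D ⊆ C such that vol(D') ≤ vol(D) for every ellipsoid D' ⊆ C, and any two such maximal-volume ellipsoids coincide as sets. -/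
open MeasureTheory

/-- An ellipsoid in `ℝⁿ` is the image of the closed Euclidean unit ball under an
invertible linear map. -/
def IsEllipsoid (n : ℕ) (D : Set (EuclideanSpace ℝ (Fin n))) : Prop :=
  ∃ L : EuclideanSpace ℝ (Fin n) ≃ₗ[ℝ] EuclideanSpace ℝ (Fin n),
    D = L '' Metric.closedBall 0 1

section JohnAux

open Matrix

variable {n : ℕ}

open scoped MatrixOrder in
noncomputable def Matrix.PosSemidef.sqrt {A : Matrix (Fin n) (Fin n) ℝ} (_hA : A.PosSemidef) :
    Matrix (Fin n) (Fin n) ℝ := CFC.sqrt A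

open scoped MatrixOrder in
lemma Matrix.PosSemidef.sqrt_mul_self {A : Matrix (Fin n) (Fin n) ℝ} (hA : A.PosSemidef) :
    hA.sqrt * hA.sqrt = A :=
  CFC.sqrt_mul_sqrt_self A hA.nonneg

open scoped MatrixOrder in
lemma Matrix.PosSemidef.posSemidef_sqrt {A : Matrix (Fin n) (Fin n) ℝ} (hA : A.PosSemidef) :
    hA.sqrt.PosSemidef :=
  (CFC.sqrt_nonneg A).posSemidef


lemma aux_posDef_of_det {M : Matrix (Fin n) (Fin n) ℝ} (h : M.PosSemidef)
    (hdet : M.det ≠ 0) : M.PosDef := by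
  exact h.posDef_iff_det_ne_zero.mpr hdet

lemma aux_dot (N : Matrix (Fin n) (Fin n) ℝ) (v : Fin n → ℝ) :
    (N *ᵥ v) ⬝ᵥ (N *ᵥ v) = v ⬝ᵥ ((Nᵀ * N) *ᵥ v) := by
  rw [← Matrix.mulVec_mulVec, Matrix.dotProduct_mulVec v Nᵀ, Matrix.vecMul_transpose]

lemma aux_norm_image {N N' : Matrix (Fin n) (Fin n) ℝ}
    (h : Nᵀ * N = N'ᵀ * N') (x : EuclideanSpace ℝ (Fin n)) :
    ‖Matrix.toEuclideanLin N x‖ = ‖Matrix.toEuclideanLin N' x‖ := by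
  have key : ∀ (A : Matrix (Fin n) (Fin n) ℝ), ‖Matrix.toEuclideanLin A x‖ ^ 2
      = (WithLp.equiv 2 _ x) ⬝ᵥ ((Aᵀ * A) *ᵥ (WithLp.equiv 2 _ x)) := by
    intro A
    rw [← real_inner_self_eq_norm_sq, EuclideanSpace.inner_eq_star_dotProduct]
    simp only [WithLp.equiv_apply, Matrix.ofLp_toEuclideanLin_apply, star_trivial]
    exact aux_dot A _
  have h2 : ‖Matrix.toEuclideanLin N x‖ ^ 2 = ‖Matrix.toEuclideanLin N' x‖ ^ 2 := by
    rw [key, key, h]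
  have := congrArg Real.sqrt h2
  simpa [Real.sqrt_sq, norm_nonneg] using this

lemma aux_image_ball {M : Matrix (Fin n) (Fin n) ℝ} (h : IsUnit M.det) :
    Matrix.toEuclideanLin M '' Metric.closedBall 0 1
      = {x | ‖Matrix.toEuclideanLin M⁻¹ x‖ ≤ 1} := by
  have hinv : ∀ x : EuclideanSpace ℝ (Fin n),
      Matrix.toEuclideanLin M⁻¹ (Matrix.toEuclideanLin M x) = x := by
    intro x
    simp [Matrix.toEuclideanLin_apply, Matrix.mulVec_mulVec, Matrix.nonsing_inv_mul M h,
      Matrix.one_mulVec]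
  have hinv' : ∀ x : EuclideanSpace ℝ (Fin n),
      Matrix.toEuclideanLin M (Matrix.toEuclideanLin M⁻¹ x) = x := by
    intro x
    simp [Matrix.toEuclideanLin_apply, Matrix.mulVec_mulVec, Matrix.mul_nonsing_inv M h,
      Matrix.one_mulVec]
  ext y
  simp only [Set.mem_image, Metric.mem_closedBall, dist_zero_right, Set.mem_setOf_eq]
  constructor
  · rintro ⟨x, hx, rfl⟩
    rw [hinv]; exact hx
  · intro hy
    exact ⟨Matrix.toEuclideanLin M⁻¹ y, hy, hinv' y⟩

lemma aux_minkowski {A B : Matrix (Fin n) (Fin n) ℝ} (hA : A.PosDef) (hB : B.PosDef)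
    (hdet : A.det = B.det) (hle : ((2:ℝ)⁻¹ • (A + B)).det ≤ A.det) : A = B := by
  classical
  set S := hA.posSemidef.sqrt with hS_def
  have hSps : S.PosSemidef := hA.posSemidef.posSemidef_sqrt
  have hSS : S * S = A := hA.posSemidef.sqrt_mul_self
  have hdetS : S.det * S.det = A.det := by rw [← Matrix.det_mul, hSS]
  have hdetS0 : S.det ≠ 0 := by
    intro h0
    rw [h0, mul_zero] at hdetS
    exact (ne_of_gt hA.det_pos) hdetS.symm
  have hSu : IsUnit S.det := isUnit_iff_ne_zero.mpr hdetS0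
  have hSherm : S.IsHermitian := hSps.1
  have hSinv_herm : (S⁻¹).IsHermitian := hSherm.inv
  set C := S⁻¹ * B * S⁻¹ with hC_def
  have hCps : C.PosSemidef := by
    have := hB.posSemidef.mul_mul_conjTranspose_same S⁻¹
    rwa [hSinv_herm.eq] at this
  have hdetC : C.det = 1 := by
    rw [hC_def, Matrix.det_mul, Matrix.det_mul, Matrix.det_nonsing_inv, Ring.inverse_eq_inv']
    rw [hdet] at hdetS
    have hBpos := hB.det_pos
    field_simp
    nlinarith [hdetS]
  have hCpd : C.PosDef := aux_posDef_of_det hCps (by rw [hdetC]; exact one_ne_zero)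
  have hCherm : C.IsHermitian := hCpd.1
  set lam := hCherm.eigenvalues with hlam_def
  have hlam_pos : ∀ i, 0 < lam i := hCpd.eigenvalues_pos
  have hprod : ∏ i, lam i = 1 := by
    have := hCherm.det_eq_prod_eigenvalues
    rw [hdetC] at this
    simpa [RCLike.ofReal_real_eq_id] using this.symm
  have hSCS : S * C * S = B := by
    rw [hC_def]
    calc S * (S⁻¹ * B * S⁻¹) * S = (S * S⁻¹) * B * (S⁻¹ * S) := by
          simp only [Matrix.mul_assoc]
      _ = B := by
          rw [Matrix.mul_nonsing_inv _ hSu, Matrix.nonsing_inv_mul _ hSu, Matrix.one_mul,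
            Matrix.mul_one]
  have hkey : (2:ℝ)⁻¹ • (A + B) = S * ((2:ℝ)⁻¹ • (1 + C)) * S := by
    rw [Matrix.mul_smul, Matrix.smul_mul]
    congr 1
    rw [Matrix.mul_add, Matrix.add_mul, Matrix.mul_one, hSS, hSCS]
  -- spectral theorem for C
  set U : Matrix (Fin n) (Fin n) ℝ := (hCherm.eigenvectorUnitary : Matrix (Fin n) (Fin n) ℝ)
    with hU_def
  have hUU : U * star U = 1 := Unitary.mul_star_self_of_mem hCherm.eigenvectorUnitary.2
  have hCU : C = U * Matrix.diagonal lam * star U := by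
    have := hCherm.spectral_theorem
    simpa [RCLike.ofReal_real_eq_id, Function.comp] using this
  have hmid : (2:ℝ)⁻¹ • (1 + C) = U * ((2:ℝ)⁻¹ • (1 + Matrix.diagonal lam)) * star U := by
    rw [Matrix.mul_smul, Matrix.smul_mul]
    congr 1
    rw [Matrix.mul_add, Matrix.add_mul, Matrix.mul_one, hUU, ← hCU]
  have hdet_mid : ((2:ℝ)⁻¹ • (1 + C)).det = ∏ i, (2:ℝ)⁻¹ * (1 + lam i) := by
    rw [hmid, Matrix.det_mul, Matrix.det_mul, mul_comm (U.det), mul_assoc, ← Matrix.det_mul,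
      hUU, Matrix.det_one, mul_one]
    have : (1 : Matrix (Fin n) (Fin n) ℝ) + Matrix.diagonal lam
        = Matrix.diagonal (fun i => 1 + lam i) := by
      rw [← Matrix.diagonal_one, Matrix.diagonal_add]
    rw [this]
    have h2 : (2:ℝ)⁻¹ • Matrix.diagonal (fun i => 1 + lam i)
        = Matrix.diagonal (fun i => (2:ℝ)⁻¹ * (1 + lam i)) := by
      rw [← Matrix.diagonal_smul]
      rfl
    rw [h2, Matrix.det_diagonal]
  have hdet_split : ((2:ℝ)⁻¹ • (A + B)).det = A.det * ∏ i, (2:ℝ)⁻¹ * (1 + lam i) := by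
    have hring : S.det * ((2:ℝ)⁻¹ • (1+C)).det * S.det
        = (S.det * S.det) * ((2:ℝ)⁻¹ • (1+C)).det := by ring
    rw [hkey, Matrix.det_mul, Matrix.det_mul, hring, hdetS, hdet_mid]
  have hprod_le : ∏ i, (2:ℝ)⁻¹ * (1 + lam i) ≤ 1 := by
    rw [hdet_split] at hle
    nlinarith [hA.det_pos]
  have hsqrt_prod : ∏ i, Real.sqrt (lam i) = 1 := by
    have hsq : (∏ i, Real.sqrt (lam i))^2 = 1 := by
      rw [← Finset.prod_pow, Finset.prod_congr rfl (fun i _ => Real.sq_sqrt (hlam_pos i).le)]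
      exact hprod
    have hnn : 0 ≤ ∏ i, Real.sqrt (lam i) := Finset.prod_nonneg fun i _ => Real.sqrt_nonneg _
    have hz : (∏ i, Real.sqrt (lam i) - 1) * (∏ i, Real.sqrt (lam i) + 1) = 0 := by nlinarith
    rcases mul_eq_zero.mp hz with h | h
    · linarith
    · linarith
  have hamgm : ∀ i, Real.sqrt (lam i) ≤ (2:ℝ)⁻¹ * (1 + lam i) := fun i => by
    nlinarith [Real.sq_sqrt (hlam_pos i).le, Real.sqrt_nonneg (lam i),
      sq_nonneg (1 - Real.sqrt (lam i))]
  have hlam_one : ∀ i, lam i = 1 := by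
    by_contra h
    push_neg at h
    obtain ⟨i, hi⟩ := h
    have hsne : (1 - Real.sqrt (lam i)) ≠ 0 := by
      intro h1
      apply hi
      have h2 : Real.sqrt (lam i) = 1 := by linarith [sub_eq_zero.mp h1]
      have := congrArg (fun t => t^2) h2
      simpa [Real.sq_sqrt (hlam_pos i).le] using this
    have hposq : 0 < (1 - Real.sqrt (lam i)) * (1 - Real.sqrt (lam i)) :=
      mul_self_pos.mpr hsne
    have hstrict : Real.sqrt (lam i) < (2:ℝ)⁻¹ * (1 + lam i) := by
      nlinarith [Real.sq_sqrt (hlam_pos i).le]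
    have hlt : ∏ i, Real.sqrt (lam i) < ∏ i, (2:ℝ)⁻¹ * (1 + lam i) :=
      Finset.prod_lt_prod (fun j _ => Real.sqrt_pos.mpr (hlam_pos j))
        (fun j _ => hamgm j) ⟨i, Finset.mem_univ i, hstrict⟩
    rw [hsqrt_prod] at hlt
    linarith
  have hC1 : C = 1 := by
    rw [hCU]
    have hd1 : Matrix.diagonal lam = 1 := by
      have : lam = fun _ => 1 := funext hlam_one
      rw [this]
      exact Matrix.diagonal_one
    rw [hd1, Matrix.mul_one, hUU]
  have hBA : B = A := by rw [← hSCS, hC1, Matrix.mul_one, hSS]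
  exact hBA.symm

lemma aux_sqrt_pd {A : Matrix (Fin n) (Fin n) ℝ} (hA : A.PosDef) :
    hA.posSemidef.sqrt.PosDef := by
  have hSS : hA.posSemidef.sqrt * hA.posSemidef.sqrt = A := hA.posSemidef.sqrt_mul_self
  have hdetS : hA.posSemidef.sqrt.det * hA.posSemidef.sqrt.det = A.det := by
    rw [← Matrix.det_mul, hSS]
  refine aux_posDef_of_det hA.posSemidef.posSemidef_sqrt (fun h0 => ?_)
  rw [h0, mul_zero] at hdetS
  exact (ne_of_gt hA.det_pos) hdetS.symm

lemma aux_smul_posDef {A : Matrix (Fin n) (Fin n) ℝ} (hA : A.PosDef) {c : ℝ} (hc : 0 < c) :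
    (c • A).PosDef := by
  refine ⟨?_, fun x hx => ?_⟩
  · unfold Matrix.IsHermitian
    rw [Matrix.conjTranspose_smul, hA.1.eq, star_trivial]
  · exact (hA.smul hc).2 hx

lemma aux_polar {M : Matrix (Fin n) (Fin n) ℝ} (hdet : M.det ≠ 0) :
    ∃ P : Matrix (Fin n) (Fin n) ℝ, P.PosDef ∧
      Matrix.toEuclideanLin P '' Metric.closedBall 0 1
        = Matrix.toEuclideanLin M '' Metric.closedBall 0 1 := by
  have hAps : (M * Mᵀ).PosSemidef := by
    have := Matrix.posSemidef_self_mul_conjTranspose M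
    rwa [Matrix.conjTranspose_eq_transpose_of_trivial] at this
  have hAdet : (M * Mᵀ).det ≠ 0 := by
    rw [Matrix.det_mul, Matrix.det_transpose]
    exact mul_ne_zero hdet hdet
  have hApd : (M * Mᵀ).PosDef := aux_posDef_of_det hAps hAdet
  set P := hAps.sqrt with hP_def
  have hPpd : P.PosDef := aux_sqrt_pd hApd
  have hPP : P * P = M * Mᵀ := hAps.sqrt_mul_self
  have hPherm : Pᵀ = P := by
    have h2 := hAps.posSemidef_sqrt.1.eq
    rwa [Matrix.conjTranspose_eq_transpose_of_trivial] at h2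
  have hPdet : P.det ≠ 0 := ne_of_gt hPpd.det_pos
  refine ⟨P, hPpd, ?_⟩
  rw [aux_image_ball (isUnit_iff_ne_zero.mpr hPdet),
    aux_image_ball (isUnit_iff_ne_zero.mpr hdet)]
  ext x
  simp only [Set.mem_setOf_eq]
  have heq : (P⁻¹)ᵀ * P⁻¹ = (M⁻¹)ᵀ * M⁻¹ := by
    rw [Matrix.transpose_nonsing_inv, Matrix.transpose_nonsing_inv, hPherm,
      ← Matrix.mul_inv_rev, ← Matrix.mul_inv_rev, hPP]
  rw [aux_norm_image heq x]

lemma aux_vol (P : Matrix (Fin n) (Fin n) ℝ) :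
    volume (Matrix.toEuclideanLin P '' Metric.closedBall 0 1)
      = ENNReal.ofReal |P.det|
          * volume (Metric.closedBall (0 : EuclideanSpace ℝ (Fin n)) 1) := by
  have := MeasureTheory.Measure.addHaar_image_linearMap (volume)
    (Matrix.toEuclideanLin P) (Metric.closedBall 0 1)
  rw [this]
  congr 2
  rw [Matrix.toEuclideanLin_eq_toLin, LinearMap.det_toLin]

lemma aux_unique {C : Set (EuclideanSpace ℝ (Fin n))} (hC_conv : Convex ℝ C)
    (L1 L2 : EuclideanSpace ℝ (Fin n) ≃ₗ[ℝ] EuclideanSpace ℝ (Fin n))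
    (h1C : ⇑L1 '' Metric.closedBall 0 1 ⊆ C) (h2C : ⇑L2 '' Metric.closedBall 0 1 ⊆ C)
    (h1max : ∀ D', IsEllipsoid n D' → D' ⊆ C →
      volume D' ≤ volume (⇑L1 '' Metric.closedBall 0 1))
    (h2max : ∀ D', IsEllipsoid n D' → D' ⊆ C →
      volume D' ≤ volume (⇑L2 '' Metric.closedBall 0 1)) :
    ⇑L1 '' Metric.closedBall 0 1 = ⇑L2 '' Metric.closedBall 0 1 := by
  classical
  set b : Module.Basis (Fin n) ℝ (EuclideanSpace ℝ (Fin n)) := PiLp.basisFun 2 ℝ (Fin n) with hb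
  -- matrices of L1, L2
  have key : ∀ L : EuclideanSpace ℝ (Fin n) ≃ₗ[ℝ] EuclideanSpace ℝ (Fin n),
      ∃ P : Matrix (Fin n) (Fin n) ℝ, P.PosDef ∧
        Matrix.toEuclideanLin P '' Metric.closedBall 0 1 = ⇑L '' Metric.closedBall 0 1 := by
    intro L
    set M := LinearMap.toMatrix b b ↑L with hM
    have hML : Matrix.toEuclideanLin M = (↑L : EuclideanSpace ℝ (Fin n) →ₗ[ℝ] _) := by
      rw [Matrix.toEuclideanLin_eq_toLin, hM, Matrix.toLin_toMatrix]
    have hdet : M.det ≠ 0 := by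
      rw [hM, LinearMap.det_toMatrix]
      exact L.isUnit_det'.ne_zero
    obtain ⟨P, hPpd, hPimg⟩ := aux_polar hdet
    refine ⟨P, hPpd, ?_⟩
    rw [hPimg, hML]
    simp only [LinearEquiv.coe_coe]
  obtain ⟨P1, hP1pd, hE1⟩ := key L1
  obtain ⟨P2, hP2pd, hE2⟩ := key L2
  -- volumes
  set v := volume (Metric.closedBall (0 : EuclideanSpace ℝ (Fin n)) 1) with hv
  have hv0 : v ≠ 0 := (Metric.measure_closedBall_pos volume 0 one_pos).ne'
  have hvtop : v ≠ ⊤ := MeasureTheory.measure_closedBall_lt_top.ne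
  have hvol : ∀ {P : Matrix (Fin n) (Fin n) ℝ}, P.PosDef →
      volume (Matrix.toEuclideanLin P '' Metric.closedBall 0 1) = ENNReal.ofReal P.det * v := by
    intro P hP
    rw [aux_vol, abs_of_pos hP.det_pos]
  have hcancel : ∀ {a c : ℝ}, 0 < a → 0 < c →
      ENNReal.ofReal a * v ≤ ENNReal.ofReal c * v → a ≤ c := by
    intro a c ha hc h
    have h2 := (ENNReal.mul_le_mul_iff_left hv0 hvtop).mp h
    rwa [ENNReal.ofReal_le_ofReal_iff hc.le] at h2
  -- equal determinants
  have hdet_eq : P1.det = P2.det := by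
    have h12 : volume (⇑L2 '' Metric.closedBall 0 1)
        ≤ volume (⇑L1 '' Metric.closedBall 0 1) := h1max _ ⟨L2, rfl⟩ h2C
    have h21 : volume (⇑L1 '' Metric.closedBall 0 1)
        ≤ volume (⇑L2 '' Metric.closedBall 0 1) := h2max _ ⟨L1, rfl⟩ h1C
    rw [← hE1, ← hE2, hvol hP1pd, hvol hP2pd] at h12 h21
    exact le_antisymm (hcancel hP1pd.det_pos hP2pd.det_pos h21)
      (hcancel hP2pd.det_pos hP1pd.det_pos h12)
  -- midpoint matrix
  set Q : Matrix (Fin n) (Fin n) ℝ := (2:ℝ)⁻¹ • (P1 + P2) with hQ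
  have hQpd : Q.PosDef := aux_smul_posDef (hP1pd.add hP2pd) (by norm_num)
  have hQC : Matrix.toEuclideanLin Q '' Metric.closedBall 0 1 ⊆ C := by
    rintro _ ⟨x, hx, rfl⟩
    have hx1 : Matrix.toEuclideanLin P1 x ∈ C := by
      apply h1C
      rw [← hE1]
      exact ⟨x, hx, rfl⟩
    have hx2 : Matrix.toEuclideanLin P2 x ∈ C := by
      apply h2C
      rw [← hE2]
      exact ⟨x, hx, rfl⟩
    have hsplit : Matrix.toEuclideanLin Q x
        = (2:ℝ)⁻¹ • Matrix.toEuclideanLin P1 x + (2:ℝ)⁻¹ • Matrix.toEuclideanLin P2 x := by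
      rw [show Matrix.toEuclideanLin ((2:ℝ)⁻¹ • (P1 + P2))
          = (2:ℝ)⁻¹ • (Matrix.toEuclideanLin P1 + Matrix.toEuclideanLin P2) by
        rw [LinearEquiv.map_smul, LinearEquiv.map_add]]
      simp [smul_add]
    rw [hsplit]
    exact hC_conv hx1 hx2 (by norm_num) (by norm_num) (by norm_num)
  have hQell : IsEllipsoid n (Matrix.toEuclideanLin Q '' Metric.closedBall 0 1) := by
    have hQunit : IsUnit (LinearMap.toMatrix b b (Matrix.toEuclideanLin Q)).det := by
      rw [Matrix.toEuclideanLin_eq_toLin, LinearMap.toMatrix_toLin]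
      exact isUnit_iff_ne_zero.mpr (ne_of_gt hQpd.det_pos)
    refine ⟨LinearEquiv.ofIsUnitDet hQunit, ?_⟩
    have hcoe := LinearEquiv.coe_ofIsUnitDet hQunit
    have : ⇑(LinearEquiv.ofIsUnitDet hQunit) = ⇑(Matrix.toEuclideanLin Q) := by
      rw [← LinearEquiv.coe_coe, hcoe]
    rw [this]
  have hQle : Q.det ≤ P1.det := by
    have := h1max _ hQell hQC
    rw [← hE1, hvol hQpd, hvol hP1pd] at this
    exact hcancel hQpd.det_pos hP1pd.det_pos this
  have hP12 : P1 = P2 := aux_minkowski hP1pd hP2pd hdet_eq (by rwa [← hQ])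
  rw [← hE1, hP12, hE2]

end JohnAux

/-- **John ellipsoid.** Every symmetric convex body `C` in `ℝⁿ` contains a unique ellipsoid
of maximal volume among all ellipsoids contained in `C`. -/
theorem john_ellipsoid (n : ℕ) (hn : 1 ≤ n)
    (C : Set (EuclideanSpace ℝ (Fin n)))
    (hC_conv : Convex ℝ C) (hC_comp : IsCompact C)
    (hC_int : (interior C).Nonempty) (hC_symm : C = -C) :
    ∃! D : Set (EuclideanSpace ℝ (Fin n)),
      IsEllipsoid n D ∧ D ⊆ C ∧
        ∀ D' : Set (EuclideanSpace ℝ (Fin n)),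
          IsEllipsoid n D' → D' ⊆ C → volume D' ≤ volume D := by
  classical
  have hC_closed : IsClosed C := hC_comp.isClosed
  -- `0` is an interior point
  have h0int : (0 : EuclideanSpace ℝ (Fin n)) ∈ interior C := by
    obtain ⟨x, hx⟩ := hC_int
    have hnegsub : -(interior C) ⊆ interior C := by
      apply interior_maximal ?_ isOpen_interior.neg
      intro y hy
      rw [Set.mem_neg] at hy
      rw [hC_symm, Set.mem_neg]
      exact interior_subset hy
    have hnegx : -x ∈ interior C := hnegsub (by rw [Set.mem_neg, neg_neg]; exact hx)
    have h := hC_conv.interior hx hnegx (by norm_num : (0:ℝ) ≤ 1/2)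
      (by norm_num : (0:ℝ) ≤ 1/2) (by norm_num)
    simpa using h
  -- small ball inside `C`
  obtain ⟨ε, hε, hball⟩ := Metric.isOpen_iff.mp isOpen_interior 0 h0int
  have hrpos : 0 < ε/2 := by positivity
  have hrball : Metric.closedBall (0 : EuclideanSpace ℝ (Fin n)) (ε/2) ⊆ C := by
    intro y hy
    rw [Metric.mem_closedBall] at hy
    exact interior_subset (hball (by rw [Metric.mem_ball]; linarith))
  -- big ball containing `C`
  obtain ⟨R0, hR0⟩ := hC_comp.isBounded.subset_closedBall 0
  have hRpos : (0:ℝ) < max R0 1 := lt_of_lt_of_le one_pos (le_max_right _ _)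
  have hRC : C ⊆ Metric.closedBall 0 (max R0 1) :=
    hR0.trans (Metric.closedBall_subset_closedBall (le_max_left _ _))
  -- the compact set of admissible maps
  set S : Set (EuclideanSpace ℝ (Fin n) →L[ℝ] EuclideanSpace ℝ (Fin n)) :=
    {L | ∀ x : EuclideanSpace ℝ (Fin n), ‖x‖ ≤ 1 → L x ∈ C} with hS_def
  have hS_closed : IsClosed S := by
    have : S = ⋂ (x : EuclideanSpace ℝ (Fin n)) (_ : ‖x‖ ≤ 1),
        (fun L : EuclideanSpace ℝ (Fin n) →L[ℝ] EuclideanSpace ℝ (Fin n) => L x) ⁻¹' C := by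
      ext L
      simp [hS_def]
    rw [this]
    exact isClosed_iInter fun x => isClosed_iInter fun _ =>
      hC_closed.preimage (ContinuousLinearMap.apply ℝ _ x).continuous
  have hS_bdd : Bornology.IsBounded S := by
    apply Bornology.IsBounded.subset (Metric.isBounded_closedBall (x := 0) (r := max R0 1))
    intro L hL
    rw [Metric.mem_closedBall, dist_zero_right]
    refine ContinuousLinearMap.opNorm_le_bound L hRpos.le fun x => ?_
    rcases eq_or_ne x 0 with rfl | hx0
    · simp
    · have hxpos : 0 < ‖x‖ := norm_pos_iff.mpr hx0
      have hx1 : ‖(‖x‖⁻¹ • x : EuclideanSpace ℝ (Fin n))‖ ≤ 1 := by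
        rw [norm_smul, norm_inv, norm_norm, inv_mul_cancel₀ (norm_ne_zero_iff.mpr hx0)]
      have h2 := hRC (hL _ hx1)
      rw [Metric.mem_closedBall, dist_zero_right, ContinuousLinearMap.map_smul, norm_smul,
        norm_inv, norm_norm] at h2
      calc ‖L x‖ = ‖x‖ * (‖x‖⁻¹ * ‖L x‖) := by field_simp
        _ ≤ ‖x‖ * max R0 1 := by
            exact mul_le_mul_of_nonneg_left h2 (norm_nonneg x)
        _ = max R0 1 * ‖x‖ := mul_comm _ _
  have hS_cpt : IsCompact S := Metric.isCompact_of_isClosed_isBounded hS_closed hS_bdd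
  -- the determinant function
  set b : Module.Basis (Fin n) ℝ (EuclideanSpace ℝ (Fin n)) := PiLp.basisFun 2 ℝ (Fin n) with hb
  set detf : (EuclideanSpace ℝ (Fin n) →L[ℝ] EuclideanSpace ℝ (Fin n)) → ℝ :=
    fun L => |LinearMap.det (↑L : EuclideanSpace ℝ (Fin n) →ₗ[ℝ] EuclideanSpace ℝ (Fin n))|
    with hdetf
  have hdet_cont : Continuous detf := by
    have h1 : Continuous fun L : EuclideanSpace ℝ (Fin n) →L[ℝ] EuclideanSpace ℝ (Fin n) =>
        (LinearMap.toMatrix b b) (↑L : EuclideanSpace ℝ (Fin n) →ₗ[ℝ] EuclideanSpace ℝ (Fin n)) :=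
      LinearMap.continuous_of_finiteDimensional
        (((LinearMap.toMatrix b b).toLinearMap).comp (ContinuousLinearMap.coeLM ℝ))
    have h2 := h1.matrix_det
    have h3 : (fun L : EuclideanSpace ℝ (Fin n) →L[ℝ] EuclideanSpace ℝ (Fin n) =>
        ((LinearMap.toMatrix b b) (↑L : EuclideanSpace ℝ (Fin n) →ₗ[ℝ] _)).det)
        = fun L : EuclideanSpace ℝ (Fin n) →L[ℝ] EuclideanSpace ℝ (Fin n) =>
        LinearMap.det (↑L : EuclideanSpace ℝ (Fin n) →ₗ[ℝ] EuclideanSpace ℝ (Fin n)) := by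
      funext L
      rw [LinearMap.det_toMatrix]
    rw [h3] at h2
    exact h2.abs
  -- an admissible map with positive determinant
  have hidS : ((ε/2) • ContinuousLinearMap.id ℝ (EuclideanSpace ℝ (Fin n))) ∈ S := by
    intro x hx
    apply hrball
    rw [Metric.mem_closedBall, dist_zero_right, ContinuousLinearMap.smul_apply,
      ContinuousLinearMap.id_apply, norm_smul, Real.norm_eq_abs, abs_of_pos hrpos]
    calc ε/2 * ‖x‖ ≤ ε/2 * 1 := mul_le_mul_of_nonneg_left hx hrpos.le
      _ = ε/2 := mul_one _
  obtain ⟨L₀, hL₀S, hL₀max⟩ := hS_cpt.exists_isMaxOn ⟨_, hidS⟩ hdet_cont.continuousOn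
  have hrdet : detf ((ε/2) • ContinuousLinearMap.id ℝ (EuclideanSpace ℝ (Fin n))) = (ε/2) ^ n := by
    show |LinearMap.det ((ε/2) • (LinearMap.id
      : EuclideanSpace ℝ (Fin n) →ₗ[ℝ] EuclideanSpace ℝ (Fin n)))| = (ε/2) ^ n
    rw [LinearMap.det_smul, LinearMap.det_id, mul_one, finrank_euclideanSpace_fin,
      abs_of_pos (pow_pos hrpos n)]
  have hdet0 : LinearMap.det (↑L₀ : EuclideanSpace ℝ (Fin n) →ₗ[ℝ] EuclideanSpace ℝ (Fin n))
      ≠ 0 := by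
    have h : detf ((ε/2) • ContinuousLinearMap.id ℝ (EuclideanSpace ℝ (Fin n))) ≤ detf L₀ :=
      hL₀max hidS
    rw [hrdet] at h
    have h5 : 0 < detf L₀ := lt_of_lt_of_le (pow_pos hrpos n) h
    simp only [hdetf] at h5
    exact fun h0 => by simp [h0] at h5
  -- build the linear equivalence
  have hunit : IsUnit ((LinearMap.toMatrix b b)
      (↑L₀ : EuclideanSpace ℝ (Fin n) →ₗ[ℝ] EuclideanSpace ℝ (Fin n))).det := by
    rw [LinearMap.det_toMatrix]
    exact isUnit_iff_ne_zero.mpr hdet0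
  set L₀e : EuclideanSpace ℝ (Fin n) ≃ₗ[ℝ] EuclideanSpace ℝ (Fin n) :=
    LinearEquiv.ofIsUnitDet hunit with hL₀e
  have hL₀e_coe : ⇑L₀e = ⇑L₀ := by
    have := LinearEquiv.coe_ofIsUnitDet hunit
    rw [hL₀e, ← LinearEquiv.coe_coe, this]
    rfl
  -- the maximality property
  have hmax : ∀ D', IsEllipsoid n D' → D' ⊆ C →
      volume D' ≤ volume (⇑L₀e '' Metric.closedBall 0 1) := by
    rintro _ ⟨L', rfl⟩ hD'C
    have hL'S : LinearMap.toContinuousLinearMap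
        (↑L' : EuclideanSpace ℝ (Fin n) →ₗ[ℝ] EuclideanSpace ℝ (Fin n)) ∈ S := by
      intro x hx
      apply hD'C
      exact ⟨x, by rwa [Metric.mem_closedBall, dist_zero_right], rfl⟩
    have hle : detf (LinearMap.toContinuousLinearMap
        (↑L' : EuclideanSpace ℝ (Fin n) →ₗ[ℝ] EuclideanSpace ℝ (Fin n))) ≤ detf L₀ :=
      hL₀max hL'S
    simp only [hdetf] at hle
    rw [LinearMap.coe_toContinuousLinearMap] at hle
    have hv1 : volume (⇑L' '' Metric.closedBall 0 1)
        = ENNReal.ofReal |LinearMap.det (↑L' : EuclideanSpace ℝ (Fin n) →ₗ[ℝ] _)|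
          * volume (Metric.closedBall (0 : EuclideanSpace ℝ (Fin n)) 1) := by
      have := MeasureTheory.Measure.addHaar_image_linearMap volume
        (↑L' : EuclideanSpace ℝ (Fin n) →ₗ[ℝ] EuclideanSpace ℝ (Fin n))
        (Metric.closedBall 0 1)
      rwa [LinearEquiv.coe_coe] at this
    have hv0 : volume (⇑L₀e '' Metric.closedBall 0 1)
        = ENNReal.ofReal |LinearMap.det (↑L₀ : EuclideanSpace ℝ (Fin n) →ₗ[ℝ] _)|
          * volume (Metric.closedBall (0 : EuclideanSpace ℝ (Fin n)) 1) := by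
      have h := MeasureTheory.Measure.addHaar_image_linearMap volume
        (↑L₀e : EuclideanSpace ℝ (Fin n) →ₗ[ℝ] EuclideanSpace ℝ (Fin n))
        (Metric.closedBall 0 1)
      rw [LinearEquiv.coe_coe] at h
      rw [h]
      congr 2
    rw [hv1, hv0]
    exact mul_le_mul_left (ENNReal.ofReal_le_ofReal hle) _
  have hDC : ⇑L₀e '' Metric.closedBall 0 1 ⊆ C := by
    rintro _ ⟨x, hx, rfl⟩
    rw [hL₀e_coe]
    exact hL₀S x (by rwa [Metric.mem_closedBall, dist_zero_right] at hx)
  refine ⟨⇑L₀e '' Metric.closedBall 0 1, ⟨⟨L₀e, rfl⟩, hDC, hmax⟩, ?_⟩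
  rintro D' ⟨⟨L', rfl⟩, hD'C, hD'max⟩
  exact aux_unique hC_conv L' L₀e hD'C hDC hD'max hmax
end

section
/- (Löwner ellipsoid) For every integer n ≥ 1 and every symmetric convex body C in ℝⁿ, there exists a unique ellipsoid L(C) containing C whose Lebesgue volume is minimal among all ellipsoids containing C; that is, there exists an ellipsoid D ⊇ C such that vol(D') ≥ vol(D) for every ellipsoid D' ⊇ C, and any two such minimal-volume ellipsoids coincide as sets. -/
open MeasureTheory

namespace LoewnerAux

open Matrix

variable {n : ℕ}

/-- The quadratic form of a matrix, on Euclidean space. -/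
def qf (M : Matrix (Fin n) (Fin n) ℝ) (x : EuclideanSpace ℝ (Fin n)) : ℝ :=
  (WithLp.equiv 2 (Fin n → ℝ) x) ⬝ᵥ (M *ᵥ (WithLp.equiv 2 (Fin n → ℝ) x))

lemma norm_sq_eq (x : EuclideanSpace ℝ (Fin n)) :
    ‖x‖ ^ 2 = (WithLp.equiv 2 (Fin n → ℝ) x) ⬝ᵥ (WithLp.equiv 2 (Fin n → ℝ) x) := by
  rw [← real_inner_self_eq_norm_sq, EuclideanSpace.inner_eq_star_dotProduct]
  simp

lemma qf_smul (c : ℝ) (M : Matrix (Fin n) (Fin n) ℝ) (x : EuclideanSpace ℝ (Fin n)) :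
    qf (c • M) x = c * qf M x := by
  simp [qf, smul_mulVec, dotProduct_smul]

lemma qf_add (M N : Matrix (Fin n) (Fin n) ℝ) (x : EuclideanSpace ℝ (Fin n)) :
    qf (M + N) x = qf M x + qf N x := by
  simp [qf, add_mulVec, dotProduct_add]

lemma psd_smul {M : Matrix (Fin n) (Fin n) ℝ} (h : M.PosSemidef) {c : ℝ} (hc : 0 ≤ c) :
    (c • M).PosSemidef := by
  refine posSemidef_iff_dotProduct_mulVec.mpr ⟨?_, fun x => ?_⟩
  · unfold Matrix.IsHermitian
    rw [conjTranspose_smul]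
    have h1 : Mᴴ = M := h.1
    rw [h1]
    simp
  · have := h.dotProduct_mulVec_nonneg x
    rw [smul_mulVec, dotProduct_smul]
    simpa using mul_nonneg hc (by simpa using this)

/-- Positive semidefinite with positive determinant is positive definite. -/
lemma posDef_of_psd_det_pos {M : Matrix (Fin n) (Fin n) ℝ} (h : M.PosSemidef)
    (hd : 0 < M.det) : M.PosDef := by
  refine posDef_iff_dotProduct_mulVec.mpr ⟨h.1, fun x hx => ?_⟩
  rcases lt_or_eq_of_le (h.dotProduct_mulVec_nonneg x) with h' | h'
  · exact h'
  · exfalso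
    have hzero : M *ᵥ x = 0 := (h.dotProduct_mulVec_zero_iff x).mp h'.symm
    have : M.det = 0 := Matrix.exists_mulVec_eq_zero_iff.mp ⟨x, hx, hzero⟩
    exact hd.ne' this

/-- Membership in the ellipsoid `L '' closedBall 0 1` via the Gram matrix of `L.symm`. -/
lemma mem_ellipsoid_iff (L : EuclideanSpace ℝ (Fin n) ≃ₗ[ℝ] EuclideanSpace ℝ (Fin n))
    {A : Matrix (Fin n) (Fin n) ℝ} (hA : Matrix.toEuclideanLin A = L.symm.toLinearMap)
    (x : EuclideanSpace ℝ (Fin n)) :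
    x ∈ ⇑L '' Metric.closedBall 0 1 ↔ qf (Aᵀ * A) x ≤ 1 := by
  have h1 : ⇑L '' Metric.closedBall 0 1 = ⇑L.symm ⁻¹' Metric.closedBall 0 1 :=
    L.toEquiv.image_eq_preimage_symm _
  have hLs : L.symm x = Matrix.toEuclideanLin A x := by rw [hA]; rfl
  have key : qf (Aᵀ * A) x = ‖L.symm x‖ ^ 2 := by
    rw [norm_sq_eq, hLs, WithLp.equiv_apply, Matrix.ofLp_toEuclideanLin_apply, qf,
      ← Matrix.mulVec_mulVec, Matrix.dotProduct_mulVec, Matrix.vecMul_transpose, WithLp.equiv_apply]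
  rw [h1]
  simp only [Set.mem_preimage, Metric.mem_closedBall, dist_zero_right]
  rw [key]
  constructor
  · intro h; nlinarith [norm_nonneg (L.symm x)]
  · intro h; nlinarith [norm_nonneg (L.symm x)]

lemma gram_det_pos (L : EuclideanSpace ℝ (Fin n) ≃ₗ[ℝ] EuclideanSpace ℝ (Fin n))
    {A : Matrix (Fin n) (Fin n) ℝ} (hA : Matrix.toEuclideanLin A = L.symm.toLinearMap) :
    A.det ≠ 0 := by
  have hdet : LinearMap.det (L.symm.toLinearMap) = A.det := by
    rw [← hA, Matrix.toEuclideanLin_eq_toLin_orthonormal, LinearMap.det_toLin]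
  have hmul : LinearMap.det (L.toLinearMap) * LinearMap.det (L.symm.toLinearMap) = 1 := by
    rw [← LinearMap.det_comp]
    have : L.toLinearMap ∘ₗ L.symm.toLinearMap = LinearMap.id := by ext x; simp
    rw [this, LinearMap.det_id]
  intro h
  rw [hdet, h, mul_zero] at hmul
  exact one_ne_zero hmul.symm

/-- Volume of the ellipsoid `L '' closedBall 0 1` via the Gram matrix of `L.symm`. -/
lemma volume_ellipsoid (L : EuclideanSpace ℝ (Fin n) ≃ₗ[ℝ] EuclideanSpace ℝ (Fin n))
    {A : Matrix (Fin n) (Fin n) ℝ} (hA : Matrix.toEuclideanLin A = L.symm.toLinearMap) :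
    volume (⇑L '' Metric.closedBall 0 1)
      = ENNReal.ofReal ((Real.sqrt (Aᵀ * A).det)⁻¹)
        * volume (Metric.closedBall (0 : EuclideanSpace ℝ (Fin n)) 1) := by
  have h0 : ⇑L '' Metric.closedBall 0 1 = ⇑L.toLinearMap '' Metric.closedBall 0 1 := rfl
  rw [h0, MeasureTheory.Measure.addHaar_image_linearMap]
  congr 2
  have hdet : LinearMap.det (L.symm.toLinearMap) = A.det := by
    rw [← hA, Matrix.toEuclideanLin_eq_toLin_orthonormal, LinearMap.det_toLin]
  have hmul : LinearMap.det (L.toLinearMap) * A.det = 1 := by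
    rw [← hdet, ← LinearMap.det_comp]
    have : L.toLinearMap ∘ₗ L.symm.toLinearMap = LinearMap.id := by ext x; simp
    rw [this, LinearMap.det_id]
  have hAne : A.det ≠ 0 := gram_det_pos L hA
  have hL : LinearMap.det (L.toLinearMap) = (A.det)⁻¹ := by
    field_simp
    linarith [hmul]
  rw [hL, abs_inv]
  have : (Aᵀ * A).det = A.det ^ 2 := by
    rw [Matrix.det_mul, Matrix.det_transpose, sq]
  rw [this, Real.sqrt_sq_eq_abs]


lemma qf_single_pair (M : Matrix (Fin n) (Fin n) ℝ) (i j : Fin n) (a b : ℝ) :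
    qf M (EuclideanSpace.single i a + EuclideanSpace.single j b)
      = a ^ 2 * M i i + b ^ 2 * M j j + a * b * (M i j + M j i) := by
  unfold qf
  simp only [WithLp.equiv_apply, WithLp.ofLp_add, PiLp.ofLp_single, mulVec_add, mulVec_single,
    dotProduct_add, add_dotProduct, single_dotProduct, Pi.smul_apply, op_smul_eq_mul,
    Matrix.col_apply]
  ring

lemma qf_nonneg {M : Matrix (Fin n) (Fin n) ℝ} (h : M.PosSemidef)
    (x : EuclideanSpace ℝ (Fin n)) : 0 ≤ qf M x := by
  have := h.dotProduct_mulVec_nonneg (WithLp.equiv 2 (Fin n → ℝ) x)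
  simpa [qf] using this

lemma norm_sq_eq' (x : EuclideanSpace ℝ (Fin n)) :
    ‖x‖ ^ 2 = (WithLp.equiv 2 (Fin n → ℝ) x) ⬝ᵥ (WithLp.equiv 2 (Fin n → ℝ) x) := by
  rw [← real_inner_self_eq_norm_sq, EuclideanSpace.inner_eq_star_dotProduct]
  simp

lemma entry_bound {C : Set (EuclideanSpace ℝ (Fin n))} {ρ : ℝ} (hρ0 : 0 < ρ)
    (hρC : Metric.closedBall 0 ρ ⊆ C) {M : Matrix (Fin n) (Fin n) ℝ}
    (hpsd : M.PosSemidef) (hfe : ∀ x ∈ C, qf M x ≤ 1) (i j : Fin n) :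
    M i j ∈ Set.Icc (-(ρ ^ 2)⁻¹) ((ρ ^ 2)⁻¹) := by
  have hsym : M j i = M i j := by
    conv_lhs => rw [show M = Mᴴ from hpsd.1.symm]
    simp [Matrix.conjTranspose_apply]
  set a : ℝ := ρ / 2 with ha
  have hmem : ∀ b : ℝ, |b| = a →
      EuclideanSpace.single i a + EuclideanSpace.single j b ∈ C := by
    intro b hb
    apply hρC
    rw [Metric.mem_closedBall, dist_zero_right]
    calc ‖EuclideanSpace.single i a + EuclideanSpace.single j b‖
        ≤ ‖EuclideanSpace.single i a‖ + ‖EuclideanSpace.single j b‖ := norm_add_le _ _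
      _ = |a| + |b| := by rw [EuclideanSpace.norm_single, EuclideanSpace.norm_single]; rfl
      _ ≤ ρ := by rw [hb]; rw [abs_of_pos (by positivity : (0:ℝ) < a)]; linarith
  have h1 : qf M (EuclideanSpace.single i a + EuclideanSpace.single j a) ≤ 1 :=
    hfe _ (hmem a (abs_of_pos (by positivity)))
  have h2 : qf M (EuclideanSpace.single i a + EuclideanSpace.single j (-a)) ≤ 1 :=
    hfe _ (hmem (-a) (by rw [abs_neg]; exact abs_of_pos (by positivity)))
  have h3 : 0 ≤ qf M (EuclideanSpace.single i a + EuclideanSpace.single j (-a)) :=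
    qf_nonneg hpsd _
  have h4 : 0 ≤ qf M (EuclideanSpace.single i a + EuclideanSpace.single j a) :=
    qf_nonneg hpsd _
  rw [qf_single_pair] at h1 h2 h3 h4
  rw [hsym] at h1 h2 h3 h4
  have ha2 : a ^ 2 = ρ ^ 2 / 4 := by rw [ha]; ring
  rw [ha] at h1 h2 h3 h4
  have hρ2 : (0:ℝ) < ρ ^ 2 := by positivity
  have hinv : (ρ ^ 2)⁻¹ * ρ ^ 2 = 1 := inv_mul_cancel₀ (ne_of_gt hρ2)
  constructor
  · nlinarith [h2, h4, hρ2, hinv]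
  · nlinarith [h1, h3, hρ2, hinv]

lemma exists_max {C : Set (EuclideanSpace ℝ (Fin n))} {ρ R : ℝ} (hρ0 : 0 < ρ)
    (hρC : Metric.closedBall 0 ρ ⊆ C) (hR0 : 0 < R)
    (hCR : C ⊆ Metric.closedBall 0 R) :
    ∃ M : Matrix (Fin n) (Fin n) ℝ, M.PosDef ∧ (∀ x ∈ C, qf M x ≤ 1) ∧
      ∀ M' : Matrix (Fin n) (Fin n) ℝ, M'.PosSemidef → (∀ x ∈ C, qf M' x ≤ 1) →
        M'.det ≤ M.det := by
  set S : Set (Matrix (Fin n) (Fin n) ℝ) :=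
    {M | M.PosSemidef ∧ ∀ x ∈ C, qf M x ≤ 1} with hS
  have hclosed : IsClosed S := by
    have h1 : S = ({M | Mᴴ = M} ∩ ⋂ x : Fin n → ℝ, {M | 0 ≤ star x ⬝ᵥ (M *ᵥ x)}) ∩
        ⋂ x ∈ C, {M | qf M x ≤ 1} := by
      ext M
      simp only [hS, Set.mem_setOf_eq, Set.mem_inter_iff, Set.mem_iInter,
        Matrix.posSemidef_iff_dotProduct_mulVec, Matrix.IsHermitian]
    rw [h1]
    refine IsClosed.inter (IsClosed.inter ?_ ?_) ?_
    · exact isClosed_eq (continuous_id.matrix_conjTranspose) continuous_id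
    · exact isClosed_iInter fun x => isClosed_le continuous_const
        ((continuous_const).dotProduct ((continuous_id.matrix_mulVec continuous_const)))
    · exact isClosed_biInter fun x _ => isClosed_le
        ((continuous_const).dotProduct ((continuous_id.matrix_mulVec continuous_const)))
        continuous_const
  have hBox : IsCompact (Set.pi Set.univ
      (fun _ : Fin n => Set.pi Set.univ
        (fun _ : Fin n => Set.Icc (-(ρ ^ 2)⁻¹) ((ρ ^ 2)⁻¹))) : Set (Matrix (Fin n) (Fin n) ℝ)) :=
    isCompact_univ_pi fun _ => isCompact_univ_pi fun _ => isCompact_Icc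
  have hsub : S ⊆ Set.pi Set.univ
      (fun _ : Fin n => Set.pi Set.univ
        (fun _ : Fin n => Set.Icc (-(ρ ^ 2)⁻¹) ((ρ ^ 2)⁻¹))) := by
    rintro M ⟨hpsd, hfe⟩ i _ j _
    exact entry_bound hρ0 hρC hpsd hfe i j
  have hScompact : IsCompact S := IsCompact.of_isClosed_subset hBox hclosed hsub
  -- nonempty
  have hM0 : ((R ^ 2)⁻¹ • (1 : Matrix (Fin n) (Fin n) ℝ)) ∈ S := by
    constructor
    · refine posSemidef_iff_dotProduct_mulVec.mpr ⟨?_, fun x => ?_⟩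
      · unfold Matrix.IsHermitian
        rw [conjTranspose_smul, conjTranspose_one]
        simp
      · rw [smul_mulVec, one_mulVec, dotProduct_smul]
        have h0 : (0:ℝ) ≤ star x ⬝ᵥ x := by
          simpa using dotProduct_star_self_nonneg x
        simpa using mul_nonneg (by positivity) (by simpa using h0)
    · intro x hx
      have hxR : ‖x‖ ≤ R := by
        have := hCR hx
        rwa [Metric.mem_closedBall, dist_zero_right] at this
      have : qf ((R ^ 2)⁻¹ • (1 : Matrix (Fin n) (Fin n) ℝ)) x = (R ^ 2)⁻¹ * ‖x‖ ^ 2 := by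
        rw [norm_sq_eq']
        simp [qf, smul_mulVec, one_mulVec, dotProduct_smul]
      rw [this]
      rw [inv_mul_le_iff₀ (by positivity), mul_one]
      nlinarith [norm_nonneg x]
  obtain ⟨M, hMS, hMmax⟩ := hScompact.exists_isMaxOn ⟨_, hM0⟩
    ((continuous_id.matrix_det).continuousOn)
  have hmax : ∀ M' ∈ S, M'.det ≤ M.det := fun M' h => hMmax h
  have hdet0 : 0 < M.det := by
    have h1 := hmax _ hM0
    have h2 : ((R ^ 2)⁻¹ • (1 : Matrix (Fin n) (Fin n) ℝ)).det = ((R ^ 2)⁻¹) ^ n := by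
      rw [Matrix.det_smul, Matrix.det_one, mul_one, Fintype.card_fin]
    rw [h2] at h1
    calc (0:ℝ) < ((R ^ 2)⁻¹) ^ n := by positivity
      _ ≤ M.det := h1
  exact ⟨M, posDef_of_psd_det_pos hMS.1 hdet0, hMS.2, fun M' h1 h2 => hmax M' ⟨h1, h2⟩⟩


open scoped MatrixOrder in
/-- Strict AM-GM for determinants of positive definite matrices with equal determinant. -/
lemma det_avg {A B : Matrix (Fin n) (Fin n) ℝ} (hA : A.PosDef) (hB : B.PosDef)
    (hdet : B.det = A.det) :
    A.det ≤ (((1:ℝ)/2) • (A + B)).det ∧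
      ((((1:ℝ)/2) • (A + B)).det ≤ A.det → B = A) := by
  classical
  set S := CFC.sqrt A with hSdef
  have hS : S.PosSemidef := (CFC.sqrt_nonneg A).posSemidef
  have hSS : S * S = A := CFC.sqrt_mul_sqrt_self A hA.posSemidef.nonneg
  have hdetSS : S.det * S.det = A.det := by rw [← Matrix.det_mul, hSS]
  have hSdet_nonneg : 0 ≤ S.det := by
    rw [hS.isHermitian.det_eq_prod_eigenvalues]
    exact Finset.prod_nonneg fun i _ => by simpa using hS.eigenvalues_nonneg i
  have hSdet_pos : 0 < S.det := by
    rcases hSdet_nonneg.lt_or_eq with h | h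
    · exact h
    · exfalso; rw [← h, mul_zero] at hdetSS; exact hA.det_pos.ne' hdetSS.symm
  have hSunit : IsUnit S.det := (hSdet_pos.ne').isUnit
  set T := S⁻¹ with hTdef
  have hTS : T * S = 1 := Matrix.nonsing_inv_mul _ hSunit
  have hST : S * T = 1 := Matrix.mul_nonsing_inv _ hSunit
  have hSh : Sᴴ = S := hS.isHermitian
  have hTh : Tᴴ = T := hS.isHermitian.inv
  set N := T * B * T with hNdef
  have hNh : N.IsHermitian := by
    have := Matrix.isHermitian_mul_mul_conjTranspose T hB.isHermitian
    rwa [hTh] at this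
  have hNpd : N.PosDef := by
    refine posDef_iff_dotProduct_mulVec.mpr ⟨hNh, fun x hx => ?_⟩
    have hy : T *ᵥ x ≠ 0 := by
      intro h
      apply hx
      have : (S * T) *ᵥ x = 0 := by rw [← Matrix.mulVec_mulVec, h, Matrix.mulVec_zero]
      rwa [hST, Matrix.one_mulVec] at this
    have hpos := hB.dotProduct_mulVec_pos hy
    have key : star x ⬝ᵥ (N *ᵥ x) = star (T *ᵥ x) ⬝ᵥ (B *ᵥ (T *ᵥ x)) := by
      simp only [star_trivial]
      rw [hNdef, ← Matrix.mulVec_mulVec, ← Matrix.mulVec_mulVec,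
        Matrix.dotProduct_mulVec (v := x) (A := T)]
      congr 1
      rw [← Matrix.vecMul_transpose, ← Matrix.conjTranspose_eq_transpose_of_trivial, hTh]
    rw [key]
    exact hpos
  have hTdet : T.det = (S.det)⁻¹ := by
    rw [hTdef, Matrix.det_nonsing_inv, Ring.inverse_eq_inv']
  have hNdet : N.det = 1 := by
    rw [hNdef, Matrix.det_mul, Matrix.det_mul, hTdet, hdet, ← hdetSS]
    field_simp
  -- eigenvalues of N
  set μ := hNpd.1.eigenvalues with hμdef
  have hμpos : ∀ i, 0 < μ i := fun i => hNpd.eigenvalues_pos i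
  have hμprod : ∏ i, μ i = 1 := by
    have h := hNpd.1.det_eq_prod_eigenvalues
    rw [hNdet] at h
    exact_mod_cast h.symm
  -- key matrix identity
  have hSNS : S * N * S = B := by
    rw [hNdef]
    have h1 : S * (T * B * T) * S = S * T * (B * (T * S)) := by noncomm_ring
    rw [h1, hST, hTS, one_mul, mul_one]
  have hkey : ((1:ℝ)/2) • (A + B) = S * (((1:ℝ)/2) • (1 + N)) * S := by
    have : S * (((1:ℝ)/2) • (1 + N)) * S = ((1:ℝ)/2) • (S * (1 + N) * S) := by
      rw [Matrix.mul_smul, Matrix.smul_mul]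
    rw [this, mul_add, add_mul, mul_one, hSS, hSNS]
  -- spectral theorem for N
  set U := (hNpd.1.eigenvectorUnitary : Matrix (Fin n) (Fin n) ℝ) with hUdef
  have hUU : U * star U = 1 := Matrix.mem_unitaryGroup_iff.mp (hNpd.1.eigenvectorUnitary).2
  have hspec : N = U * diagonal (RCLike.ofReal ∘ μ) * star U := hNpd.1.spectral_theorem
  have hcoe : (RCLike.ofReal ∘ μ : Fin n → ℝ) = μ := by
    funext i; simp [RCLike.ofReal]
  rw [hcoe] at hspec
  have havg : ((1:ℝ)/2) • (1 + N) = U * diagonal (fun i => (1 + μ i)/2) * star U := by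
    have h1 : diagonal (fun i => (1 + μ i)/2) = ((1:ℝ)/2) • (1 + diagonal μ) := by
      ext i j
      rcases eq_or_ne i j with h | h
      · subst h
        simp [Matrix.diagonal_apply_eq, Matrix.one_apply_eq]
        ring
      · simp [Matrix.diagonal_apply_ne _ h, Matrix.one_apply_ne h]
    rw [h1, Matrix.mul_smul, Matrix.smul_mul]
    congr 1
    rw [mul_add, add_mul, mul_one, hUU, ← hspec]
  have hdetavg : (((1:ℝ)/2) • (1 + N)).det = ∏ i, (1 + μ i)/2 := by
    rw [havg, Matrix.det_mul, Matrix.det_mul, Matrix.det_diagonal]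
    have : U.det * (star U).det = 1 := by rw [← Matrix.det_mul, hUU, Matrix.det_one]
    calc U.det * (∏ i, (1 + μ i)/2) * (star U).det
        = (∏ i, (1 + μ i)/2) * (U.det * (star U).det) := by ring
      _ = ∏ i, (1 + μ i)/2 := by rw [this, mul_one]
  have hdetfull : (((1:ℝ)/2) • (A + B)).det = A.det * ∏ i, (1 + μ i)/2 := by
    rw [hkey, Matrix.det_mul, Matrix.det_mul, hdetavg]
    calc S.det * (∏ i, (1 + μ i)/2) * S.det
        = (S.det * S.det) * ∏ i, (1 + μ i)/2 := by ring
      _ = A.det * ∏ i, (1 + μ i)/2 := by rw [hdetSS]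
  -- AM-GM on the eigenvalues
  set g : Fin n → ℝ := fun i => Real.sqrt (μ i) with hgdef
  have hgpos : ∀ i, 0 < g i := fun i => Real.sqrt_pos.mpr (hμpos i)
  have hgsq : ∀ i, g i ^ 2 = μ i := fun i => Real.sq_sqrt (hμpos i).le
  have hgprod : ∏ i, g i = 1 := by
    have h1 : (∏ i, g i) ^ 2 = 1 := by
      rw [← Finset.prod_pow]
      simp_rw [hgsq]
      exact hμprod
    have h2 : 0 ≤ ∏ i, g i := Finset.prod_nonneg fun i _ => (hgpos i).le
    nlinarith [h1, h2]
  have hgle : ∀ i, g i ≤ (1 + μ i)/2 := by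
    intro i
    nlinarith [hgsq i, sq_nonneg (g i - 1)]
  have hprodge : (1:ℝ) ≤ ∏ i, (1 + μ i)/2 := by
    calc (1:ℝ) = ∏ i, g i := hgprod.symm
      _ ≤ ∏ i, (1 + μ i)/2 :=
        Finset.prod_le_prod (fun i _ => (hgpos i).le) (fun i _ => hgle i)
  constructor
  · rw [hdetfull]
    nlinarith [hA.det_pos, hprodge]
  · intro hle
    rw [hdetfull] at hle
    have hprodle : ∏ i, (1 + μ i)/2 ≤ 1 := by
      nlinarith [hA.det_pos, hprodge]
    -- all equalities
    have hall : ∀ i, g i = (1 + μ i)/2 := by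
      by_contra hcon
      push_neg at hcon
      obtain ⟨i, hi⟩ := hcon
      have hlt : g i < (1 + μ i)/2 := lt_of_le_of_ne (hgle i) hi
      have : ∏ j, g j < ∏ j, (1 + μ j)/2 :=
        Finset.prod_lt_prod (fun j _ => hgpos j) (fun j _ => hgle j) ⟨i, Finset.mem_univ i, hlt⟩
      rw [hgprod] at this
      linarith
    have hμone : ∀ i, μ i = 1 := by
      intro i
      have h1 := hall i
      have h2 := hgsq i
      have h5 : μ i = ((1 + μ i)/2) ^ 2 := by rw [← h1]; exact h2.symm
      have h3 : (μ i - 1) ^ 2 = 0 := by linear_combination (-4 : ℝ) * h5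
      have h4 : μ i - 1 = 0 := by
        exact pow_eq_zero_iff (by norm_num) |>.mp h3
      linarith
    have hdiag : diagonal μ = (1 : Matrix (Fin n) (Fin n) ℝ) := by
      rw [show μ = fun _ => (1:ℝ) from funext hμone]
      exact Matrix.diagonal_one
    have hNone : N = 1 := by
      rw [hspec, hdiag, mul_one, hUU]
    rw [← hSNS, hNone, mul_one, hSS]

end LoewnerAux

open LoewnerAux Matrix MatrixOrder in
/-- **Löwner ellipsoid.** Every symmetric convex body `C` in `ℝⁿ` is contained in a unique
ellipsoid of minimal volume among all ellipsoids containing `C`. -/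
theorem loewner_ellipsoid (n : ℕ) (hn : 1 ≤ n)
    (C : Set (EuclideanSpace ℝ (Fin n)))
    (hC_conv : Convex ℝ C) (hC_comp : IsCompact C)
    (hC_int : (interior C).Nonempty) (hC_symm : C = -C) :
    ∃! D : Set (EuclideanSpace ℝ (Fin n)),
      IsEllipsoid n D ∧ C ⊆ D ∧
        ∀ D' : Set (EuclideanSpace ℝ (Fin n)),
          IsEllipsoid n D' → C ⊆ D' → volume D ≤ volume D' := by
  classical
  -- `0` is an interior point of `C`
  obtain ⟨x₀, hx₀⟩ := hC_int
  have hneg : -x₀ ∈ interior C := by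
    have h1 : interior C = -interior C := by
      conv_lhs => rw [hC_symm]
      rw [← Set.image_neg_eq_neg, ← Set.image_neg_eq_neg]
      exact ((Homeomorph.neg (EuclideanSpace ℝ (Fin n))).image_interior C).symm
    rw [h1]
    exact Set.neg_mem_neg.mpr hx₀
  have h0int : (0 : EuclideanSpace ℝ (Fin n)) ∈ interior C := by
    have h := hC_conv.interior hx₀ hneg (by norm_num : (0:ℝ) ≤ 1/2)
      (by norm_num : (0:ℝ) ≤ 1/2) (by norm_num)
    simpa using h
  rw [mem_interior_iff_mem_nhds, Metric.mem_nhds_iff] at h0int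
  obtain ⟨ε, hε, hball⟩ := h0int
  have hρ0 : 0 < ε/2 := by linarith
  have hρC : Metric.closedBall (0 : EuclideanSpace ℝ (Fin n)) (ε/2) ⊆ C :=
    (Metric.closedBall_subset_ball (by linarith)).trans hball
  obtain ⟨r, hr⟩ := hC_comp.isBounded.subset_closedBall 0
  have hR0 : (0:ℝ) < max r 1 := lt_of_lt_of_le one_pos (le_max_right _ _)
  have hCR : C ⊆ Metric.closedBall 0 (max r 1) :=
    hr.trans (Metric.closedBall_subset_closedBall (le_max_left _ _))
  obtain ⟨M, hMpd, hMfeas, hMmax⟩ := exists_max hρ0 hρC hR0 hCR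
  -- build the minimal ellipsoid from `M`
  set A := CFC.sqrt M with hAdef
  have hAps : A.PosSemidef := (CFC.sqrt_nonneg M).posSemidef
  have hAA : A * A = M := CFC.sqrt_mul_sqrt_self M hMpd.posSemidef.nonneg
  have hAdet2 : A.det * A.det = M.det := by rw [← Matrix.det_mul, hAA]
  have hAdet_pos : 0 < A.det := by
    have hnonneg : 0 ≤ A.det := by
      rw [hAps.isHermitian.det_eq_prod_eigenvalues]
      exact Finset.prod_nonneg fun i _ => by simpa using hAps.eigenvalues_nonneg i
    rcases hnonneg.lt_or_eq with h | h
    · exact h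
    · exfalso; rw [← h, mul_zero] at hAdet2; exact hMpd.det_pos.ne' hAdet2.symm
  have hAunit : IsUnit A.det := hAdet_pos.ne'.isUnit
  have hAt : Aᵀ * A = M := by
    rw [← Matrix.conjTranspose_eq_transpose_of_trivial,
      show Aᴴ = A from hAps.isHermitian, hAA]
  set L0 := Matrix.toLinearEquiv (EuclideanSpace.basisFun (Fin n) ℝ).toBasis A hAunit
    with hL0def
  set L := L0.symm with hLdef
  have hA' : Matrix.toEuclideanLin A = L.symm.toLinearMap := by
    rw [hLdef, LinearEquiv.symm_symm, Matrix.toEuclideanLin_eq_toLin_orthonormal]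
    rfl
  set D := ⇑L '' Metric.closedBall 0 1 with hDdef
  have hmemD : ∀ x, x ∈ D ↔ qf M x ≤ 1 := fun x => by
    rw [hDdef, mem_ellipsoid_iff L hA' x, hAt]
  have hCD : C ⊆ D := fun x hx => (hmemD x).mpr (hMfeas x hx)
  have hvolD : volume D = ENNReal.ofReal ((Real.sqrt M.det)⁻¹)
      * volume (Metric.closedBall (0 : EuclideanSpace ℝ (Fin n)) 1) := by
    rw [hDdef, volume_ellipsoid L hA', hAt]
  -- minimality
  have hmin : ∀ D' : Set (EuclideanSpace ℝ (Fin n)),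
      IsEllipsoid n D' → C ⊆ D' → volume D ≤ volume D' := by
    rintro D' ⟨L', rfl⟩ hsub'
    set A' := Matrix.toEuclideanLin.symm L'.symm.toLinearMap with hA'def
    have hA'' : Matrix.toEuclideanLin A' = L'.symm.toLinearMap :=
      Matrix.toEuclideanLin.apply_symm_apply _
    set M' := A'ᵀ * A' with hM'def
    have hM'psd : M'.PosSemidef := by
      have h := Matrix.posSemidef_conjTranspose_mul_self A'
      rwa [Matrix.conjTranspose_eq_transpose_of_trivial] at h
    have hM'fe : ∀ x ∈ C, qf M' x ≤ 1 := fun x hx =>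
      (mem_ellipsoid_iff L' hA'' x).mp (hsub' hx)
    have hdetle : M'.det ≤ M.det := hMmax M' hM'psd hM'fe
    have hM'pos : 0 < M'.det := by
      rw [hM'def, Matrix.det_mul, Matrix.det_transpose]
      exact mul_self_pos.mpr (gram_det_pos L' hA'')
    rw [hvolD, volume_ellipsoid L' hA'']
    apply mul_le_mul_left
    apply ENNReal.ofReal_le_ofReal
    have hsq : Real.sqrt M'.det ≤ Real.sqrt M.det := Real.sqrt_le_sqrt hdetle
    have hsq0 : 0 < Real.sqrt M'.det := Real.sqrt_pos.mpr hM'pos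
    exact inv_anti₀ hsq0 hsq
  refine ⟨D, ⟨⟨L, hDdef⟩, hCD, hmin⟩, ?_⟩
  -- uniqueness
  rintro D₂ ⟨⟨L₂, rfl⟩, hsub₂, hmin₂⟩
  set A₂ := Matrix.toEuclideanLin.symm L₂.symm.toLinearMap with hA₂def
  have hA₂ : Matrix.toEuclideanLin A₂ = L₂.symm.toLinearMap :=
    Matrix.toEuclideanLin.apply_symm_apply _
  set M₂ := A₂ᵀ * A₂ with hM₂def
  have hM₂psd : M₂.PosSemidef := by
    have h := Matrix.posSemidef_conjTranspose_mul_self A₂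
    rwa [Matrix.conjTranspose_eq_transpose_of_trivial] at h
  have hM₂fe : ∀ x ∈ C, qf M₂ x ≤ 1 := fun x hx =>
    (mem_ellipsoid_iff L₂ hA₂ x).mp (hsub₂ hx)
  have hM₂pos : 0 < M₂.det := by
    rw [hM₂def, Matrix.det_mul, Matrix.det_transpose]
    exact mul_self_pos.mpr (gram_det_pos L₂ hA₂)
  -- volumes are equal, hence determinants are equal
  have hveq : volume (⇑L₂ '' Metric.closedBall 0 1) = volume D :=
    le_antisymm (hmin₂ D ⟨L, hDdef⟩ hCD) (hmin _ ⟨L₂, rfl⟩ hsub₂)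
  have hvB0 : volume (Metric.closedBall (0 : EuclideanSpace ℝ (Fin n)) 1) ≠ 0 :=
    (Metric.measure_closedBall_pos volume 0 one_pos).ne'
  have hvBtop : volume (Metric.closedBall (0 : EuclideanSpace ℝ (Fin n)) 1) ≠ ⊤ :=
    (ProperSpace.isCompact_closedBall 0 1).measure_lt_top.ne
  rw [volume_ellipsoid L₂ hA₂, hvolD] at hveq
  have hinveq : (Real.sqrt (A₂ᵀ * A₂).det)⁻¹ = (Real.sqrt M.det)⁻¹ := by
    have h := (ENNReal.mul_left_inj hvB0 hvBtop).mp hveq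
    exact (ENNReal.ofReal_eq_ofReal_iff (by positivity) (by positivity)).mp h
  have hdet₂ : M₂.det = M.det := by
    have hsqeq : Real.sqrt M₂.det = Real.sqrt M.det := by
      rw [hM₂def] at *
      exact inv_inj.mp hinveq
    calc M₂.det = (Real.sqrt M₂.det) ^ 2 := (Real.sq_sqrt hM₂pos.le).symm
      _ = (Real.sqrt M.det) ^ 2 := by rw [hsqeq]
      _ = M.det := Real.sq_sqrt hMpd.det_pos.le
  have hM₂pd : M₂.PosDef := posDef_of_psd_det_pos hM₂psd (hdet₂ ▸ hMpd.det_pos)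
  -- the averaged matrix is feasible
  have hM₃psd : (((1:ℝ)/2) • (M + M₂)).PosSemidef :=
    psd_smul (hMpd.posSemidef.add hM₂psd) (by norm_num)
  have hM₃fe : ∀ x ∈ C, qf (((1:ℝ)/2) • (M + M₂)) x ≤ 1 := by
    intro x hx
    rw [qf_smul, qf_add]
    have h1 := hMfeas x hx
    have h2 := hM₂fe x hx
    linarith
  have hd₃ : (((1:ℝ)/2) • (M + M₂)).det ≤ M.det := hMmax _ hM₃psd hM₃fe
  obtain ⟨-, heqcase⟩ := det_avg hMpd hM₂pd hdet₂
  have hM₂M : M₂ = M := heqcase hd₃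
  ext x
  rw [mem_ellipsoid_iff L₂ hA₂ x, hmemD x, ← hM₂def, hM₂M]
end

section
/- (John's √n containment) Let n ≥ 1 and let C be a symmetric convex body in ℝⁿ. If D is an ellipsoid contained in C of maximal Lebesgue volume among all ellipsoids contained in C, then C ⊆ √n · D, where √n · D denotes the dilate {√n · x : x ∈ D}. -/
open MeasureTheory Pointwise
open scoped RealInnerProductSpace ENNReal

section aux

/-- The key scalar inequality showing the trial ellipsoid point is in the convex hull. -/
lemma john_key_ineq (R a b t lam : ℝ) (hR : 1 < R) (ha1 : 1 ≤ a) (haR : a ≤ R)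
    (hb2 : b ^ 2 * (R ^ 2 - 1) = R ^ 2 - a ^ 2) (ht0 : 0 ≤ t) (ht1 : t ≤ 1)
    (hlam : lam = max 0 ((R * a * t - 1) / (R ^ 2 - 1))) :
    (a * t - lam * R) ^ 2 + b ^ 2 * (1 - t ^ 2) ≤ (1 - lam) ^ 2 := by
  have hc : (0 : ℝ) < R ^ 2 - 1 := by nlinarith
  rcases le_or_gt (R * a * t) 1 with h1 | h1
  · -- λ = 0 case
    have hl0 : lam = 0 := by
      rw [hlam, max_eq_left]
      exact div_nonpos_of_nonpos_of_nonneg (by linarith) hc.le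
    subst hl0
    have hRt : R * t ≤ 1 := by nlinarith
    have ha2 : 1 ≤ a ^ 2 := by nlinarith
    have hkey : (0:ℝ) ≤ (a ^ 2 - 1) * (1 - R ^ 2 * t ^ 2) :=
      mul_nonneg (by linarith) (by nlinarith [mul_nonneg (by linarith : (0:ℝ) ≤ R) ht0])
    have hid : (R ^ 2 - 1) * ((1 - 0) ^ 2 - ((a * t - 0 * R) ^ 2 + b ^ 2 * (1 - t ^ 2)))
        = (a ^ 2 - 1) * (1 - R ^ 2 * t ^ 2) := by linear_combination (t ^ 2 - 1) * hb2
    nlinarith [hc]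
  · -- λ = (Rat-1)/(R²-1) case
    have hl : lam * (R ^ 2 - 1) = R * a * t - 1 := by
      rw [hlam, max_eq_right (le_of_lt (div_pos (by linarith) hc))]
      field_simp
    have e1 : (a * t - lam * R) * (R ^ 2 - 1) = a * t * (R ^ 2 - 1) - (R * a * t - 1) * R := by
      linear_combination (-R) * hl
    have e2 : (1 - lam) * (R ^ 2 - 1) = (R ^ 2 - 1) - (R * a * t - 1) := by
      linear_combination (-1 : ℝ) * hl
    have hid : ((1 - lam) * (R ^ 2 - 1)) ^ 2
        - (((a * t - lam * R) * (R ^ 2 - 1)) ^ 2 + b ^ 2 * (1 - t ^ 2) * (R ^ 2 - 1) ^ 2)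
        = (R ^ 2 - 1) * (R * t - a) ^ 2 := by
      rw [e1, e2]
      linear_combination (t ^ 2 - 1) * (R ^ 2 - 1) * hb2
    have hsq : (R ^ 2 - 1) * (R * t - a) ^ 2 ≥ 0 := mul_nonneg hc.le (sq_nonneg _)
    have h' : ((a * t - lam * R) ^ 2 + b ^ 2 * (1 - t ^ 2)) * (R ^ 2 - 1) ^ 2
        ≤ (1 - lam) ^ 2 * (R ^ 2 - 1) ^ 2 := by nlinarith
    exact le_of_mul_le_mul_right h' (by positivity)

variable {n : ℕ}

local notation "E" n => EuclideanSpace ℝ (Fin n)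

/-- Norm of an orthogonal decomposition. -/
lemma john_norm_sq {F : Type*} [NormedAddCommGroup F] [InnerProductSpace ℝ F]
    (u w : F) (hu : ‖u‖ = 1) (huw : ⟪u, w⟫ = 0) (c d : ℝ) :
    ‖c • u + d • w‖ ^ 2 = c ^ 2 + d ^ 2 * ‖w‖ ^ 2 := by
  rw [norm_add_sq_real, real_inner_smul_left, real_inner_smul_right, huw,
    norm_smul, norm_smul, hu]
  simp [mul_pow, sq_abs]

set_option maxHeartbeats 2000000 in
/-- The core geometric lemma: if the unit ball is a maximal-volume ellipsoid inside a
symmetric convex set `C`, then `C ⊆ √n • B`. -/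
lemma john_core (n : ℕ) (hn : 1 ≤ n) (C : Set (EuclideanSpace ℝ (Fin n)))
    (hC_conv : Convex ℝ C) (hC_symm : ∀ x ∈ C, -x ∈ C)
    (hB : Metric.closedBall 0 1 ⊆ C)
    (hmax : ∀ M : EuclideanSpace ℝ (Fin n) ≃ₗ[ℝ] EuclideanSpace ℝ (Fin n),
      ⇑M '' Metric.closedBall 0 1 ⊆ C →
      volume (⇑M '' Metric.closedBall 0 1)
        ≤ volume (Metric.closedBall (0 : EuclideanSpace ℝ (Fin n)) 1)) :
    C ⊆ Real.sqrt n • Metric.closedBall 0 1 := by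
  intro x hx
  have hn0 : (0 : ℝ) < n := by exact_mod_cast hn
  have hsn1 : (1 : ℝ) ≤ Real.sqrt n := by
    rw [show (1:ℝ) = Real.sqrt 1 by simp]
    exact Real.sqrt_le_sqrt (by exact_mod_cast hn)
  have hsn0 : (0 : ℝ) < Real.sqrt n := by linarith
  by_cases hR : ‖x‖ ≤ Real.sqrt n
  · refine ⟨(Real.sqrt n)⁻¹ • x, ?_, smul_inv_smul₀ hsn0.ne' x⟩
    rw [Metric.mem_closedBall, dist_zero_right, norm_smul, norm_inv, Real.norm_eq_abs,
      abs_of_pos hsn0]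
    rw [inv_mul_le_iff₀ hsn0]
    simpa using hR
  · -- the contradiction branch
    exfalso
    push_neg at hR
    set R : ℝ := ‖x‖ with hRdef
    have hR1 : 1 < R := lt_of_le_of_lt hsn1 hR
    have hR0 : (0 : ℝ) < R := by linarith
    have hnR2 : (n : ℝ) < R ^ 2 := by
      have : Real.sqrt n ^ 2 < R ^ 2 := by
        apply pow_lt_pow_left₀ hR (Real.sqrt_nonneg _) (by norm_num)
      rwa [Real.sq_sqrt hn0.le] at this
    have hc : (0 : ℝ) < R ^ 2 - 1 := by
      have : (1:ℝ) < R ^ 2 := by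
        calc (1:ℝ) = 1 ^ 2 := by norm_num
          _ < R ^ 2 := pow_lt_pow_left₀ hR1 (by norm_num) (by norm_num)
      linarith
    set u : EuclideanSpace ℝ (Fin n) := R⁻¹ • x with hudef
    have hu : ‖u‖ = 1 := by
      rw [hudef, norm_smul, norm_inv, Real.norm_eq_abs, abs_of_pos hR0, ← hRdef,
        inv_mul_cancel₀ hR0.ne']
    have hxRu : x = R • u := by rw [hudef, smul_inv_smul₀ hR0.ne']
    -- choice of ε, a, b
    obtain ⟨ε, hε0, hε1, hεprod⟩ : ∃ ε : ℝ, 0 < ε ∧ ε ≤ (R ^ 2 - 1) / 2 ∧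
        1 < (1 + ε) * (1 - ((n : ℝ) - 1) / (R ^ 2 - 1) * ε) := by
      set K : ℝ := ((n : ℝ) - 1) / (R ^ 2 - 1) with hKdef
      have hK0 : 0 ≤ K := div_nonneg (by exact_mod_cast by linarith : (0:ℝ) ≤ (n:ℝ) - 1) hc.le
      have hK1 : K < 1 := (div_lt_one hc).2 (by linarith)
      refine ⟨min ((R ^ 2 - 1) / 2) ((1 - K) / (2 * K + 1)), ?_, min_le_left _ _, ?_⟩
      · exact lt_min (by linarith) (div_pos (by linarith) (by linarith))
      · set ε := min ((R ^ 2 - 1) / 2) ((1 - K) / (2 * K + 1)) with hεdef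
        have hε0 : 0 < ε := lt_min (by linarith) (div_pos (by linarith) (by linarith))
        have hε2 : ε ≤ (1 - K) / (2 * K + 1) := min_le_right _ _
        have hKe2 : K * ε ≤ (1 - K) / 2 := by
          have h1 : K * ε ≤ K * ((1 - K) / (2 * K + 1)) :=
            mul_le_mul_of_nonneg_left hε2 hK0
          have h2 : K * ((1 - K) / (2 * K + 1)) ≤ (1 - K) / 2 := by
            rw [← mul_div_assoc, div_le_div_iff₀ (by linarith) (by norm_num)]
            nlinarith only [hK0, hK1]
          linarith
        have hpos : 0 < ε * (1 - K - K * ε) := mul_pos hε0 (by linarith)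
        nlinarith only [hpos]
    set a : ℝ := Real.sqrt (1 + ε) with hadef
    set b : ℝ := Real.sqrt ((R ^ 2 - 1 - ε) / (R ^ 2 - 1)) with hbdef
    have ha2 : a ^ 2 = 1 + ε := Real.sq_sqrt (by linarith)
    have hbin : (0:ℝ) < (R ^ 2 - 1 - ε) / (R ^ 2 - 1) := div_pos (by linarith) hc
    have hb2' : b ^ 2 = (R ^ 2 - 1 - ε) / (R ^ 2 - 1) := Real.sq_sqrt hbin.le
    have hb2 : b ^ 2 * (R ^ 2 - 1) = R ^ 2 - a ^ 2 := by
      rw [hb2', ha2]; field_simp; ring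
    have ha1 : 1 ≤ a := by
      rw [show (1:ℝ) = Real.sqrt 1 by simp, hadef]
      exact Real.sqrt_le_sqrt (by linarith)
    have ha0 : 0 < a := by linarith
    have hb0 : 0 < b := Real.sqrt_pos.2 hbin
    have haR : a < R := by
      have h1 : a ^ 2 < R ^ 2 := by rw [ha2]; linarith
      exact lt_of_pow_lt_pow_left₀ 2 hR0.le h1
    -- the determinant is > 1
    have hdet1 : 1 < a * b ^ (n - 1) := by
      have hber : 1 - ((n : ℝ) - 1) * (ε / (R ^ 2 - 1)) ≤ (b ^ 2) ^ (n - 1) := by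
        have h := one_add_mul_le_pow (a := -(ε / (R ^ 2 - 1))) (by
          have : ε / (R ^ 2 - 1) ≤ 1 := by
            rw [div_le_one hc]; linarith
          linarith) (n - 1)
        have hcast : ((n - 1 : ℕ) : ℝ) = (n : ℝ) - 1 := by
          rw [Nat.cast_sub hn]; simp
        rw [hcast] at h
        have hbe : 1 + -(ε / (R ^ 2 - 1)) = b ^ 2 := by
          rw [hb2']; field_simp; ring
        rw [hbe] at h
        linarith [h]
      have hsq : 1 < (a * b ^ (n - 1)) ^ 2 := by
        have hexp : (a * b ^ (n - 1)) ^ 2 = a ^ 2 * (b ^ 2) ^ (n - 1) := by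
          rw [mul_pow, ← pow_mul, ← pow_mul, Nat.mul_comm]
        rw [hexp, ha2]
        calc (1:ℝ) < (1 + ε) * (1 - ((n : ℝ) - 1) / (R ^ 2 - 1) * ε) := hεprod
          _ ≤ (1 + ε) * (b ^ 2) ^ (n - 1) := by
              apply mul_le_mul_of_nonneg_left _ (by linarith)
              have hco : 1 - ((n : ℝ) - 1) / (R ^ 2 - 1) * ε
                  = 1 - ((n : ℝ) - 1) * (ε / (R ^ 2 - 1)) := by ring
              rw [hco]
              exact hber
      have hd0 : 0 < a * b ^ (n - 1) := mul_pos ha0 (pow_pos hb0 _)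
      by_contra hle
      push_neg at hle
      have : (a * b ^ (n - 1)) ^ 2 ≤ 1 := pow_le_one₀ hd0.le hle
      linarith
    -- orthonormal basis containing u
    have i₀ : Fin n := ⟨0, hn⟩
    obtain ⟨o, ho⟩ : ∃ o : OrthonormalBasis (Fin n) ℝ (EuclideanSpace ℝ (Fin n)),
        o i₀ = u := by
      have card : Module.finrank ℝ (EuclideanSpace ℝ (Fin n)) = Fintype.card (Fin n) := by simp
      have horth : Orthonormal ℝ (Set.restrict {i₀} (fun _ : Fin n => u)) := by
        rw [orthonormal_iff_ite]
        rintro ⟨i, hi⟩ ⟨j, hj⟩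
        simp only [Set.mem_singleton_iff] at hi hj
        subst hi; subst hj
        have h1 : ⟪u, u⟫ = 1 := by
          rw [real_inner_self_eq_norm_sq, hu]; norm_num
        rw [if_pos rfl]; exact h1
      obtain ⟨o, ho⟩ := horth.exists_orthonormalBasis_extension_of_card_eq card
      exact ⟨o, ho _ rfl⟩
    -- the linear map
    set f : EuclideanSpace ℝ (Fin n) →ₗ[ℝ] EuclideanSpace ℝ (Fin n) :=
      { toFun := fun y => b • y + ((a - b) * ⟪u, y⟫) • u
        map_add' := fun y z => by
          simp only [inner_add_right]
          module
        map_smul' := fun c y => by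
          simp only [inner_smul_right, RingHom.id_apply]
          module } with hfdef
    have hf_apply : ∀ y, f y = b • y + ((a - b) * ⟪u, y⟫) • u := fun _ => rfl
    -- its matrix is diagonal
    have hmat : LinearMap.toMatrix o.toBasis o.toBasis f
        = Matrix.diagonal (fun i => if i = i₀ then a else b) := by
      ext i j
      have hinner : ⟪u, o j⟫ = if i₀ = j then 1 else 0 := by
        rw [← ho]; exact orthonormal_iff_ite.mp o.orthonormal i₀ j
      have hfo : f (o j) = b • o j + ((a - b) * (if i₀ = j then 1 else 0)) • o i₀ := by
        rw [hf_apply, hinner, ho]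
      have hbj : ∀ k, o.toBasis k = o k := fun k => by rw [OrthonormalBasis.coe_toBasis]
      rw [LinearMap.toMatrix_apply, hbj j, hfo, map_add, _root_.map_smul, _root_.map_smul,
        ← hbj j, ← hbj i₀, Module.Basis.repr_self, Module.Basis.repr_self]
      simp only [Finsupp.coe_add, Finsupp.coe_smul, Pi.add_apply, Pi.smul_apply,
        Finsupp.single_apply, smul_eq_mul, Matrix.diagonal_apply]
      by_cases hij : i = j
      · subst hij
        by_cases hii : i = i₀
        · subst hii; simp
        · have h4 : ¬ i₀ = i := fun h => hii h.symm
          simp [hii, h4]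
      · have h1 : ¬ j = i := fun h => hij h.symm
        by_cases hji : i₀ = j
        · have h2 : ¬ i₀ = i := fun h => hij ((h.symm.trans hji))
          simp [hij, h1, h2]
        · by_cases h3 : i₀ = i
          · simp [hij, h1, hji]
          · simp [hij, h1, hji, h3]
    have hdetf : LinearMap.det f = a * b ^ (n - 1) := by
      rw [← LinearMap.det_toMatrix o.toBasis, hmat, Matrix.det_diagonal]
      rw [← Finset.mul_prod_erase Finset.univ _ (Finset.mem_univ i₀)]
      rw [if_pos rfl]
      congr 1
      rw [Finset.prod_congr rfl (fun i hi => if_neg (Finset.ne_of_mem_erase hi)),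
        Finset.prod_const, Finset.card_erase_of_mem (Finset.mem_univ i₀),
        Finset.card_univ, Fintype.card_fin]
    have hdetne : LinearMap.det f ≠ 0 := by
      rw [hdetf]; positivity
    set T := f.equivOfDetNeZero hdetne with hTdef
    have hT : ⇑T = ⇑f := rfl
    -- containment of the trial ellipsoid
    have hsub : ⇑T '' Metric.closedBall 0 1 ⊆ C := by
      rintro - ⟨y, hy, rfl⟩
      rw [Metric.mem_closedBall, dist_zero_right] at hy
      rw [hT]
      set s : ℝ := ⟪u, y⟫ with hsdef
      set w : EuclideanSpace ℝ (Fin n) := y - s • u with hwdef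
      have huw : ⟪u, w⟫ = 0 := by
        rw [hwdef, inner_sub_right, real_inner_smul_right, real_inner_self_eq_norm_sq, hu,
          ← hsdef]
        ring
      have hyw : y = s • u + w := by rw [hwdef]; abel
      have hyn : ‖y‖ ^ 2 = s ^ 2 + 1 ^ 2 * ‖w‖ ^ 2 := by
        conv_lhs => rw [hyw, show w = (1:ℝ) • w by simp]
        exact john_norm_sq u w hu huw s 1
      have hwn : ‖w‖ ^ 2 ≤ 1 - s ^ 2 := by
        have hy1 : ‖y‖ ^ 2 ≤ 1 := pow_le_one₀ (norm_nonneg y) hy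
        nlinarith only [hyn, hy1]
      set t : ℝ := |s| with htdef
      have ht0 : 0 ≤ t := abs_nonneg s
      have ht1 : t ≤ 1 := by
        rw [htdef]
        calc |s| ≤ ‖u‖ * ‖y‖ := abs_real_inner_le_norm u y
          _ ≤ 1 := by rw [hu, one_mul]; exact hy
      set σ : ℝ := if 0 ≤ s then 1 else -1 with hσdef
      have hst : s = σ * t := by
        rw [hσdef, htdef]
        split_ifs with h
        · rw [one_mul, abs_of_nonneg h]
        · rw [neg_one_mul, abs_of_neg (lt_of_not_ge h), neg_neg]
      have hσ2 : σ ^ 2 = 1 := by rw [hσdef]; split_ifs <;> norm_num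
      set lam : ℝ := max 0 ((R * a * t - 1) / (R ^ 2 - 1)) with hlamdef
      have hlam0 : 0 ≤ lam := le_max_left _ _
      have hlam1 : lam < 1 := by
        rw [hlamdef, max_lt_iff]
        refine ⟨by norm_num, ?_⟩
        rw [div_lt_one hc]
        have h1 : R * a * t ≤ R * a * 1 :=
          mul_le_mul_of_nonneg_left ht1 (by positivity)
        have h2 : R * a < R * R := mul_lt_mul_of_pos_left haR hR0
        nlinarith only [h1, h2]
      have hkey : (a * t - lam * R) ^ 2 + b ^ 2 * (1 - t ^ 2) ≤ (1 - lam) ^ 2 :=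
        john_key_ineq R a b t lam hR1 ha1 haR.le hb2 ht0 ht1 hlamdef
      -- decompose f y
      have hfy : f y = (a * s) • u + b • w := by
        rw [hf_apply, ← hsdef, hyw]
        module
      have hdiff : f y - lam • (σ • x) = (a * s - lam * σ * R) • u + b • w := by
        rw [hfy, hxRu]
        module
      have hdn : ‖f y - lam • (σ • x)‖ ^ 2 ≤ (1 - lam) ^ 2 := by
        rw [hdiff, john_norm_sq u w hu huw]
        have he : (a * s - lam * σ * R) ^ 2 = (a * t - lam * R) ^ 2 := by
          rw [hst]
          have : (a * (σ * t) - lam * σ * R) ^ 2 = σ ^ 2 * (a * t - lam * R) ^ 2 := by ring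
          rw [this, hσ2, one_mul]
        rw [he]
        have ht2 : t ^ 2 = s ^ 2 := sq_abs s
        have hm : b ^ 2 * ‖w‖ ^ 2 ≤ b ^ 2 * (1 - t ^ 2) := by
          apply mul_le_mul_of_nonneg_left _ (sq_nonneg b)
          rw [ht2]; exact hwn
        linarith only [hkey, hm]
      have hlam1' : 0 < 1 - lam := by linarith
      have hdn' : ‖f y - lam • (σ • x)‖ ≤ 1 - lam := by
        nlinarith only [hdn, norm_nonneg (f y - lam • (σ • x)), hlam1']
      set v : EuclideanSpace ℝ (Fin n) := (1 - lam)⁻¹ • (f y - lam • (σ • x)) with hvdef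
      have hvC : v ∈ C := by
        apply hB
        rw [Metric.mem_closedBall, dist_zero_right, hvdef, norm_smul, norm_inv,
          Real.norm_eq_abs, abs_of_pos hlam1']
        rw [inv_mul_le_iff₀ hlam1']
        simpa using hdn'
      have hσxC : σ • x ∈ C := by
        rw [hσdef]
        split_ifs
        · simpa using hx
        · rw [show (-1 : ℝ) • x = -x by simp]
          exact hC_symm x hx
      have hcomb : lam • (σ • x) + (1 - lam) • v = f y := by
        rw [hvdef, smul_inv_smul₀ hlam1'.ne']
        abel
      rw [← hcomb]
      exact hC_conv hσxC hvC hlam0 hlam1'.le (by ring)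
    -- volume contradiction
    have hvol := hmax T hsub
    have himg : volume (⇑T '' Metric.closedBall 0 1)
        = ENNReal.ofReal (a * b ^ (n - 1))
          * volume (Metric.closedBall (0 : EuclideanSpace ℝ (Fin n)) 1) := by
      rw [hT, Measure.addHaar_image_linearMap, hdetf,
        abs_of_pos (by positivity : (0:ℝ) < a * b ^ (n - 1))]
    rw [himg] at hvol
    have hV0 : volume (Metric.closedBall (0 : EuclideanSpace ℝ (Fin n)) 1) ≠ 0 :=
      (Metric.measure_closedBall_pos volume 0 one_pos).ne'
    have hVtop : volume (Metric.closedBall (0 : EuclideanSpace ℝ (Fin n)) 1) ≠ ⊤ :=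
      measure_closedBall_lt_top.ne
    have : ENNReal.ofReal (a * b ^ (n - 1)) ≤ 1 := by
      have h := hvol
      rw [show volume (Metric.closedBall (0 : EuclideanSpace ℝ (Fin n)) 1)
          = 1 * volume (Metric.closedBall (0 : EuclideanSpace ℝ (Fin n)) 1) by rw [one_mul]]
          at h
      exact (ENNReal.mul_le_mul_iff_left hV0 hVtop).1 (by simpa using h)
    rw [ENNReal.ofReal_le_one] at this
    linarith

end aux

/-- **John's `√n` containment.** If `D` is an ellipsoid of maximal volume contained in a
symmetric convex body `C ⊆ ℝⁿ`, then `C ⊆ √n • D`. -/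
theorem john_sqrt_containment (n : ℕ) (hn : 1 ≤ n)
    (C : Set (EuclideanSpace ℝ (Fin n)))
    (hC_conv : Convex ℝ C) (hC_comp : IsCompact C)
    (hC_int : (interior C).Nonempty) (hC_symm : C = -C)
    (D : Set (EuclideanSpace ℝ (Fin n)))
    (hD_ell : IsEllipsoid n D) (hDC : D ⊆ C)
    (hD_max : ∀ D' : Set (EuclideanSpace ℝ (Fin n)),
      IsEllipsoid n D' → D' ⊆ C → volume D' ≤ volume D) :
    C ⊆ Real.sqrt n • D := by
  obtain ⟨L, rfl⟩ := hD_ell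
  set B : Set (EuclideanSpace ℝ (Fin n)) := Metric.closedBall 0 1 with hBdef
  set C' : Set (EuclideanSpace ℝ (Fin n)) := ⇑L.symm '' C with hC'def
  have hdetL : LinearMap.det (L : EuclideanSpace ℝ (Fin n) →ₗ[ℝ] EuclideanSpace ℝ (Fin n)) ≠ 0 :=
    L.isUnit_det'.ne_zero
  have hofL : (0 : ℝ≥0∞) < ENNReal.ofReal |LinearMap.det
      (L : EuclideanSpace ℝ (Fin n) →ₗ[ℝ] EuclideanSpace ℝ (Fin n))| :=
    ENNReal.ofReal_pos.2 (abs_pos.2 hdetL)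
  have hB' : B ⊆ C' := by
    intro y hy
    exact ⟨L y, hDC ⟨y, hy, rfl⟩, L.symm_apply_apply y⟩
  have hconv' : Convex ℝ C' := hC_conv.linear_image L.symm.toLinearMap
  have hsymm' : ∀ z ∈ C', -z ∈ C' := by
    rintro - ⟨c, hc, rfl⟩
    refine ⟨-c, ?_, by simp⟩
    rw [hC_symm]
    exact Set.neg_mem_neg.2 hc
  have hmax' : ∀ M : EuclideanSpace ℝ (Fin n) ≃ₗ[ℝ] EuclideanSpace ℝ (Fin n),
      ⇑M '' B ⊆ C' → volume (⇑M '' B) ≤ volume B := by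
    intro M hMC
    have himg : ⇑L '' (⇑M '' B) ⊆ C := by
      rintro - ⟨z, hz, rfl⟩
      obtain ⟨c, hc, hcz⟩ := hMC hz
      rwa [← hcz, L.apply_symm_apply]
    have hell : IsEllipsoid n (⇑L '' (⇑M '' B)) := ⟨M.trans L, by rw [← Set.image_comp]; rfl⟩
    have h := hD_max _ hell himg
    rw [show ⇑L '' (⇑M '' B) = ⇑(L : EuclideanSpace ℝ (Fin n) →ₗ[ℝ]
        EuclideanSpace ℝ (Fin n)) '' (⇑M '' B) from rfl,
      show ⇑L '' B = ⇑(L : EuclideanSpace ℝ (Fin n) →ₗ[ℝ]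
        EuclideanSpace ℝ (Fin n)) '' B from rfl,
      Measure.addHaar_image_linearMap, Measure.addHaar_image_linearMap] at h
    exact (ENNReal.mul_le_mul_iff_right (ENNReal.ofReal_pos.2 (abs_pos.2 hdetL)).ne'
      ENNReal.ofReal_ne_top).1 h
  have hcore := john_core n hn C' hconv' hsymm' hB' hmax'
  intro x hx
  have hx' : L.symm x ∈ C' := ⟨x, hx, rfl⟩
  obtain ⟨w, hw, hwx⟩ := hcore hx'
  refine ⟨L w, ⟨w, hw, rfl⟩, ?_⟩
  have hwx' : Real.sqrt n • w = L.symm x := hwx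
  show Real.sqrt n • L w = x
  rw [← _root_.map_smul L, hwx', L.apply_symm_apply]
end

section
/- For every integer n ≥ 1 and every norm ‖·‖ on ℝⁿ, there exists an inner product on ℝⁿ whose associated norm |·| satisfies |x| ≤ ‖x‖ ≤ √n · |x| for all x ∈ ℝⁿ. In particular, the Banach–Mazur distance from (ℝⁿ, ‖·‖) to Euclidean space ℓ²ₙ is at most √n. -/
open scoped RealInnerProductSpace
open Filter Set Topology

private lemma johnN_sum_le {ι V : Type*} [AddCommGroup V] (N : V → ℝ)
    (h0 : N 0 = 0) (ht : ∀ x y, N (x + y) ≤ N x + N y)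
    (s : Finset ι) (f : ι → V) : N (∑ i ∈ s, f i) ≤ ∑ i ∈ s, N (f i) := by
  classical
  induction s using Finset.induction with
  | empty => simp [h0]
  | insert _ _ hx ih =>
      rw [Finset.sum_insert hx, Finset.sum_insert hx]
      exact le_trans (ht _ _) (by linarith)

private lemma john_key_aux {s x₁ Y : ℝ} (hD : 0 < s ^ 2 - 1)
    (key : Y ^ 2 * (s ^ 2 - 1) ≤ (s - x₁) ^ 2) :
    (s - x₁) ^ 2 + Y ^ 2 * (s ^ 2 - 1) ^ 2 ≤ (s ^ 2 - s * x₁) ^ 2 := by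
  nlinarith [mul_le_mul_of_nonneg_right key (le_of_lt hD)]

private lemma john_key_lambda {s a b x₁ Y : ℝ} (hs : 1 < s) (ha1 : 1 ≤ a) (has : a ≤ s)
    (hb : 0 < b) (hb2 : b ^ 2 * (s ^ 2 - 1) = s ^ 2 - a ^ 2) (hx₁ : 0 ≤ x₁) (hY : 0 ≤ Y)
    (hell : x₁ ^ 2 * b ^ 2 + Y ^ 2 * a ^ 2 ≤ a ^ 2 * b ^ 2) :
    ∃ l, 0 ≤ l ∧ l ≤ 1 ∧ (x₁ - l * s) ^ 2 + Y ^ 2 ≤ (1 - l) ^ 2 := by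
  have ha0 : 0 < a := lt_of_lt_of_le one_pos ha1
  have hD : 0 < s ^ 2 - 1 := by nlinarith
  have hb20 : 0 < b ^ 2 := by positivity
  have hx2 : x₁ ^ 2 ≤ a ^ 2 := by
    nlinarith [hb20, mul_nonneg (sq_nonneg Y) (sq_nonneg a)]
  have hx₁a : x₁ ≤ a := by nlinarith [hx2]
  have hYb : Y ^ 2 * a ^ 2 ≤ b ^ 2 * (a ^ 2 - x₁ ^ 2) := by nlinarith [hell]
  have hYs : Y ^ 2 * a ^ 2 * (s ^ 2 - 1) ≤ (s ^ 2 - a ^ 2) * (a ^ 2 - x₁ ^ 2) := by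
    have h := mul_le_mul_of_nonneg_right hYb (le_of_lt hD)
    have heq : b ^ 2 * (a ^ 2 - x₁ ^ 2) * (s ^ 2 - 1) = (s ^ 2 - a ^ 2) * (a ^ 2 - x₁ ^ 2) := by
      linear_combination (a ^ 2 - x₁ ^ 2) * hb2
    linarith [heq ▸ h]
  by_cases hc : s * x₁ ≤ 1
  · refine ⟨0, le_refl _, zero_le_one, ?_⟩
    have hsx : 0 ≤ s * x₁ := mul_nonneg (by linarith) hx₁
    have h1 : 0 ≤ (a ^ 2 - 1) * (a ^ 2 - (s * x₁) ^ 2) := by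
      apply mul_nonneg
      · nlinarith
      · nlinarith [hsx]
    nlinarith [h1, hYs, mul_pos hD (mul_pos ha0 ha0)]
  · push_neg at hc
    refine ⟨(s * x₁ - 1) / (s ^ 2 - 1), div_nonneg (by linarith) (le_of_lt hD), ?_, ?_⟩
    · rw [div_le_one hD]
      nlinarith
    · set l := (s * x₁ - 1) / (s ^ 2 - 1) with hldef
      have hl : l * (s ^ 2 - 1) = s * x₁ - 1 := div_mul_cancel₀ _ (ne_of_gt hD)
      have key : Y ^ 2 * (s ^ 2 - 1) ≤ (s - x₁) ^ 2 := by
        nlinarith [hYs, sq_nonneg (s * x₁ - a ^ 2), mul_pos ha0 ha0]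
      have e1 : (x₁ - l * s) * (s ^ 2 - 1) = s - x₁ := by linear_combination (-s) * hl
      have e2 : (1 - l) * (s ^ 2 - 1) = s ^ 2 - s * x₁ := by linear_combination (-1) * hl
      have hbig : ((x₁ - l * s) * (s ^ 2 - 1)) ^ 2 + Y ^ 2 * (s ^ 2 - 1) ^ 2
          ≤ ((1 - l) * (s ^ 2 - 1)) ^ 2 := by
        rw [e1, e2]
        exact john_key_aux hD key
      rw [mul_pow, mul_pow] at hbig
      refine le_of_mul_le_mul_right ?_ (pow_pos hD 2)
      calc ((x₁ - l * s) ^ 2 + Y ^ 2) * (s ^ 2 - 1) ^ 2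
          = (x₁ - l * s) ^ 2 * (s ^ 2 - 1) ^ 2 + Y ^ 2 * (s ^ 2 - 1) ^ 2 := by ring
        _ ≤ (1 - l) ^ 2 * (s ^ 2 - 1) ^ 2 := hbig

private lemma john_choose_ab {m : ℕ} {s : ℝ} (hs : 1 < s) (hsm : (m : ℝ) + 1 < s ^ 2) :
    ∃ a b : ℝ, 1 ≤ a ∧ a ≤ s ∧ 0 < b ∧ b ^ 2 * (s ^ 2 - 1) = s ^ 2 - a ^ 2 ∧
      1 < a * b ^ m := by
  have hD : 0 < s ^ 2 - 1 := by nlinarith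
  have hs0 : 0 < s := lt_trans one_pos hs
  obtain ⟨t, ht1, hts, htv⟩ : ∃ t : ℝ, 1 < t ∧ t < s ^ 2 ∧
      (s ^ 2 - 1) ^ m < t * (s ^ 2 - t) ^ m := by
    rcases Nat.eq_zero_or_pos m with hm | hm
    · subst hm
      exact ⟨(1 + s ^ 2) / 2, by linarith, by linarith, by simpa using (by linarith : (1:ℝ) < (1 + s ^ 2) / 2)⟩
    · set ψ : ℝ → ℝ := fun t => t * (s ^ 2 - t) ^ m with hψdef
      have hm1 : m - 1 + 1 = m := Nat.succ_pred_eq_of_pos hm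
      have hd : HasDerivAt ψ ((s ^ 2 - 1) ^ (m - 1) * (s ^ 2 - 1 - m)) 1 := by
        have h2 := ((hasDerivAt_id (1 : ℝ)).const_sub (s ^ 2)).pow m
        have h3 := (hasDerivAt_id (1 : ℝ)).mul h2
        convert h3 using 1
        · rfl
        · rfl
        · rfl
        have hkey : (s ^ 2 - 1) ^ m = (s ^ 2 - 1) ^ (m - 1) * (s ^ 2 - 1) := by
          rw [← pow_succ, hm1]
        simp only [id_eq, one_mul, mul_one, Pi.pow_apply]
        rw [hkey]
        ring
      have hdpos : 0 < (s ^ 2 - 1) ^ (m - 1) * (s ^ 2 - 1 - m) :=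
        mul_pos (pow_pos hD _) (by linarith)
      rw [hasDerivAt_iff_tendsto_slope] at hd
      have hpos : ∀ᶠ t in 𝓝[≠] (1 : ℝ), 0 < slope ψ 1 t :=
        hd.eventually (eventually_gt_nhds hdpos)
      have hpos' : ∀ᶠ t in 𝓝[>] (1 : ℝ), 0 < slope ψ 1 t :=
        hpos.filter_mono (nhdsWithin_mono 1 (fun x hx => ne_of_gt hx))
      have hmem : Ioo (1 : ℝ) (s ^ 2) ∈ 𝓝[>] (1 : ℝ) :=
        Ioo_mem_nhdsGT_of_mem ⟨le_refl 1, by nlinarith⟩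
      obtain ⟨t, hslope, ht⟩ :=
        (hpos'.and (eventually_of_mem hmem (fun x hx => hx))).exists
      refine ⟨t, ht.1, ht.2, ?_⟩
      rw [slope_def_field] at hslope
      have htd : 0 < t - 1 := by linarith [ht.1]
      have h5 : ψ 1 < ψ t := by
        rcases div_pos_iff.1 hslope with ⟨h, _⟩ | ⟨_, h2⟩
        · linarith
        · linarith
      simpa [ψ] using h5
  refine ⟨Real.sqrt t, Real.sqrt ((s ^ 2 - t) / (s ^ 2 - 1)), ?_, ?_, ?_, ?_, ?_⟩
  · have := Real.sqrt_le_sqrt (le_of_lt ht1)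
    simpa using this
  · calc Real.sqrt t ≤ Real.sqrt (s ^ 2) := Real.sqrt_le_sqrt (le_of_lt hts)
      _ = s := by rw [Real.sqrt_sq (le_of_lt hs0)]
  · exact Real.sqrt_pos.2 (div_pos (by linarith) hD)
  · rw [Real.sq_sqrt (le_of_lt (div_pos (by linarith) hD)),
      Real.sq_sqrt (by linarith : (0:ℝ) ≤ t), div_mul_cancel₀ _ (ne_of_gt hD)]
  · have h0t : (0:ℝ) ≤ t := by linarith
    have hbnn : (0:ℝ) ≤ Real.sqrt ((s ^ 2 - t) / (s ^ 2 - 1)) := Real.sqrt_nonneg _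
    have hann : (0:ℝ) ≤ Real.sqrt t := Real.sqrt_nonneg _
    have hsq : (Real.sqrt t * Real.sqrt ((s ^ 2 - t) / (s ^ 2 - 1)) ^ m) ^ 2
        = t * ((s ^ 2 - t) / (s ^ 2 - 1)) ^ m := by
      rw [mul_pow, ← pow_mul, mul_comm m 2, pow_mul,
        Real.sq_sqrt h0t, Real.sq_sqrt (le_of_lt (div_pos (by linarith) hD))]
    have h1lt : 1 < t * ((s ^ 2 - t) / (s ^ 2 - 1)) ^ m := by
      rw [div_pow, ← mul_div_assoc, lt_div_iff₀ (pow_pos hD m), one_mul]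
      exact htv
    nlinarith [mul_nonneg hann (pow_nonneg hbnn m)]

set_option maxHeartbeats 2000000 in
private lemma john_main (n : ℕ) (hn : 1 ≤ n)
    (N : EuclideanSpace ℝ (Fin n) → ℝ)
    (hN0 : ∀ x, N x = 0 ↔ x = 0)
    (hNs : ∀ (a : ℝ) (x), N (a • x) = |a| * N x)
    (hNt : ∀ x y, N (x + y) ≤ N x + N y) :
    ∃ e : EuclideanSpace ℝ (Fin n) ≃ₗ[ℝ] EuclideanSpace ℝ (Fin n),
      (∀ x, N x ≤ ‖e.symm x‖) ∧ (∀ x, ‖e.symm x‖ ≤ Real.sqrt n * N x) := by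
  classical
  haveI : NeZero n := ⟨by omega⟩
  -- basic facts about N
  have hN0z : N 0 = 0 := (hN0 0).2 rfl
  have hNneg : ∀ x : (EuclideanSpace ℝ (Fin n)), N (-x) = N x := by
    intro x
    rw [show -x = (-1 : ℝ) • x by simp, hNs]
    simp
  have hNnn : ∀ x : (EuclideanSpace ℝ (Fin n)), 0 ≤ N x := by
    intro x
    have h := hNt x (-x)
    rw [add_neg_cancel, hN0z, hNneg] at h
    linarith
  -- upper bound : N x ≤ C * ‖x‖
  set o₀ : OrthonormalBasis (Fin n) ℝ (EuclideanSpace ℝ (Fin n)) := EuclideanSpace.basisFun (Fin n) ℝ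
  set C : ℝ := ∑ i, N (o₀ i) with hCdef
  have hC0 : 0 < C := by
    have h1 : ∀ i, 0 ≤ N (o₀ i) := fun i => hNnn _
    have h2 : 0 < N (o₀ 0) := by
      rcases lt_or_eq_of_le (hNnn (o₀ 0)) with h | h
      · exact h
      · exfalso
        have : o₀ 0 = 0 := (hN0 _).1 h.symm
        have hb : ‖o₀ 0‖ = 1 := o₀.orthonormal.1 0
        rw [this] at hb
        simp at hb
    exact Finset.sum_pos' (fun i _ => h1 i) ⟨0, Finset.mem_univ 0, h2⟩
  have hCb : ∀ x : (EuclideanSpace ℝ (Fin n)), N x ≤ C * ‖x‖ := by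
    intro x
    have hrepr : x = ∑ i, x i • o₀ i := by
      have := o₀.sum_repr' x
      simpa [o₀, EuclideanSpace.inner_single_left] using this.symm
    calc N x = N (∑ i, x i • o₀ i) := by rw [← hrepr]
      _ ≤ ∑ i, N (x i • o₀ i) := johnN_sum_le N hN0z hNt _ _
      _ = ∑ i, |x i| * N (o₀ i) := by simp [hNs]
      _ ≤ ∑ i, ‖x‖ * N (o₀ i) := by
          apply Finset.sum_le_sum
          intro i _
          apply mul_le_mul_of_nonneg_right _ (hNnn _)
          calc |x i| = Real.sqrt ((x i) ^ 2) := (Real.sqrt_sq_eq_abs _).symm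
            _ ≤ Real.sqrt (∑ j, (x j) ^ 2) := by
                apply Real.sqrt_le_sqrt
                exact Finset.single_le_sum (fun j _ => sq_nonneg (x j)) (Finset.mem_univ i)
            _ = ‖x‖ := by
                rw [EuclideanSpace.norm_eq]
                congr 1
                apply Finset.sum_congr rfl
                intro j _
                rw [Real.norm_eq_abs, sq_abs]
      _ = C * ‖x‖ := by rw [← Finset.mul_sum, mul_comm]
  -- N is continuous
  have hNcont : Continuous N := by
    apply (LipschitzWith.of_dist_le_mul (K := Real.toNNReal C) ?_).continuous
    intro x y
    have h1 : N x ≤ N y + C * ‖x - y‖ := by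
      have := hNt y (x - y)
      rw [add_sub_cancel] at this
      linarith [hCb (x - y)]
    have h2 : N y ≤ N x + C * ‖x - y‖ := by
      have h3 := hNt x (y - x)
      rw [add_sub_cancel] at h3
      have h4 := hCb (y - x)
      rw [norm_sub_rev] at h4
      linarith
    rw [Real.dist_eq, Real.coe_toNNReal C (le_of_lt hC0), dist_eq_norm]
    rw [abs_le]
    constructor <;> linarith
  -- lower bound : c * ‖x‖ ≤ N x
  obtain ⟨c, hc0, hcb⟩ : ∃ c, 0 < c ∧ ∀ x : (EuclideanSpace ℝ (Fin n)), c * ‖x‖ ≤ N x := by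
    have hsc : IsCompact (Metric.sphere (0 : (EuclideanSpace ℝ (Fin n))) 1) := isCompact_sphere 0 1
    have hne : (Metric.sphere (0 : (EuclideanSpace ℝ (Fin n))) 1).Nonempty := by
      refine ⟨EuclideanSpace.single 0 1, ?_⟩
      simp [EuclideanSpace.norm_single]
    obtain ⟨z, hz, hzmin⟩ := hsc.exists_isMinOn hne hNcont.continuousOn
    have hz1 : ‖z‖ = 1 := by simpa using hz
    have hzne : z ≠ 0 := by
      intro h
      rw [h] at hz1
      simp at hz1
    have hNz : 0 < N z := by
      rcases lt_or_eq_of_le (hNnn z) with h | h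
      · exact h
      · exact absurd ((hN0 z).1 h.symm) hzne
    refine ⟨N z, hNz, ?_⟩
    intro x
    rcases eq_or_ne x 0 with rfl | hx
    · simp [hN0z]
    · have hxn : 0 < ‖x‖ := norm_pos_iff.2 hx
      have hmem : ‖x‖⁻¹ • x ∈ Metric.sphere (0 : (EuclideanSpace ℝ (Fin n))) 1 := by
        simp [norm_smul, abs_of_pos (inv_pos.2 hxn), inv_mul_cancel₀ (ne_of_gt hxn)]
      have hmin : N z ≤ N (‖x‖⁻¹ • x) := hzmin hmem
      rw [hNs, abs_of_pos (inv_pos.2 hxn)] at hmin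
      calc N z * ‖x‖ ≤ (‖x‖⁻¹ * N x) * ‖x‖ := by
            apply mul_le_mul_of_nonneg_right hmin (le_of_lt hxn)
        _ = N x := by field_simp
  -- the compact set of admissible maps
  set S : Set ((EuclideanSpace ℝ (Fin n)) →L[ℝ] (EuclideanSpace ℝ (Fin n))) := {T | ∀ u, N (T u) ≤ ‖u‖} with hSdef
  have hSclosed : IsClosed S := by
    have : S = ⋂ u : (EuclideanSpace ℝ (Fin n)), {T : (EuclideanSpace ℝ (Fin n)) →L[ℝ] (EuclideanSpace ℝ (Fin n)) | N (T u) ≤ ‖u‖} := by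
      ext T
      simp [S, Set.mem_iInter]
    rw [this]
    apply isClosed_iInter
    intro u
    exact isClosed_le (hNcont.comp (ContinuousLinearMap.apply ℝ (EuclideanSpace ℝ (Fin n)) u).continuous)
      continuous_const
  have hSbdd : Bornology.IsBounded S := by
    apply (Metric.isBounded_closedBall (x := (0 : (EuclideanSpace ℝ (Fin n)) →L[ℝ] (EuclideanSpace ℝ (Fin n)))) (r := c⁻¹)).subset
    intro T hT
    rw [Metric.mem_closedBall, dist_zero_right]
    apply ContinuousLinearMap.opNorm_le_bound _ (le_of_lt (inv_pos.2 hc0))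
    intro u
    have h1 := hcb (T u)
    have h2 := hT u
    rw [inv_mul_eq_div, le_div_iff₀ hc0]
    nlinarith [h1, h2]
  have hScompact : IsCompact S := Metric.isCompact_of_isClosed_isBounded hSclosed hSbdd
  have hmemS : (C⁻¹ • ContinuousLinearMap.id ℝ (EuclideanSpace ℝ (Fin n))) ∈ S := by
    intro u
    have : (C⁻¹ • ContinuousLinearMap.id ℝ (EuclideanSpace ℝ (Fin n))) u = C⁻¹ • u := rfl
    rw [this, hNs, abs_of_pos (inv_pos.2 hC0)]
    rw [inv_mul_le_iff₀ hC0]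
    exact hCb u
  -- maximize |det| over S
  obtain ⟨T₀, hT₀S, hT₀max⟩ := hScompact.exists_isMaxOn ⟨_, hmemS⟩
    ((continuous_abs.comp ContinuousLinearMap.continuous_det).continuousOn)
  have hTS : ∀ u, N (T₀ u) ≤ ‖u‖ := hT₀S
  have hfinrank : Module.finrank ℝ (EuclideanSpace ℝ (Fin n)) = n := finrank_euclideanSpace_fin
  have hdet0 : 0 < |(T₀ : (EuclideanSpace ℝ (Fin n)) →ₗ[ℝ] (EuclideanSpace ℝ (Fin n))).det| := by
    have h1 : |((C⁻¹ • ContinuousLinearMap.id ℝ (EuclideanSpace ℝ (Fin n)) : (EuclideanSpace ℝ (Fin n)) →L[ℝ] (EuclideanSpace ℝ (Fin n))) : (EuclideanSpace ℝ (Fin n)) →ₗ[ℝ] (EuclideanSpace ℝ (Fin n))).det|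
        ≤ |(T₀ : (EuclideanSpace ℝ (Fin n)) →ₗ[ℝ] (EuclideanSpace ℝ (Fin n))).det| := hT₀max hmemS
    have h2 : ((C⁻¹ • ContinuousLinearMap.id ℝ (EuclideanSpace ℝ (Fin n)) : (EuclideanSpace ℝ (Fin n)) →L[ℝ] (EuclideanSpace ℝ (Fin n))) : (EuclideanSpace ℝ (Fin n)) →ₗ[ℝ] (EuclideanSpace ℝ (Fin n))).det
        = (C⁻¹) ^ n := by
      rw [ContinuousLinearMap.coe_smul, ContinuousLinearMap.coe_id, LinearMap.det_smul,
        LinearMap.det_id, hfinrank, mul_one]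
    rw [h2] at h1
    have h3 : 0 < |(C⁻¹) ^ n| := by positivity
    linarith
  have hdetne : (T₀ : (EuclideanSpace ℝ (Fin n)) →ₗ[ℝ] (EuclideanSpace ℝ (Fin n))).det ≠ 0 := by
    intro h
    rw [h] at hdet0
    simp at hdet0
  set e : (EuclideanSpace ℝ (Fin n)) ≃ₗ[ℝ] (EuclideanSpace ℝ (Fin n)) := LinearMap.equivOfDetNeZero _ hdetne with hedef
  have he : ∀ x, e x = T₀ x := fun _ => rfl
  refine ⟨e, ?_, ?_⟩
  · -- N x ≤ ‖e.symm x‖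
    intro x
    have h := hTS (e.symm x)
    rwa [← he, e.apply_symm_apply] at h
  · -- ‖e.symm x‖ ≤ √n * N x
    by_contra hcon
    push_neg at hcon
    obtain ⟨p, hp⟩ := hcon
    have hNp : 0 < N p := by
      rcases lt_or_eq_of_le (hNnn p) with h | h
      · exact h
      · exfalso
        have hp0 : p = 0 := (hN0 p).1 h.symm
        rw [hp0, hN0z, mul_zero] at hp
        simp at hp
    set q : (EuclideanSpace ℝ (Fin n)) := e.symm ((N p)⁻¹ • p) with hqdef
    clear_value q
    set s : ℝ := ‖q‖ with hsdef
    clear_value s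
    have hTq : T₀ q = (N p)⁻¹ • p := by rw [hqdef, ← he, e.apply_symm_apply]
    have hNTq : N (T₀ q) = 1 := by
      rw [hTq, hNs, abs_of_pos (inv_pos.2 hNp), inv_mul_cancel₀ (ne_of_gt hNp)]
    have hsn : Real.sqrt n < s := by
      have h1 : q = (N p)⁻¹ • e.symm p := by rw [hqdef, map_smul]
      have h2 : s = (N p)⁻¹ * ‖e.symm p‖ := by
        rw [hsdef, h1, norm_smul, Real.norm_eq_abs, abs_of_pos (inv_pos.2 hNp)]
      rw [h2, lt_inv_mul_iff₀ hNp]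
      calc N p * Real.sqrt n = Real.sqrt n * N p := by ring
        _ < ‖e.symm p‖ := hp
    have hsqn : 0 ≤ Real.sqrt (n : ℝ) := Real.sqrt_nonneg _
    have h1n : (1 : ℝ) ≤ Real.sqrt n := by
      rw [show (1:ℝ) = Real.sqrt 1 by simp]
      apply Real.sqrt_le_sqrt
      exact_mod_cast hn
    have hs1 : 1 < s := lt_of_le_of_lt h1n hsn
    have hs0 : 0 < s := lt_trans one_pos hs1
    have hs2 : (n : ℝ) < s ^ 2 := by
      have := Real.sq_sqrt (show (0:ℝ) ≤ n by positivity)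
      nlinarith [hsn, hsqn]
    obtain ⟨a, b, ha1, has, hb, hb2, hab⟩ := john_choose_ab (m := n - 1) hs1 (by
      have : ((n - 1 : ℕ) : ℝ) = (n : ℝ) - 1 := by
        rw [Nat.cast_sub hn]
        simp
      rw [this]
      linarith)
    have ha0 : 0 < a := lt_of_lt_of_le one_pos ha1
    set e₁ : (EuclideanSpace ℝ (Fin n)) := s⁻¹ • q with he₁def
    clear_value e₁
    have he₁ : ‖e₁‖ = 1 := by
      rw [he₁def, norm_smul, Real.norm_eq_abs, abs_of_pos (inv_pos.2 hs0), ← hsdef,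
        inv_mul_cancel₀ (ne_of_gt hs0)]
    have hq2 : s • e₁ = q := by
      rw [he₁def, smul_smul, mul_inv_cancel₀ (ne_of_gt hs0), one_smul]
    have he₁self : ⟪e₁, e₁⟫ = 1 := by
      rw [real_inner_self_eq_norm_sq, he₁]
      norm_num
    set A : (EuclideanSpace ℝ (Fin n)) →ₗ[ℝ] (EuclideanSpace ℝ (Fin n)) := b • LinearMap.id + (a - b) • ((innerₛₗ ℝ e₁).smulRight e₁)
      with hAdef
    clear_value A
    have hA : ∀ u, A u = b • u + ((a - b) * ⟪e₁, u⟫) • e₁ := by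
      intro u
      simp [hAdef, LinearMap.smulRight_apply, smul_smul]
    -- membership of the perturbed map
    have hmemA : ∀ u : (EuclideanSpace ℝ (Fin n)), ‖u‖ ≤ 1 → N (T₀ (A u)) ≤ 1 := by
      intro u hu
      set w0 : ℝ := ⟪e₁, u⟫ with hw0def
      clear_value w0
      set u' : (EuclideanSpace ℝ (Fin n)) := u - w0 • e₁ with hu'def
      clear_value u'
      have horth : ⟪e₁, u'⟫ = 0 := by
        rw [hu'def, inner_sub_right, real_inner_smul_right, he₁self]
        simp [hw0def]
      have hdecomp : u = w0 • e₁ + u' := by rw [hu'def]; abel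
      have hpyth : w0 ^ 2 + ‖u'‖ ^ 2 = ‖u‖ ^ 2 := by
        have h := norm_add_sq_real (w0 • e₁) u'
        rw [← hdecomp] at h
        rw [real_inner_smul_left, horth, norm_smul, Real.norm_eq_abs, he₁] at h
        rw [h]
        rw [mul_one, sq_abs]
        ring
      have hell : (a * |w0|) ^ 2 * b ^ 2 + (b * ‖u'‖) ^ 2 * a ^ 2 ≤ a ^ 2 * b ^ 2 := by
        have h1 : w0 ^ 2 + ‖u'‖ ^ 2 ≤ 1 := by
          rw [hpyth]
          nlinarith [norm_nonneg u]
        have h2 : 0 ≤ a ^ 2 * b ^ 2 := by positivity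
        nlinarith [sq_abs w0, mul_pos (mul_pos ha0 ha0) (mul_pos hb hb)]
      obtain ⟨l, hl0, hl1, hlkey⟩ := john_key_lambda hs1 ha1 has hb hb2
        (mul_nonneg (le_of_lt ha0) (abs_nonneg w0)) (mul_nonneg (le_of_lt hb) (norm_nonneg u')) hell
      set σ : ℝ := if 0 ≤ w0 then 1 else -1 with hσdef
      clear_value σ
      have hσw : σ * w0 = |w0| := by
        rw [hσdef]
        split
        · rw [one_mul, abs_of_nonneg (by assumption)]
        · rw [abs_of_neg (by linarith [lt_of_not_ge (by assumption)])]
          ring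
      have hσ2 : σ ^ 2 = 1 := by
        rw [hσdef]; split <;> norm_num
      have hσabs : |σ| = 1 := by
        rw [hσdef]; split <;> norm_num
      set z : (EuclideanSpace ℝ (Fin n)) := A u - (l * σ * s) • e₁ with hzdef
      clear_value z
      have hAu : A u = (a * w0) • e₁ + b • u' := by
        rw [hA u, ← hw0def, hu'def]
        module
      have hz : z = (σ * (a * |w0| - l * s)) • e₁ + b • u' := by
        rw [hzdef, hAu, ← hσw]
        have : σ * (a * (σ * w0) - l * s) = a * w0 * σ ^ 2 - σ * l * s := by ring
        rw [this, hσ2]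
        module
      have hznorm : ‖z‖ ^ 2 = (a * |w0| - l * s) ^ 2 + (b * ‖u'‖) ^ 2 := by
        rw [hz]
        rw [norm_add_sq_real, real_inner_smul_left, real_inner_smul_right, horth]
        rw [norm_smul, norm_smul, Real.norm_eq_abs, Real.norm_eq_abs, he₁, mul_one]
        rw [abs_mul, hσabs, one_mul]
        rw [mul_pow, sq_abs, mul_pow, sq_abs]
        ring
      have hzle : ‖z‖ ≤ 1 - l := by
        have h1 : ‖z‖ ^ 2 ≤ (1 - l) ^ 2 := by rw [hznorm]; exact hlkey
        nlinarith [norm_nonneg z]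
      have hAuz : A u = z + (l * σ) • q := by
        rw [hzdef, ← hq2, smul_smul]
        abel
      calc N (T₀ (A u)) = N (T₀ z + (l * σ) • T₀ q) := by rw [hAuz, map_add, map_smul]
        _ ≤ N (T₀ z) + N ((l * σ) • T₀ q) := hNt _ _
        _ = N (T₀ z) + |l * σ| * N (T₀ q) := by rw [hNs]
        _ ≤ (1 - l) + l * 1 := by
            have h1 : N (T₀ z) ≤ ‖z‖ := hTS z
            have h2 : |l * σ| = l := by
              rw [abs_mul, hσabs, mul_one, abs_of_nonneg hl0]
            rw [h2, hNTq]
            linarith [hzle]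
        _ = 1 := by ring
    -- T₀ ∘ A belongs to S
    set Ac : (EuclideanSpace ℝ (Fin n)) →L[ℝ] (EuclideanSpace ℝ (Fin n)) := LinearMap.toContinuousLinearMap A with hAcdef
    have hAc : ∀ u, Ac u = A u := fun _ => rfl
    have hT'S : T₀.comp Ac ∈ S := by
      intro u
      rcases eq_or_ne u 0 with rfl | hu
      · simp [hN0z]
      · have hun : 0 < ‖u‖ := norm_pos_iff.2 hu
        have h := hmemA (‖u‖⁻¹ • u) (by
          rw [norm_smul, Real.norm_eq_abs, abs_of_pos (inv_pos.2 hun),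
            inv_mul_cancel₀ (ne_of_gt hun)])
        rw [map_smul, map_smul, hNs, abs_of_pos (inv_pos.2 hun)] at h
        rw [inv_mul_le_iff₀ hun, mul_one] at h
        exact h
    -- orthonormal basis with first vector e₁
    have hcard : Module.finrank ℝ (EuclideanSpace ℝ (Fin n)) = Fintype.card (Fin n) := by
      rw [hfinrank, Fintype.card_fin]
    have horth1 : Orthonormal ℝ (({0} : Set (Fin n)).restrict (fun _ => e₁)) := by
      constructor
      · intro i
        exact he₁
      · intro i j hij
        exfalso
        apply hij
        have hi := i.2
        have hj := j.2
        rw [Set.mem_singleton_iff] at hi hj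
        exact Subtype.ext (hi.trans hj.symm)
    obtain ⟨o, ho⟩ := horth1.exists_orthonormalBasis_extension_of_card_eq hcard
    have ho0 : o 0 = e₁ := ho 0 rfl
    have hdiag : ∀ i, A (o i) = (if i = 0 then a else b) • o i := by
      intro i
      rcases eq_or_ne i 0 with rfl | hi
      · rw [ho0, if_pos rfl, hA, he₁self]
        module
      · rw [if_neg hi, hA]
        have : ⟪e₁, o i⟫ = 0 := by
          rw [← ho0]
          exact o.orthonormal.2 (Ne.symm hi)
        rw [this]
        module
    have hdetA : A.det = a * b ^ (n - 1) := by
      rw [← LinearMap.det_toMatrix o.toBasis]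
      have hmx : LinearMap.toMatrix o.toBasis o.toBasis A
          = Matrix.diagonal (fun i => if i = 0 then a else b) := by
        ext i j
        rw [LinearMap.toMatrix_apply, OrthonormalBasis.coe_toBasis, hdiag]
        rw [show o j = o.toBasis j by rw [OrthonormalBasis.coe_toBasis]]
        rw [map_smul, Module.Basis.repr_self]
        rcases eq_or_ne i j with rfl | hij
        · rw [Matrix.diagonal_apply_eq]
          split <;> simp
        · rw [Matrix.diagonal_apply_ne _ hij]
          split <;> simp [Finsupp.single_apply, Ne.symm hij]
      rw [hmx, Matrix.det_diagonal]
      rw [← Finset.mul_prod_erase _ _ (Finset.mem_univ (0 : Fin n)), if_pos rfl]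
      congr 1
      rw [Finset.prod_congr rfl (fun i hi => if_neg (Finset.ne_of_mem_erase hi))]
      rw [Finset.prod_const, Finset.card_erase_of_mem (Finset.mem_univ _),
        Finset.card_univ, Fintype.card_fin]
    -- contradiction with maximality
    have hbpow : 0 < a * b ^ (n - 1) := mul_pos ha0 (pow_pos hb _)
    have hdetcomp : |((T₀.comp Ac : (EuclideanSpace ℝ (Fin n)) →L[ℝ] (EuclideanSpace ℝ (Fin n))) : (EuclideanSpace ℝ (Fin n)) →ₗ[ℝ] (EuclideanSpace ℝ (Fin n))).det|
        = |(T₀ : (EuclideanSpace ℝ (Fin n)) →ₗ[ℝ] (EuclideanSpace ℝ (Fin n))).det| * (a * b ^ (n - 1)) := by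
      rw [ContinuousLinearMap.toLinearMap_comp, LinearMap.det_comp]
      rw [show (Ac : (EuclideanSpace ℝ (Fin n)) →ₗ[ℝ] (EuclideanSpace ℝ (Fin n))) = A from rfl, hdetA, abs_mul,
        abs_of_pos hbpow]
    have hle : |LinearMap.det ((T₀.comp Ac : (EuclideanSpace ℝ (Fin n)) →L[ℝ] (EuclideanSpace ℝ (Fin n))) : (EuclideanSpace ℝ (Fin n)) →ₗ[ℝ] (EuclideanSpace ℝ (Fin n)))|
        ≤ |LinearMap.det (T₀ : (EuclideanSpace ℝ (Fin n)) →ₗ[ℝ] (EuclideanSpace ℝ (Fin n)))| := hT₀max hT'S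
    rw [hdetcomp] at hle
    nlinarith [hdet0, hab, hle]

/-- For every norm `N` on `ℝⁿ` there is an inner product on `ℝⁿ` whose associated
Euclidean norm `|x| = √(B x x)` satisfies `|x| ≤ N x ≤ √n * |x|` for all `x`.
In particular the Banach–Mazur distance from `(ℝⁿ, N)` to `ℓ²ₙ` is at most `√n`. -/
theorem exists_inner_product_sqrt_comparison (n : ℕ) (hn : 1 ≤ n)
    (N : (Fin n → ℝ) → ℝ)
    (hN0 : ∀ x, N x = 0 ↔ x = 0)
    (hNs : ∀ (a : ℝ) (x), N (a • x) = |a| * N x)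
    (hNt : ∀ x y, N (x + y) ≤ N x + N y) :
    ∃ B : (Fin n → ℝ) →ₗ[ℝ] (Fin n → ℝ) →ₗ[ℝ] ℝ,
      (∀ x y, B x y = B y x) ∧
      (∀ x, x ≠ 0 → 0 < B x x) ∧
      (∀ x, Real.sqrt (B x x) ≤ N x ∧ N x ≤ Real.sqrt n * Real.sqrt (B x x)) := by
  obtain ⟨e, h1, h2⟩ := john_main n hn (fun x => N (WithLp.ofLp x))
    (fun x => (hN0 _).trans (by constructor <;> intro h <;> simp_all)) (fun a x => hNs a _)
    (fun x y => hNt _ _)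
  set f : (Fin n → ℝ) →ₗ[ℝ] EuclideanSpace ℝ (Fin n) :=
    (e.symm.toLinearMap : EuclideanSpace ℝ (Fin n) →ₗ[ℝ] EuclideanSpace ℝ (Fin n)) ∘ₗ
      (WithLp.linearEquiv 2 ℝ (Fin n → ℝ)).symm.toLinearMap with hfdef
  have h1 : ∀ x, N x ≤ ‖f x‖ := fun x => h1 (WithLp.toLp 2 x)
  have h2 : ∀ x, ‖f x‖ ≤ Real.sqrt n * N x := fun x => h2 (WithLp.toLp 2 x)
  have hn0 : (0 : ℝ) < n := by exact_mod_cast hn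
  have hsq : 0 < Real.sqrt n := Real.sqrt_pos.2 hn0
  refine ⟨LinearMap.mk₂ ℝ (fun x y => (n : ℝ)⁻¹ * ⟪f x, f y⟫)
    (fun m₁ m₂ y => by simp only [map_add, inner_add_left]; ring)
    (fun c m y => by simp only [map_smul, real_inner_smul_left, smul_eq_mul]; ring)
    (fun x y₁ y₂ => by simp only [map_add, inner_add_right]; ring)
    (fun c x y => by simp only [map_smul, real_inner_smul_right, smul_eq_mul]; ring), ?_, ?_, ?_⟩
  · intro x y
    simp only [LinearMap.mk₂_apply]
    rw [real_inner_comm]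
  · intro x hx
    have hfx : f x ≠ 0 := by
      intro h
      apply hx
      exact congrArg WithLp.ofLp (e.symm.injective (show e.symm (WithLp.toLp 2 x) = e.symm 0 by rw [map_zero]; exact h))
    simp only [LinearMap.mk₂_apply]
    have hfxn : 0 < ‖f x‖ := norm_pos_iff.2 hfx
    rw [real_inner_self_eq_norm_sq]
    positivity
  · intro x
    have hBxx : (LinearMap.mk₂ ℝ (fun x y => (n : ℝ)⁻¹ * ⟪f x, f y⟫)
        (fun m₁ m₂ y => by simp only [map_add, inner_add_left]; ring)
        (fun c m y => by simp only [map_smul, real_inner_smul_left, smul_eq_mul]; ring)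
        (fun x y₁ y₂ => by simp only [map_add, inner_add_right]; ring)
        (fun c x y => by simp only [map_smul, real_inner_smul_right, smul_eq_mul]; ring)) x x
        = (n : ℝ)⁻¹ * ‖f x‖ ^ 2 := by
      simp only [LinearMap.mk₂_apply]
      rw [real_inner_self_eq_norm_sq]
    rw [hBxx]
    have hsqrt : Real.sqrt ((n : ℝ)⁻¹ * ‖f x‖ ^ 2) = (Real.sqrt n)⁻¹ * ‖f x‖ := by
      rw [Real.sqrt_mul (by positivity), Real.sqrt_sq (norm_nonneg _), Real.sqrt_inv]
    rw [hsqrt]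
    constructor
    · rw [inv_mul_le_iff₀ hsq]
      exact (h2 x).trans_eq (by ring)
    · rw [show Real.sqrt n * ((Real.sqrt n)⁻¹ * ‖f x‖) = ‖f x‖ by
        field_simp]
      exact h1 x
end

section
/- (Volume of the unit ball of a direct sum) Let n, m ≥ 1, let ‖·‖_E be a norm on ℝⁿ and ‖·‖_F a norm on ℝᵐ, and let ς be a norm on ℝ² that is invariant under sign changes of the coordinates and satisfies ς(1,0) = ς(0,1) = 1. Equip ℝⁿ × ℝᵐ with the norm ‖(x,y)‖ := ς(‖x‖_E, ‖y‖_F) and with the product of the Lebesgue measures. Then the ratio vol({(x,y) : ‖(x,y)‖ ≤ 1}) / ( vol({x : ‖x‖_E ≤ 1}) · vol({y : ‖y‖_F ≤ 1}) ) lies between binom(n+m, n)^{-1} and 1. -/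
open MeasureTheory

private theorem rawNorm_sum_le {ι V : Type*} [AddCommGroup V] (N : V → ℝ) (h0 : N 0 = 0)
    (ht : ∀ x y, N (x + y) ≤ N x + N y) (s : Finset ι) (g : ι → V) :
    N (∑ i ∈ s, g i) ≤ ∑ i ∈ s, N (g i) := by
  classical
  induction s using Finset.cons_induction with
  | empty => simp [h0]
  | cons i s hi ih =>
    rw [Finset.sum_cons, Finset.sum_cons]
    exact (ht _ _).trans (by linarith)

private theorem vol_ball_eq {E : Type*} [AddCommGroup E] [Module ℝ E] [FiniteDimensional ℝ E]
    [TopologicalSpace E] [IsTopologicalAddGroup E] [T2Space E] [ContinuousSMul ℝ E]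
    [MeasureSpace E] [BorelSpace E] [Nontrivial E]
    [(volume : Measure E).IsAddHaarMeasure]
    (N : E → ℝ) (h1 : N 0 = 0) (h2 : ∀ x, N (-x) = N x)
    (h3 : ∀ x y, N (x + y) ≤ N x + N y) (h4 : ∀ x, N x = 0 → x = 0)
    (h5 : ∀ (r : ℝ) x, N (r • x) ≤ |r| * N x) :
    volume {x : E | N x ≤ 1} =
      ENNReal.ofReal ((∫ x : E, Real.exp (- N x)) /
        (Nat.factorial (Module.finrank ℝ E) : ℝ)) := by
  rw [MeasureTheory.measure_le_eq_lt volume h1 h2 h3 (fun hx => h4 _ hx) h5 1,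
    MeasureTheory.measure_lt_one_eq_integral_div_gamma volume h1 h2 h3 (fun hx => h4 _ hx) h5
      one_pos]
  simp_rw [Real.rpow_one]
  rw [div_one, Real.Gamma_nat_eq_factorial]

/-- **Volume of the unit ball of a direct sum.** For norms `NE` on `ℝⁿ`, `NF` on `ℝᵐ` and
a norm `ς` on `ℝ²` invariant under sign changes with `ς (1,0) = ς (0,1) = 1`, the volume
of the unit ball of the norm `(x, y) ↦ ς (NE x, NF y)` on `ℝⁿ × ℝᵐ` lies between
`binom (n+m) n ⁻¹` and `1` times the product of the volumes of the unit balls of `NE`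
and `NF`. -/
theorem volume_ratio_direct_sum (n m : ℕ) (hn : 1 ≤ n) (hm : 1 ≤ m)
    (NE : (Fin n → ℝ) → ℝ)
    (hNE0 : ∀ x, NE x = 0 ↔ x = 0)
    (hNEs : ∀ (a : ℝ) (x), NE (a • x) = |a| * NE x)
    (hNEt : ∀ x y, NE (x + y) ≤ NE x + NE y)
    (NF : (Fin m → ℝ) → ℝ)
    (hNF0 : ∀ y, NF y = 0 ↔ y = 0)
    (hNFs : ∀ (a : ℝ) (y), NF (a • y) = |a| * NF y)
    (hNFt : ∀ y z, NF (y + z) ≤ NF y + NF z)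
    (ς : ℝ × ℝ → ℝ)
    (hς0 : ∀ q, ς q = 0 ↔ q = 0)
    (hςs : ∀ (a : ℝ) (q), ς (a • q) = |a| * ς q)
    (hςt : ∀ q r, ς (q + r) ≤ ς q + ς r)
    (hς_sign : ∀ a b : ℝ, ς (-a, b) = ς (a, b) ∧ ς (a, -b) = ς (a, b))
    (hς1 : ς (1, 0) = 1) (hς2 : ς (0, 1) = 1) :
    ((Nat.choose (n + m) n : ℝ))⁻¹ ≤
        (volume {z : (Fin n → ℝ) × (Fin m → ℝ) | ς (NE z.1, NF z.2) ≤ 1}).toReal /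
          ((volume {x : Fin n → ℝ | NE x ≤ 1}).toReal *
            (volume {y : Fin m → ℝ | NF y ≤ 1}).toReal) ∧
      (volume {z : (Fin n → ℝ) × (Fin m → ℝ) | ς (NE z.1, NF z.2) ≤ 1}).toReal /
          ((volume {x : Fin n → ℝ | NE x ≤ 1}).toReal *
            (volume {y : Fin m → ℝ | NF y ≤ 1}).toReal) ≤ 1 := by
  classical
  haveI : Nonempty (Fin n) := ⟨⟨0, hn⟩⟩
  haveI : Nonempty (Fin m) := ⟨⟨0, hm⟩⟩
  haveI : (volume : Measure ((Fin n → ℝ) × (Fin m → ℝ))).IsAddHaarMeasure := by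
    rw [MeasureTheory.Measure.volume_eq_prod]; exact Measure.prod.instIsAddHaarMeasure _ _
  -- Basic consequences of the norm axioms
  have hNE00 : NE 0 = 0 := (hNE0 0).mpr rfl
  have hNF00 : NF 0 = 0 := (hNF0 0).mpr rfl
  have hNEneg : ∀ x, NE (-x) = NE x := fun x => by
    rw [← neg_one_smul ℝ x, hNEs]; simp
  have hNFneg : ∀ y, NF (-y) = NF y := fun y => by
    rw [← neg_one_smul ℝ y, hNFs]; simp
  have hNEnn : ∀ x, 0 ≤ NE x := fun x => by
    have h := hNEt x (-x); simp [hNE00, hNEneg x] at h; linarith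
  have hNFnn : ∀ y, 0 ≤ NF y := fun y => by
    have h := hNFt y (-y); simp [hNF00, hNFneg y] at h; linarith
  have hςa : ∀ a : ℝ, ς (a, 0) = |a| := fun a => by
    have h : ((a : ℝ), (0 : ℝ)) = a • ((1 : ℝ), (0 : ℝ)) := by simp [Prod.smul_mk]
    rw [h, hςs, hς1, mul_one]
  have hςb : ∀ b : ℝ, ς (0, b) = |b| := fun b => by
    have h : ((0 : ℝ), (b : ℝ)) = b • ((0 : ℝ), (1 : ℝ)) := by simp [Prod.smul_mk]
    rw [h, hςs, hς2, mul_one]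
  -- Monotonicity of ς on the positive quadrant
  have mono1 : ∀ (b a a' : ℝ), 0 ≤ a → a ≤ a' → ς (a, b) ≤ ς (a', b) := by
    intro b a a' ha haa'
    rcases eq_or_lt_of_le (ha.trans haa') with h0 | h0
    · have ha0 : a = 0 := le_antisymm (h0 ▸ haa') ha
      rw [ha0, ← h0]
    · set l : ℝ := (1 + a / a') / 2 with hl
      have hd : a / a' ≤ 1 := (div_le_one h0).mpr haa'
      have hd0 : 0 ≤ a / a' := div_nonneg ha h0.le
      have hl0 : 0 ≤ l := by rw [hl]; linarith
      have hl1 : l ≤ 1 := by rw [hl]; linarith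
      have key : ((a : ℝ), b) = l • ((a' : ℝ), b) + (1 - l) • (-a', b) := by
        have e1 : l * a' + (1 - l) * (-a') = a := by
          have e : l * a' + (1 - l) * (-a') = (a / a') * a' := by rw [hl]; ring
          rw [e, div_mul_cancel₀ _ (ne_of_gt h0)]
        have e2 : l * b + (1 - l) * b = b := by ring
        rw [Prod.smul_mk, Prod.smul_mk, Prod.mk_add_mk, smul_eq_mul, smul_eq_mul,
          smul_eq_mul, smul_eq_mul, e1, e2]
      rw [key]
      calc ς (l • ((a' : ℝ), b) + (1 - l) • (-a', b))
          ≤ ς (l • ((a' : ℝ), b)) + ς ((1 - l) • (-a', b)) := hςt _ _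
        _ = l * ς (a', b) + (1 - l) * ς (-a', b) := by
            rw [hςs, hςs, abs_of_nonneg hl0, abs_of_nonneg (by linarith)]
        _ = ς (a', b) := by rw [(hς_sign a' b).1]; ring
  have mono2 : ∀ (a b b' : ℝ), 0 ≤ b → b ≤ b' → ς (a, b) ≤ ς (a, b') := by
    intro a b b' hb hbb'
    rcases eq_or_lt_of_le (hb.trans hbb') with h0 | h0
    · have hb0 : b = 0 := le_antisymm (h0 ▸ hbb') hb
      rw [hb0, ← h0]
    · set l : ℝ := (1 + b / b') / 2 with hl
      have hd : b / b' ≤ 1 := (div_le_one h0).mpr hbb'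
      have hd0 : 0 ≤ b / b' := div_nonneg hb h0.le
      have hl0 : 0 ≤ l := by rw [hl]; linarith
      have hl1 : l ≤ 1 := by rw [hl]; linarith
      have key : ((a : ℝ), b) = l • ((a : ℝ), b') + (1 - l) • (a, -b') := by
        have e1 : l * b' + (1 - l) * (-b') = b := by
          have e : l * b' + (1 - l) * (-b') = (b / b') * b' := by rw [hl]; ring
          rw [e, div_mul_cancel₀ _ (ne_of_gt h0)]
        have e2 : l * a + (1 - l) * a = a := by ring
        rw [Prod.smul_mk, Prod.smul_mk, Prod.mk_add_mk, smul_eq_mul, smul_eq_mul,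
          smul_eq_mul, smul_eq_mul, e2, e1]
      rw [key]
      calc ς (l • ((a : ℝ), b') + (1 - l) • (a, -b'))
          ≤ ς (l • ((a : ℝ), b')) + ς ((1 - l) • (a, -b')) := hςt _ _
        _ = l * ς (a, b') + (1 - l) * ς (a, -b') := by
            rw [hςs, hςs, abs_of_nonneg hl0, abs_of_nonneg (by linarith)]
        _ = ς (a, b') := by rw [(hς_sign a b').2]; ring
  have mono : ∀ a a' b b' : ℝ, 0 ≤ a → a ≤ a' → 0 ≤ b → b ≤ b' → ς (a, b) ≤ ς (a', b') :=
    fun a a' b b' ha haa hb hbb => (mono1 b a a' ha haa).trans (mono2 a' b b' hb hbb)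
  -- The two norms on the product
  set g : ((Fin n → ℝ) × (Fin m → ℝ)) → ℝ := fun z => ς (NE z.1, NF z.2) with hg
  set g1 : ((Fin n → ℝ) × (Fin m → ℝ)) → ℝ := fun z => NE z.1 + NF z.2 with hg1
  have g0 : g 0 = 0 := by
    show ς (NE 0, NF 0) = 0
    rw [hNE00, hNF00]
    exact (hς0 0).mpr rfl
  have gneg : ∀ z, g (-z) = g z := fun z => by
    show ς (NE (-z.1), NF (-z.2)) = _
    rw [hNEneg, hNFneg]
  have gtri : ∀ z w, g (z + w) ≤ g z + g w := by
    intro z w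
    calc ς (NE (z.1 + w.1), NF (z.2 + w.2))
        ≤ ς (NE z.1 + NE w.1, NF z.2 + NF w.2) :=
          mono _ _ _ _ (hNEnn _) (hNEt _ _) (hNFnn _) (hNFt _ _)
      _ = ς ((NE z.1, NF z.2) + (NE w.1, NF w.2)) := by rw [Prod.mk_add_mk]
      _ ≤ _ := hςt _ _
  have g4 : ∀ z, g z = 0 → z = 0 := by
    intro z hz
    have h := (hς0 _).mp hz
    rw [Prod.mk_eq_zero] at h
    exact Prod.ext ((hNE0 _).mp h.1) ((hNF0 _).mp h.2)
  have g5 : ∀ (r : ℝ) z, g (r • z) ≤ |r| * g z := by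
    intro r z
    show ς (NE (r • z.1), NF (r • z.2)) ≤ _
    rw [hNEs, hNFs]
    have h : ((|r| * NE z.1), (|r| * NF z.2)) = |r| • (NE z.1, NF z.2) := by
      simp [Prod.smul_mk]
    rw [h, hςs, abs_abs]
  have g10 : g1 0 = 0 := by show NE 0 + NF 0 = 0; rw [hNE00, hNF00, add_zero]
  have g1neg : ∀ z, g1 (-z) = g1 z := fun z => by
    show NE (-z.1) + NF (-z.2) = _
    rw [hNEneg, hNFneg]
  have g1tri : ∀ z w, g1 (z + w) ≤ g1 z + g1 w := by
    intro z w
    have h1 := hNEt z.1 w.1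
    have h2 := hNFt z.2 w.2
    show NE (z.1 + w.1) + NF (z.2 + w.2) ≤ (NE z.1 + NF z.2) + (NE w.1 + NF w.2)
    linarith
  have g14 : ∀ z, g1 z = 0 → z = 0 := by
    intro z hz
    have hz' : NE z.1 + NF z.2 = 0 := hz
    have h1 : NE z.1 = 0 := le_antisymm (by have := hNFnn z.2; linarith) (hNEnn _)
    have h2 : NF z.2 = 0 := le_antisymm (by have := hNEnn z.1; linarith) (hNFnn _)
    exact Prod.ext ((hNE0 _).mp h1) ((hNF0 _).mp h2)
  have g15 : ∀ (r : ℝ) z, g1 (r • z) ≤ |r| * g1 z := by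
    intro r z
    show NE (r • z.1) + NF (r • z.2) ≤ |r| * (NE z.1 + NF z.2)
    rw [hNEs, hNFs]
    exact le_of_eq (by ring)
  -- Volume formulas
  set IE : ℝ := ∫ x : Fin n → ℝ, Real.exp (-NE x) with hIE
  set IF : ℝ := ∫ y : Fin m → ℝ, Real.exp (-NF y) with hIF
  set IG : ℝ := ∫ z : (Fin n → ℝ) × (Fin m → ℝ), Real.exp (-g z) with hIG
  have hIEnn : 0 ≤ IE := integral_nonneg fun x => (Real.exp_pos _).le
  have hIFnn : 0 ≤ IF := integral_nonneg fun y => (Real.exp_pos _).le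
  have hIGnn : 0 ≤ IG := integral_nonneg fun z => (Real.exp_pos _).le
  have hVE : volume {x : Fin n → ℝ | NE x ≤ 1}
      = ENNReal.ofReal (IE / (n.factorial : ℝ)) := by
    have h := vol_ball_eq NE hNE00 hNEneg hNEt (fun x hx => (hNE0 x).mp hx)
      (fun r x => le_of_eq (hNEs r x))
    rwa [Module.finrank_fin_fun] at h
  have hVF : volume {y : Fin m → ℝ | NF y ≤ 1}
      = ENNReal.ofReal (IF / (m.factorial : ℝ)) := by
    have h := vol_ball_eq NF hNF00 hNFneg hNFt (fun y hy => (hNF0 y).mp hy)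
      (fun r y => le_of_eq (hNFs r y))
    rwa [Module.finrank_fin_fun] at h
  have hVG : volume {z : (Fin n → ℝ) × (Fin m → ℝ) | g z ≤ 1}
      = ENNReal.ofReal (IG / ((n + m).factorial : ℝ)) := by
    have h := vol_ball_eq g g0 gneg gtri g4 g5
    rwa [Module.finrank_prod, Module.finrank_fin_fun, Module.finrank_fin_fun] at h
  have hFub : (∫ z : (Fin n → ℝ) × (Fin m → ℝ), Real.exp (-g1 z)) = IE * IF := by
    show (∫ z : (Fin n → ℝ) × (Fin m → ℝ), Real.exp (-(NE z.1 + NF z.2))) = IE * IF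
    simp_rw [neg_add, Real.exp_add]
    rw [MeasureTheory.Measure.volume_eq_prod,
      integral_prod_mul (fun x => Real.exp (-NE x)) (fun y => Real.exp (-NF y))]
  have hVL : volume {z : (Fin n → ℝ) × (Fin m → ℝ) | g1 z ≤ 1}
      = ENNReal.ofReal ((IE * IF) / ((n + m).factorial : ℝ)) := by
    have h := vol_ball_eq g1 g10 g1neg g1tri g14 g15
    rwa [Module.finrank_prod, Module.finrank_fin_fun, Module.finrank_fin_fun, hFub] at h
  -- Positivity of the two unit balls
  have cube_pos : ∀ (k : ℕ) (N : (Fin k → ℝ) → ℝ), Nonempty (Fin k) →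
      N 0 = 0 → (∀ x, 0 ≤ N x) → (∀ (a : ℝ) x, N (a • x) = |a| * N x) →
      (∀ x y, N (x + y) ≤ N x + N y) →
      0 < volume {x : Fin k → ℝ | N x ≤ 1} := by
    intro k N _ hN00 hNnn hNs hNt
    set e : Fin k → (Fin k → ℝ) := fun i j => if i = j then 1 else 0 with he
    set C : ℝ := ∑ i : Fin k, N (e i) with hC
    have hC0 : 0 ≤ C := Finset.sum_nonneg fun i _ => hNnn _
    set ε : ℝ := (C + 1)⁻¹ with hε
    have hε0 : 0 < ε := by rw [hε]; positivity
    have hsub : (Set.pi Set.univ fun _ : Fin k => Set.Icc (-ε) ε) ⊆ {x | N x ≤ 1} := by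
      intro x hx
      simp only [Set.mem_pi, Set.mem_univ, forall_true_left, Set.mem_Icc] at hx
      have hxd : x = ∑ i : Fin k, x i • e i := pi_eq_sum_univ x
      have hle : N x ≤ ∑ i : Fin k, N (x i • e i) := by
        calc N x = N (∑ i : Fin k, x i • e i) := by rw [← hxd]
          _ ≤ _ := rawNorm_sum_le N hN00 hNt _ _
      have hbd : ∀ i : Fin k, N (x i • e i) ≤ ε * N (e i) := by
        intro i
        rw [hNs]
        refine mul_le_mul_of_nonneg_right ?_ (hNnn _)
        rw [abs_le]
        exact ⟨(hx i).1, (hx i).2⟩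
      have hεC : ε * C ≤ 1 := by
        have h1 : ε * C ≤ ε * (C + 1) := by
          refine mul_le_mul_of_nonneg_left (by linarith) hε0.le
        have h2 : ε * (C + 1) = 1 := by
          rw [hε, inv_mul_cancel₀ (by positivity)]
        linarith
      have : N x ≤ ε * C := by
        calc N x ≤ ∑ i : Fin k, N (x i • e i) := hle
          _ ≤ ∑ i : Fin k, ε * N (e i) := Finset.sum_le_sum fun i _ => hbd i
          _ = ε * C := by rw [hC, Finset.mul_sum]
      exact Set.mem_setOf.mpr (this.trans hεC)
    calc (0 : ENNReal) < volume (Set.pi Set.univ fun _ : Fin k => Set.Icc (-ε) ε) := by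
          rw [volume_pi_pi]
          refine CanonicallyOrderedAdd.prod_pos.mpr fun i _ => ?_
          rw [Real.volume_Icc, ENNReal.ofReal_pos]
          linarith
      _ ≤ _ := measure_mono hsub
  have hIEpos : 0 < IE := by
    have hp := cube_pos n NE ‹Nonempty (Fin n)› hNE00 hNEnn hNEs hNEt
    rw [hVE, ENNReal.ofReal_pos] at hp
    have hf : (0 : ℝ) < (n.factorial : ℝ) := by positivity
    have := mul_pos hp hf
    rwa [div_mul_cancel₀ _ (ne_of_gt hf)] at this
  have hIFpos : 0 < IF := by
    have hp := cube_pos m NF ‹Nonempty (Fin m)› hNF00 hNFnn hNFs hNFt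
    rw [hVF, ENNReal.ofReal_pos] at hp
    have hf : (0 : ℝ) < (m.factorial : ℝ) := by positivity
    have := mul_pos hp hf
    rwa [div_mul_cancel₀ _ (ne_of_gt hf)] at this
  -- Inclusions
  have hsub1 : {z : (Fin n → ℝ) × (Fin m → ℝ) | g1 z ≤ 1}
      ⊆ {z : (Fin n → ℝ) × (Fin m → ℝ) | g z ≤ 1} := by
    intro z hz
    have h := hςt (NE z.1, 0) (0, NF z.2)
    rw [Prod.mk_add_mk, add_zero, zero_add, hςa, hςb, abs_of_nonneg (hNEnn _),
      abs_of_nonneg (hNFnn _)] at h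
    exact Set.mem_setOf.mpr (h.trans hz)
  have hsub2 : {z : (Fin n → ℝ) × (Fin m → ℝ) | g z ≤ 1}
      ⊆ {x : Fin n → ℝ | NE x ≤ 1} ×ˢ {y : Fin m → ℝ | NF y ≤ 1} := by
    intro z hz
    have hz' : ς (NE z.1, NF z.2) ≤ 1 := hz
    constructor
    · have h := mono1 0 (NE z.1) (NE z.1) (hNEnn _) le_rfl
      have h2 : ς (NE z.1, 0) ≤ ς (NE z.1, NF z.2) :=
        mono2 (NE z.1) 0 (NF z.2) le_rfl (hNFnn _)
      rw [hςa, abs_of_nonneg (hNEnn _)] at h2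
      exact h2.trans hz'
    · have h2 : ς (0, NF z.2) ≤ ς (NE z.1, NF z.2) :=
        mono1 (NF z.2) 0 (NE z.1) le_rfl (hNEnn _)
      rw [hςb, abs_of_nonneg (hNFnn _)] at h2
      exact h2.trans hz'
  -- toReal computations
  have tE : (volume {x : Fin n → ℝ | NE x ≤ 1}).toReal = IE / (n.factorial : ℝ) := by
    rw [hVE, ENNReal.toReal_ofReal (by positivity)]
  have tF : (volume {y : Fin m → ℝ | NF y ≤ 1}).toReal = IF / (m.factorial : ℝ) := by
    rw [hVF, ENNReal.toReal_ofReal (by positivity)]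
  have tG : (volume {z : (Fin n → ℝ) × (Fin m → ℝ) | g z ≤ 1}).toReal
      = IG / ((n + m).factorial : ℝ) := by
    rw [hVG, ENNReal.toReal_ofReal (by positivity)]
  have hkey1 : IE * IF / ((n + m).factorial : ℝ)
      ≤ (volume {z : (Fin n → ℝ) × (Fin m → ℝ) | g z ≤ 1}).toReal := by
    have h := ENNReal.toReal_mono (by rw [hVG]; exact ENNReal.ofReal_ne_top)
      (measure_mono hsub1)
    rwa [hVL, ENNReal.toReal_ofReal (by positivity)] at h
  have hkey2 : (volume {z : (Fin n → ℝ) × (Fin m → ℝ) | g z ≤ 1}).toReal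
      ≤ (IE / (n.factorial : ℝ)) * (IF / (m.factorial : ℝ)) := by
    have hle : volume {z : (Fin n → ℝ) × (Fin m → ℝ) | g z ≤ 1}
        ≤ volume {x : Fin n → ℝ | NE x ≤ 1} * volume {y : Fin m → ℝ | NF y ≤ 1} := by
      calc volume {z : (Fin n → ℝ) × (Fin m → ℝ) | g z ≤ 1}
          ≤ volume ({x : Fin n → ℝ | NE x ≤ 1} ×ˢ {y : Fin m → ℝ | NF y ≤ 1}) :=
            measure_mono hsub2
        _ = _ := by rw [MeasureTheory.Measure.volume_eq_prod, MeasureTheory.Measure.prod_prod]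
    have h := ENNReal.toReal_mono
      (by rw [hVE, hVF]; exact ENNReal.mul_ne_top ENNReal.ofReal_ne_top ENNReal.ofReal_ne_top)
      hle
    rwa [ENNReal.toReal_mul, tE, tF] at h
  -- Final arithmetic
  have hfactN : (n + m).choose n * n.factorial * m.factorial = (n + m).factorial := by
    have h := Nat.choose_mul_factorial_mul_factorial (Nat.le_add_right n m)
    simpa [Nat.add_sub_cancel_left] using h
  have hfact : ((n + m).choose n : ℝ) * (n.factorial : ℝ) * (m.factorial : ℝ)
      = ((n + m).factorial : ℝ) := by exact_mod_cast hfactN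
  have hA : (0 : ℝ) < (n.factorial : ℝ) := by positivity
  have hB : (0 : ℝ) < (m.factorial : ℝ) := by positivity
  have hT : (0 : ℝ) < ((n + m).factorial : ℝ) := by positivity
  have hCc : (0 : ℝ) < ((n + m).choose n : ℝ) := by
    exact_mod_cast Nat.choose_pos (Nat.le_add_right n m)
  have hD : (0 : ℝ) < (IE / (n.factorial : ℝ)) * (IF / (m.factorial : ℝ)) := by positivity
  rw [tG] at hkey1 hkey2 ⊢
  rw [tE, tF]
  constructor
  · rw [le_div_iff₀ hD]
    have heq : (((n + m).choose n : ℝ))⁻¹ * ((IE / (n.factorial : ℝ)) * (IF / (m.factorial : ℝ)))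
        = IE * IF / ((n + m).factorial : ℝ) := by
      rw [← hfact]
      field_simp
    rw [heq]
    exact hkey1
  · rw [div_le_one hD]
    exact hkey2
end

section
/- (Exact volume ratio for ℓᵖ direct sums) Let n, m ≥ 1, let ‖·‖_E be a norm on ℝⁿ and ‖·‖_F a norm on ℝᵐ, let p ≥ 1, and equip ℝⁿ × ℝᵐ with the norm ‖(x,y)‖ := (‖x‖_E^p + ‖y‖_F^p)^{1/p} and the product Lebesgue measure. Then vol({(x,y) : ‖(x,y)‖ ≤ 1}) / ( vol({x : ‖x‖_E ≤ 1}) · vol({y : ‖y‖_F ≤ 1}) ) = Γ(1 + n/p) · Γ(1 + m/p) / Γ(1 + (n+m)/p). In particular this ratio depends only on n, m and p, not on the norms ‖·‖_E and ‖·‖_F. -/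
open MeasureTheory MeasureTheory.Measure Module ENNReal

theorem my_aux_pos {E : Type*} [AddCommGroup E] [Module ℝ E] [FiniteDimensional ℝ E]
    [mE : MeasurableSpace E] [tE : TopologicalSpace E] [IsTopologicalAddGroup E] [BorelSpace E]
    [T2Space E] [ContinuousSMul ℝ E]
    (μ : Measure E) [IsAddHaarMeasure μ] {g : E → ℝ} (h1 : g 0 = 0) (h2 : ∀ x, g (- x) = g x)
    (h3 : ∀ x y, g (x + y) ≤ g x + g y) (h4 : ∀ {x}, g x = 0 → x = 0)
    (h5 : ∀ r x, g (r • x) ≤ |r| * (g x)) :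
    0 < μ {x : E | g x < 1} := by
  letI F : Type _ := E
  letI : NormedAddCommGroup F :=
  { norm := g
    dist := fun x y => g (x - y)
    dist_self := by simp only [_root_.sub_self, h1, forall_const]
    dist_comm := fun _ _ => by show g (_ - _) = g (_ - _); rw [← h2, neg_sub]
    dist_triangle := fun x y z => by show g (x - z) ≤ g (x - y) + g (y - z); convert h3 (x - y) (y - z) using 1; rw [sub_add_sub_cancel]
    dist_eq := fun x y => by rw [← h2 (-x + y), neg_add, neg_neg, sub_eq_add_neg]
    edist := fun x y => .ofReal (g (x - y))
    edist_dist := fun _ _ => rfl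
    eq_of_dist_eq_zero := by convert fun _ _ h => eq_of_sub_eq_zero (h4 h) }
  letI : NormedSpace ℝ F :=
  { norm_smul_le := fun _ _ ↦ h5 _ _ }
  letI : TopologicalSpace F := UniformSpace.toTopologicalSpace
  letI : MeasurableSpace F := borel F
  have : BorelSpace F := { measurable_eq := rfl }
  let φ := @LinearEquiv.toContinuousLinearEquiv ℝ _ E _ _ tE _ _ F _ _ _ _ _ _ _ _ _
    (LinearEquiv.refl ℝ E : E ≃ₗ[ℝ] F)
  let ν : Measure F := @Measure.map E F mE _ φ μ
  have : IsAddHaarMeasure ν :=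
    @ContinuousLinearEquiv.isAddHaarMeasure_map E F ℝ ℝ _ _ _ _ _ _ tE _ _ _ _ _ _ _ mE _ _ _ φ μ _
  have key : μ {x : E | g x < 1} = ν (Metric.ball 0 1) := by
    rw [@Measure.map_apply E F mE _ μ φ _ _ measurableSet_ball]
    · congr!
      simp_rw [Metric.ball, dist_zero_right]
      rfl
    · refine @Continuous.measurable E F tE mE _ _ _ _ φ ?_
      exact @ContinuousLinearEquiv.continuous ℝ ℝ _ _ _ _ _ _ E tE _ F _ _ _ _ φ
  rw [key]
  exact Metric.measure_ball_pos ν 0 one_pos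

/-- **Exact volume ratio for `ℓᵖ` direct sums.** For norms `NE` on `ℝⁿ`, `NF` on `ℝᵐ` and
`p ≥ 1`, the volume of the unit ball of the norm `(x, y) ↦ (NE x ^ p + NF y ^ p)^(1/p)`
on `ℝⁿ × ℝᵐ` equals `Γ(1 + n/p) Γ(1 + m/p) / Γ(1 + (n+m)/p)` times the product of the
volumes of the unit balls of `NE` and `NF`. -/
theorem volume_ratio_lp_direct_sum (n m : ℕ) (hn : 1 ≤ n) (hm : 1 ≤ m)
    (NE : (Fin n → ℝ) → ℝ)
    (hNE0 : ∀ x, NE x = 0 ↔ x = 0)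
    (hNEs : ∀ (a : ℝ) (x), NE (a • x) = |a| * NE x)
    (hNEt : ∀ x y, NE (x + y) ≤ NE x + NE y)
    (NF : (Fin m → ℝ) → ℝ)
    (hNF0 : ∀ y, NF y = 0 ↔ y = 0)
    (hNFs : ∀ (a : ℝ) (y), NF (a • y) = |a| * NF y)
    (hNFt : ∀ y z, NF (y + z) ≤ NF y + NF z)
    (p : ℝ) (hp : 1 ≤ p) :
    (volume {z : (Fin n → ℝ) × (Fin m → ℝ) |
          (NE z.1 ^ p + NF z.2 ^ p) ^ (1 / p) ≤ 1}).toReal /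
        ((volume {x : Fin n → ℝ | NE x ≤ 1}).toReal *
          (volume {y : Fin m → ℝ | NF y ≤ 1}).toReal) =
      Real.Gamma (1 + n / p) * Real.Gamma (1 + m / p) /
        Real.Gamma (1 + (n + m) / p) := by
  have hp0 : (0:ℝ) < p := lt_of_lt_of_le one_pos hp
  have hp0' : p ≠ 0 := hp0.ne'
  haveI : NeZero n := ⟨by omega⟩
  haveI : NeZero m := ⟨by omega⟩
  -- basic properties of NE, NF
  have hNE00 : NE 0 = 0 := (hNE0 0).2 rfl
  have hNF00 : NF 0 = 0 := (hNF0 0).2 rfl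
  have hNEneg : ∀ x, NE (-x) = NE x := fun x => by
    rw [← neg_one_smul ℝ x, hNEs]; simp
  have hNFneg : ∀ y, NF (-y) = NF y := fun y => by
    rw [← neg_one_smul ℝ y, hNFs]; simp
  have hNEnn : ∀ x, 0 ≤ NE x := fun x => by
    have h := hNEt x (-x)
    rw [add_neg_cancel, hNE00, hNEneg] at h
    linarith
  have hNFnn : ∀ y, 0 ≤ NF y := fun y => by
    have h := hNFt y (-y)
    rw [add_neg_cancel, hNF00, hNFneg] at h
    linarith
  -- the combined norm
  set g : ((Fin n → ℝ) × (Fin m → ℝ)) → ℝ :=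
    fun z => (NE z.1 ^ p + NF z.2 ^ p) ^ (1 / p) with hg
  have hsum_nn : ∀ z : (Fin n → ℝ) × (Fin m → ℝ), 0 ≤ NE z.1 ^ p + NF z.2 ^ p := fun z =>
    add_nonneg (Real.rpow_nonneg (hNEnn _) _) (Real.rpow_nonneg (hNFnn _) _)
  have hg0 : g 0 = 0 := by
    simp only [hg, Prod.fst_zero, Prod.snd_zero, hNE00, hNF00,
      Real.zero_rpow hp0', add_zero, Real.zero_rpow (one_div_ne_zero hp0')]
  have hgneg : ∀ z, g (-z) = g z := fun z => by
    simp only [hg, Prod.fst_neg, Prod.snd_neg, hNEneg, hNFneg]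
  have hgzero : ∀ {z}, g z = 0 → z = 0 := by
    intro z hz
    have h1 : NE z.1 ^ p + NF z.2 ^ p = 0 := by
      have := (Real.rpow_eq_zero (hsum_nn z) (one_div_ne_zero hp0')).1 hz
      exact this
    have hE : NE z.1 ^ p = 0 := by
      nlinarith [Real.rpow_nonneg (hNEnn z.1) p, Real.rpow_nonneg (hNFnn z.2) p]
    have hF : NF z.2 ^ p = 0 := by
      nlinarith [Real.rpow_nonneg (hNEnn z.1) p, Real.rpow_nonneg (hNFnn z.2) p]
    have hE' : NE z.1 = 0 := (Real.rpow_eq_zero (hNEnn _) hp0').1 hE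
    have hF' : NF z.2 = 0 := (Real.rpow_eq_zero (hNFnn _) hp0').1 hF
    exact Prod.ext ((hNE0 _).1 hE') ((hNF0 _).1 hF')
  have hgsmul : ∀ (r : ℝ) z, g (r • z) = |r| * g z := by
    intro r z
    simp only [hg, Prod.smul_fst, Prod.smul_snd, hNEs, hNFs]
    rw [Real.mul_rpow (abs_nonneg r) (hNEnn _), Real.mul_rpow (abs_nonneg r) (hNFnn _),
      ← mul_add, Real.mul_rpow (Real.rpow_nonneg (abs_nonneg r) _) (hsum_nn z),
      ← Real.rpow_mul (abs_nonneg r), mul_one_div_cancel hp0', Real.rpow_one]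
  have hgadd : ∀ z w, g (z + w) ≤ g z + g w := by
    intro z w
    have step1 : g (z + w) ≤ ((NE z.1 + NE w.1) ^ p + (NF z.2 + NF w.2) ^ p) ^ (1 / p) := by
      apply Real.rpow_le_rpow (hsum_nn _)
      · exact add_le_add (Real.rpow_le_rpow (hNEnn _) (hNEt _ _) hp0.le)
          (Real.rpow_le_rpow (hNFnn _) (hNFt _ _) hp0.le)
      · positivity
    refine step1.trans ?_
    have := Real.Lp_add_le_of_nonneg (s := Finset.univ) (f := ![NE z.1, NF z.2])
      (g := ![NE w.1, NF w.2]) hp (by intro i _; fin_cases i <;> simp [hNEnn, hNFnn])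
      (by intro i _; fin_cases i <;> simp [hNEnn, hNFnn])
    simpa [hg, one_div, Fin.sum_univ_two] using this
  -- Haar measure instance on the product
  haveI hHaar : IsAddHaarMeasure (volume : Measure ((Fin n → ℝ) × (Fin m → ℝ))) := by
    rw [volume_eq_prod]; exact Measure.prod.instIsAddHaarMeasure _ _
  -- finrank computations
  have frE : (finrank ℝ (Fin n → ℝ) : ℝ) = n := by simp
  have frF : (finrank ℝ (Fin m → ℝ) : ℝ) = m := by simp
  have frP : (finrank ℝ ((Fin n → ℝ) × (Fin m → ℝ)) : ℝ) = n + m := by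
    rw [finrank_prod]; push_cast; simp
  -- the three measure formulas
  have hEeq : volume {x : Fin n → ℝ | NE x ≤ 1} =
      .ofReal ((∫ x : Fin n → ℝ, Real.exp (- NE x ^ p)) / Real.Gamma (n / p + 1)) := by
    rw [measure_le_eq_lt _ hNE00 hNEneg hNEt (fun hx => (hNE0 _).1 hx)
      (fun r x => le_of_eq (hNEs r x)),
      measure_lt_one_eq_integral_div_gamma _ hNE00 hNEneg hNEt (fun hx => (hNE0 _).1 hx)
      (fun r x => le_of_eq (hNEs r x)) hp0, frE]
  have hFeq : volume {y : Fin m → ℝ | NF y ≤ 1} =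
      .ofReal ((∫ y : Fin m → ℝ, Real.exp (- NF y ^ p)) / Real.Gamma (m / p + 1)) := by
    rw [measure_le_eq_lt _ hNF00 hNFneg hNFt (fun hy => (hNF0 _).1 hy)
      (fun r y => le_of_eq (hNFs r y)),
      measure_lt_one_eq_integral_div_gamma _ hNF00 hNFneg hNFt (fun hy => (hNF0 _).1 hy)
      (fun r y => le_of_eq (hNFs r y)) hp0, frF]
  have hPeq : volume {z : (Fin n → ℝ) × (Fin m → ℝ) | g z ≤ 1} =
      .ofReal ((∫ z : (Fin n → ℝ) × (Fin m → ℝ), Real.exp (- g z ^ p)) /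
        Real.Gamma ((n + m) / p + 1)) := by
    rw [measure_le_eq_lt _ hg0 hgneg hgadd hgzero (fun r z => le_of_eq (hgsmul r z)),
      measure_lt_one_eq_integral_div_gamma _ hg0 hgneg hgadd hgzero
      (fun r z => le_of_eq (hgsmul r z)) hp0, frP]
  -- the product integral splits
  have hsplit : (∫ z : (Fin n → ℝ) × (Fin m → ℝ), Real.exp (- g z ^ p)) =
      (∫ x : Fin n → ℝ, Real.exp (- NE x ^ p)) * (∫ y : Fin m → ℝ, Real.exp (- NF y ^ p)) := by
    have hgp : ∀ z : (Fin n → ℝ) × (Fin m → ℝ), g z ^ p = NE z.1 ^ p + NF z.2 ^ p := by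
      intro z
      rw [hg]
      simp only [one_div]
      exact Real.rpow_inv_rpow (hsum_nn z) hp0'
    simp_rw [hgp, neg_add, Real.exp_add]
    rw [volume_eq_prod]
    exact integral_prod_mul (f := fun x => Real.exp (- NE x ^ p))
      (g := fun y => Real.exp (- NF y ^ p))
  -- positivity of the one-dimensional integrals
  set IE := ∫ x : Fin n → ℝ, Real.exp (- NE x ^ p) with hIE
  set IF := ∫ y : Fin m → ℝ, Real.exp (- NF y ^ p) with hIF
  have hGE : 0 < Real.Gamma (n / p + 1) := Real.Gamma_pos_of_pos (by positivity)
  have hGF : 0 < Real.Gamma (m / p + 1) := Real.Gamma_pos_of_pos (by positivity)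
  have hGP : 0 < Real.Gamma ((n + m : ℝ) / p + 1) := Real.Gamma_pos_of_pos (by positivity)
  have hIEpos : 0 < IE := by
    have hpos : 0 < volume {x : Fin n → ℝ | NE x < 1} :=
      my_aux_pos volume hNE00 hNEneg hNEt (fun hx => (hNE0 _).1 hx)
        (fun r x => le_of_eq (hNEs r x))
    rw [measure_lt_one_eq_integral_div_gamma _ hNE00 hNEneg hNEt (fun hx => (hNE0 _).1 hx)
      (fun r x => le_of_eq (hNEs r x)) hp0, frE] at hpos
    have := ENNReal.ofReal_pos.1 hpos
    have h2 := mul_pos this hGE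
    rwa [div_mul_cancel₀ _ hGE.ne'] at h2
  have hIFpos : 0 < IF := by
    have hpos : 0 < volume {y : Fin m → ℝ | NF y < 1} :=
      my_aux_pos volume hNF00 hNFneg hNFt (fun hy => (hNF0 _).1 hy)
        (fun r y => le_of_eq (hNFs r y))
    rw [measure_lt_one_eq_integral_div_gamma _ hNF00 hNFneg hNFt (fun hy => (hNF0 _).1 hy)
      (fun r y => le_of_eq (hNFs r y)) hp0, frF] at hpos
    have := ENNReal.ofReal_pos.1 hpos
    have h2 := mul_pos this hGF
    rwa [div_mul_cancel₀ _ hGF.ne'] at h2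
  -- put everything together
  have hset : {z : (Fin n → ℝ) × (Fin m → ℝ) | (NE z.1 ^ p + NF z.2 ^ p) ^ (1 / p) ≤ 1}
      = {z : (Fin n → ℝ) × (Fin m → ℝ) | g z ≤ 1} := rfl
  rw [hset, hPeq, hEeq, hFeq, hsplit,
    ENNReal.toReal_ofReal (by positivity), ENNReal.toReal_ofReal (by positivity),
    ENNReal.toReal_ofReal (by positivity)]
  rw [show (1 : ℝ) + n / p = n / p + 1 by ring, show (1 : ℝ) + m / p = m / p + 1 by ring,
    show (1 : ℝ) + (n + m) / p = (n + m : ℝ) / p + 1 by ring]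
  field_simp
end

section
/- For all integers n, m ≥ 1, one has Γ(1 + (n+m)/2) ≤ binom(n+m, n) · Γ(1 + n/2) · Γ(1 + m/2). -/
open Real Set Nat

/-- Log-convexity of Gamma gives: `Γ(a+y)Γ(b) ≤ Γ(b+y)Γ(a)` for `0 < a ≤ b`, `0 ≤ y`. -/
lemma gamma_ratio_mono (a b y : ℝ) (ha : 0 < a) (hab : a ≤ b) (hy : 0 ≤ y) :
    Real.Gamma (a + y) * Real.Gamma b ≤ Real.Gamma (b + y) * Real.Gamma a := by
  rcases hy.eq_or_lt with rfl | hy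
  · simp [mul_comm]
  rcases hab.eq_or_lt with rfl | hab
  · ring_nf; exact le_refl _
  have hb : 0 < b := ha.trans hab
  set d : ℝ := b + y - a with hd
  have hdpos : 0 < d := by simp only [hd]; linarith
  set t : ℝ := y / d with ht
  have ht0 : 0 ≤ t := div_nonneg hy.le hdpos.le
  have ht1 : t ≤ 1 := by
    rw [ht, div_le_one hdpos]; linarith
  have hs0 : 0 ≤ 1 - t := by linarith
  have hcomb1 : (1 - t) • a + t • (b + y) = a + y := by
    simp only [smul_eq_mul]
    field_simp [ht]
    rw [ht]; field_simp [hdpos.ne']; ring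
  have hcomb2 : t • a + (1 - t) • (b + y) = b := by
    simp only [smul_eq_mul]
    field_simp [ht]
    rw [ht]; field_simp [hdpos.ne']; ring
  have haI : a ∈ Ioi (0:ℝ) := ha
  have hbyI : b + y ∈ Ioi (0:ℝ) := by simp; linarith
  have h1 := Real.convexOn_log_Gamma.2 haI hbyI hs0 ht0 (by ring)
  rw [hcomb1] at h1
  have h2 := Real.convexOn_log_Gamma.2 haI hbyI ht0 hs0 (by ring)
  rw [hcomb2] at h2
  simp only [Function.comp_apply, smul_eq_mul] at h1 h2
  have key : Real.log (Real.Gamma (a + y)) + Real.log (Real.Gamma b) ≤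
      Real.log (Real.Gamma (b + y)) + Real.log (Real.Gamma a) := by linarith
  have g1 : 0 < Real.Gamma (a + y) := Real.Gamma_pos_of_pos (by linarith)
  have g2 : 0 < Real.Gamma b := Real.Gamma_pos_of_pos hb
  have g3 : 0 < Real.Gamma (b + y) := Real.Gamma_pos_of_pos (by linarith)
  have g4 : 0 < Real.Gamma a := Real.Gamma_pos_of_pos ha
  rw [← Real.log_mul g1.ne' g2.ne', ← Real.log_mul g3.ne' g4.ne'] at key
  exact (Real.log_le_log_iff (by positivity) (by positivity)).mp key

/-- For all integers `n, m ≥ 1`: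
`Γ(1 + (n+m)/2) ≤ binom (n+m) n * Γ(1 + n/2) * Γ(1 + m/2)`. -/
theorem Gamma_add_half_le_choose_mul (n m : ℕ) (hn : 1 ≤ n) (hm : 1 ≤ m) :
    Real.Gamma (1 + ((n : ℝ) + (m : ℝ)) / 2) ≤
      (Nat.choose (n + m) n : ℝ) * Real.Gamma (1 + (n : ℝ) / 2) *
        Real.Gamma (1 + (m : ℝ) / 2) := by
  set x : ℝ := (n : ℝ) with hx
  set y : ℝ := (m : ℝ) with hy
  have hx1 : 1 ≤ x := by rw [hx]; exact_mod_cast hn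
  have hy1 : 1 ≤ y := by rw [hy]; exact_mod_cast hm
  have h1 : Real.Gamma (1 + x / 2 + y / 2) * Real.Gamma (1 + x) ≤
      Real.Gamma (1 + x + y / 2) * Real.Gamma (1 + x / 2) :=
    gamma_ratio_mono (1 + x / 2) (1 + x) (y / 2) (by linarith) (by linarith) (by linarith)
  have h2 : Real.Gamma (1 + y / 2 + x) * Real.Gamma (1 + y) ≤
      Real.Gamma (1 + y + x) * Real.Gamma (1 + y / 2) :=
    gamma_ratio_mono (1 + y / 2) (1 + y) x (by linarith) (by linarith) (by linarith)
  have e1 : (1 : ℝ) + y / 2 + x = 1 + x + y / 2 := by ring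
  rw [e1] at h2
  have gx : Real.Gamma (1 + x) = (n ! : ℝ) := by
    rw [add_comm, hx]; exact_mod_cast Real.Gamma_nat_eq_factorial n
  have gy : Real.Gamma (1 + y) = (m ! : ℝ) := by
    rw [add_comm, hy]; exact_mod_cast Real.Gamma_nat_eq_factorial m
  have gxy : Real.Gamma (1 + y + x) = ((n + m)! : ℝ) := by
    have : (1 : ℝ) + y + x = (n + m : ℕ) + 1 := by push_cast [hx, hy]; ring
    rw [this]; exact_mod_cast Real.Gamma_nat_eq_factorial (n + m)
  have gchoose : ((n + m)! : ℝ) = (Nat.choose (n + m) n : ℝ) * (n ! : ℝ) * (m ! : ℝ) := by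
    have h := Nat.choose_mul_factorial_mul_factorial (Nat.le_add_right n m)
    rw [Nat.add_sub_cancel_left] at h
    exact_mod_cast h.symm
  have pxh : 0 < Real.Gamma (1 + x / 2) := Real.Gamma_pos_of_pos (by linarith)
  have pyh : 0 < Real.Gamma (1 + y / 2) := Real.Gamma_pos_of_pos (by linarith)
  have pmid : 0 < Real.Gamma (1 + x + y / 2) := Real.Gamma_pos_of_pos (by linarith)
  have pfx : (0 : ℝ) < (n ! : ℝ) := by positivity
  have pfy : (0 : ℝ) < (m ! : ℝ) := by positivity
  have e2 : (1 : ℝ) + (x + y) / 2 = 1 + x / 2 + y / 2 := by ring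
  rw [e2]
  rw [gx] at h1
  rw [gy, gxy, gchoose] at h2
  -- from h1: Γ(1+x/2+y/2) ≤ Γ(1+x+y/2) * Γ(1+x/2) / n!
  -- from h2: Γ(1+x+y/2) ≤ C * n! * Γ(1+y/2)
  have hmid : Real.Gamma (1 + x + y / 2) ≤
      ((Nat.choose (n + m) n : ℝ) * (n ! : ℝ)) * Real.Gamma (1 + y / 2) := by
    have h2' := h2
    rw [show (Nat.choose (n + m) n : ℝ) * (n ! : ℝ) * (m ! : ℝ) * Real.Gamma (1 + y / 2)
        = ((Nat.choose (n + m) n : ℝ) * (n ! : ℝ)) * Real.Gamma (1 + y / 2) * (m ! : ℝ) from by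
      ring] at h2'
    exact le_of_mul_le_mul_right h2' pfy
  have h3 : Real.Gamma (1 + x / 2 + y / 2) * (n ! : ℝ) ≤
      ((Nat.choose (n + m) n : ℝ) * Real.Gamma (1 + x / 2) * Real.Gamma (1 + y / 2)) * (n ! : ℝ) := by
    calc Real.Gamma (1 + x / 2 + y / 2) * (n ! : ℝ)
        ≤ Real.Gamma (1 + x + y / 2) * Real.Gamma (1 + x / 2) := h1
      _ ≤ _ := by nlinarith [mul_le_mul_of_nonneg_right hmid pxh.le]
  exact le_of_mul_le_mul_right h3 pfx
end

section
/- For all integers n, m ≥ 0, one has binom(2n + 2m, 2n) ≤ binom(n + m, n)³. -/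
open Nat

lemma step_ineq (n m : ℕ) :
    (2*n+2*m+1) * (2*n+2*m+2) * (m+1)^3 ≤ (n+m+1)^3 * ((2*m+1) * (2*m+2)) := by
  zify
  have hn : (0:ℤ) ≤ n := by positivity
  have hm : (0:ℤ) ≤ m := by positivity
  have h : (0:ℤ) ≤ n * (2*((n:ℤ)+m+1)*(m+1) - ((n:ℤ)+m+1) - (m+1)) := by
    have : (0:ℤ) ≤ 2*((n:ℤ)+m+1)*(m+1) - ((n:ℤ)+m+1) - (m+1) := by nlinarith [mul_nonneg hn hm, mul_nonneg hm hm]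
    exact mul_nonneg hn this
  have h2 : (0:ℤ) ≤ (2*((n:ℤ)+m+1)*(m+1)) * (n * (2*((n:ℤ)+m+1)*(m+1) - ((n:ℤ)+m+1) - (m+1))) :=
    mul_nonneg (by positivity) h
  nlinarith [h2]

lemma key_fact (n m : ℕ) :
    (2*n+2*m)! * (n ! * m !)^3 ≤ ((n+m)!)^3 * ((2*n)! * (2*m)!) := by
  induction m with
  | zero => simp [mul_comm]
  | succ m ih =>
    have h1 : 2*n+2*(m+1) = (2*n+2*m) + 1 + 1 := by ring
    have h2 : n + (m+1) = (n+m) + 1 := by ring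
    have h3 : 2*(m+1) = (2*m) + 1 + 1 := by ring
    rw [h1, h2, h3, Nat.factorial_succ, Nat.factorial_succ, Nat.factorial_succ,
      Nat.factorial_succ, Nat.factorial_succ]
    have key := Nat.mul_le_mul (step_ineq n m) ih
    calc ((2*n+2*m+1)+1) * ((2*n+2*m+1) * (2*n+2*m)!) * (n ! * ((m+1) * m !))^3
        = ((2*n+2*m+1) * (2*n+2*m+2) * (m+1)^3) * ((2*n+2*m)! * (n ! * m !)^3) := by ring
      _ ≤ ((n+m+1)^3 * ((2*m+1) * (2*m+2))) * (((n+m)!)^3 * ((2*n)! * (2*m)!)) :=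
          key
      _ = ((n+m+1) * (n+m)!)^3 * ((2*n)! * (((2*m+1)+1) * ((2*m+1) * (2*m)!))) := by ring

/-- For all integers `n, m ≥ 0`: `binom (2n + 2m) (2n) ≤ binom (n + m) n ^ 3`. -/
theorem choose_two_mul_le_choose_cube (n m : ℕ) :
    Nat.choose (2 * n + 2 * m) (2 * n) ≤ Nat.choose (n + m) n ^ 3 := by
  have h1 := Nat.choose_mul_factorial_mul_factorial (show 2*n ≤ 2*n+2*m by omega)
  have h2 := Nat.choose_mul_factorial_mul_factorial (show n ≤ n+m by omega)
  have hsub1 : 2*n+2*m - 2*n = 2*m := by omega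
  have hsub2 : n+m - n = m := by omega
  rw [hsub1] at h1
  rw [hsub2] at h2
  have hk := key_fact n m
  rw [← h1, ← h2] at hk
  have hpos : 0 < (2*n)! * (2*m)! * (n ! * m !)^3 := by positivity
  refine Nat.le_of_mul_le_mul_right ?_ hpos
  calc Nat.choose (2*n+2*m) (2*n) * ((2*n)! * (2*m)! * (n ! * m !)^3)
      = Nat.choose (2*n+2*m) (2*n) * (2*n)! * (2*m)! * (n ! * m !)^3 := by ring
    _ ≤ (Nat.choose (n+m) n * n ! * m !)^3 * ((2*n)! * (2*m)!) := hk
    _ = Nat.choose (n+m) n ^ 3 * ((2*n)! * (2*m)! * (n ! * m !)^3) := by ring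
end

section
/- (Frobenius norm of the inverse) Let n ≥ 1 and let A be an invertible n × n complex matrix. Then the Frobenius (Hilbert–Schmidt) norms satisfy ‖A⁻¹‖_F ≤ ‖A‖_F^{n−1} / |det A|. -/
open Matrix Finset
open scoped ComplexOrder

open Matrix Finset
open scoped ComplexOrder

private lemma trace_self_mul_conjTranspose {n : ℕ} (M : Matrix (Fin n) (Fin n) ℂ) :
    (M * Mᴴ).trace = ((∑ i, ∑ j, ‖M i j‖ ^ 2 : ℝ) : ℂ) := by
  simp only [Matrix.trace, Matrix.diag, Matrix.mul_apply, Matrix.conjTranspose_apply,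
    Complex.star_def, Complex.mul_conj, ← Complex.sq_norm]
  push_cast
  rfl

private lemma trace_conjTranspose_mul_self' {n : ℕ} (M : Matrix (Fin n) (Fin n) ℂ) :
    (Mᴴ * M).trace = ((∑ i, ∑ j, ‖M i j‖ ^ 2 : ℝ) : ℂ) := by
  rw [Matrix.trace_mul_comm, trace_self_mul_conjTranspose]

private lemma trace_unitary_conj_diag {n : ℕ} (U : Matrix.unitaryGroup (Fin n) ℂ)
    (d : Fin n → ℂ) :
    ((U : Matrix (Fin n) (Fin n) ℂ) * Matrix.diagonal d * star (U : Matrix (Fin n) (Fin n) ℂ)).trace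
      = ∑ i, d i := by
  rw [Matrix.trace_mul_cycle, Matrix.UnitaryGroup.star_mul_self U, one_mul,
    Matrix.trace_diagonal]

private lemma inv_unitary_conj_diag {n : ℕ} (U : Matrix.unitaryGroup (Fin n) ℂ)
    (d : Fin n → ℂ) (hd : ∀ i, d i ≠ 0) :
    ((U : Matrix (Fin n) (Fin n) ℂ) * Matrix.diagonal d * star (U : Matrix (Fin n) (Fin n) ℂ))⁻¹
      = (U : Matrix (Fin n) (Fin n) ℂ) * Matrix.diagonal (fun i => (d i)⁻¹)
          * star (U : Matrix (Fin n) (Fin n) ℂ) := by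
  apply Matrix.inv_eq_right_inv
  calc (U : Matrix (Fin n) (Fin n) ℂ) * Matrix.diagonal d * star (U : Matrix (Fin n) (Fin n) ℂ)
        * ((U : Matrix (Fin n) (Fin n) ℂ) * Matrix.diagonal (fun i => (d i)⁻¹)
          * star (U : Matrix (Fin n) (Fin n) ℂ))
      = (U : Matrix (Fin n) (Fin n) ℂ) * (Matrix.diagonal d
          * ((star (U : Matrix (Fin n) (Fin n) ℂ) * (U : Matrix (Fin n) (Fin n) ℂ))
          * Matrix.diagonal (fun i => (d i)⁻¹))) * star (U : Matrix (Fin n) (Fin n) ℂ) := by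
        simp only [Matrix.mul_assoc]
    _ = 1 := by
        rw [Matrix.UnitaryGroup.star_mul_self U, one_mul, Matrix.diagonal_mul_diagonal]
        have : (fun i => d i * (d i)⁻¹) = fun _ => (1 : ℂ) := by
          funext i; exact mul_inv_cancel₀ (hd i)
        rw [this, Matrix.diagonal_one, mul_one, Matrix.mem_unitaryGroup_iff.mp U.2]


private lemma aux_sum_prod_le' (n : ℕ) (μ : Fin n → ℝ) (h0 : ∀ i, 0 ≤ μ i) :
    ∑ i, ∏ k ∈ Finset.univ.erase i, μ k ≤ (∑ i, μ i) ^ (n - 1) := by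
  match n with
  | 0 => simp
  | 1 =>
    have : (Finset.univ.erase (0 : Fin 1)) = ∅ := by decide
    simp [Fin.sum_univ_one, this]
  | (m + 2) =>
    set S : ℝ := ∑ i, μ i with hS
    have hSnn : 0 ≤ S := Finset.sum_nonneg fun i _ => h0 i
    have hmu_le : ∀ k : Fin (m + 2), μ k ≤ S :=
      fun k => Finset.single_le_sum (fun i _ => h0 i) (Finset.mem_univ k)
    have hstep : ∀ i : Fin (m + 2),
        ∏ k ∈ Finset.univ.erase i, μ k ≤ μ (i + 1) * S ^ m := by
      intro i
      have hne : i + 1 ≠ i := by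
        intro h
        have h1 : (1 : Fin (m + 2)) = 0 := by
          have := congrArg (fun x => x - i) h
          simpa [add_sub_cancel_right, sub_self] using this
        exact one_ne_zero h1
      have hmem : i + 1 ∈ Finset.univ.erase i := Finset.mem_erase.2 ⟨hne, Finset.mem_univ _⟩
      rw [← Finset.mul_prod_erase _ _ hmem]
      have hcard : ((Finset.univ.erase i).erase (i + 1)).card = m := by
        rw [Finset.card_erase_of_mem hmem, Finset.card_erase_of_mem (Finset.mem_univ i)]
        simp
      have hprod : ∏ k ∈ (Finset.univ.erase i).erase (i + 1), μ k ≤ S ^ m := by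
        calc ∏ k ∈ (Finset.univ.erase i).erase (i + 1), μ k
            ≤ ∏ _k ∈ (Finset.univ.erase i).erase (i + 1), S :=
              Finset.prod_le_prod (fun k _ => h0 k) (fun k _ => hmu_le k)
          _ = S ^ m := by rw [Finset.prod_const, hcard]
      exact mul_le_mul_of_nonneg_left hprod (h0 _)
    calc ∑ i, ∏ k ∈ Finset.univ.erase i, μ k
        ≤ ∑ i, μ (i + 1) * S ^ m := Finset.sum_le_sum fun i _ => hstep i
      _ = (∑ i, μ (i + 1)) * S ^ m := by rw [Finset.sum_mul]
      _ = S * S ^ m := by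
          congr 1
          exact Fintype.sum_equiv (Equiv.addRight (1 : Fin (m + 2))) _ μ (fun i => rfl)
      _ = S ^ (m + 2 - 1) := by rw [← pow_succ']; norm_num

/-- **Frobenius norm of the inverse.** If `A` is an invertible `n × n` complex matrix,
then `‖A⁻¹‖_F ≤ ‖A‖_F^(n-1) / |det A|`. -/
theorem frobenius_norm_inverse_le (n : ℕ) (hn : 1 ≤ n)
    (A : Matrix (Fin n) (Fin n) ℂ) (hA : IsUnit A.det) :
    Real.sqrt (∑ i, ∑ j, ‖A⁻¹ i j‖ ^ 2) ≤
      Real.sqrt (∑ i, ∑ j, ‖A i j‖ ^ 2) ^ (n - 1) /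
        ‖A.det‖ := by
  have hB : (Aᴴ * A).IsHermitian := Matrix.isHermitian_conjTranspose_mul_self A
  set μ : Fin n → ℝ := hB.eigenvalues with hμdef
  have hμ0 : ∀ i, 0 ≤ μ i := fun i =>
    (Matrix.posSemidef_conjTranspose_mul_self A).eigenvalues_nonneg i
  set S : ℝ := ∑ i, μ i with hSdef
  set P : ℝ := ∏ i, μ i with hPdef
  set d : ℝ := ‖A.det‖ with hddef
  have hSnn : 0 ≤ S := Finset.sum_nonneg fun i _ => hμ0 i
  have hPd : P = d ^ 2 := by
    have h1 : ((P : ℝ) : ℂ) = (Aᴴ * A).det := by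
      rw [hB.det_eq_prod_eigenvalues, hPdef]
      push_cast
      rfl
    rw [Matrix.det_mul, Matrix.det_conjTranspose] at h1
    have h2 : ((P : ℝ) : ℂ) = ((d ^ 2 : ℝ) : ℂ) := by
      rw [h1, Complex.star_def, ← Complex.normSq_eq_conj_mul_self, ← Complex.sq_norm]
    exact_mod_cast h2
  have hdpos : 0 < d := by
    have hne : A.det ≠ 0 := by
      intro h
      rw [h] at hA
      exact (not_isUnit_zero hA)
    exact norm_pos_iff.mpr hne
  have hPpos : 0 < P := by rw [hPd]; positivity
  have hμpos : ∀ i, 0 < μ i := by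
    intro i
    rcases (hμ0 i).lt_or_eq with h | h
    · exact h
    · exfalso
      have : P = 0 := by rw [hPdef]; exact Finset.prod_eq_zero (Finset.mem_univ i) h.symm
      exact hPpos.ne' this
  have hspec := hB.spectral_theorem
  have hcomp : (RCLike.ofReal ∘ μ : Fin n → ℂ) = fun i => ((μ i : ℝ) : ℂ) := rfl
  rw [hcomp] at hspec
  simp only [Unitary.conjStarAlgAut_apply, Unitary.coe_star] at hspec
  -- trace of B
  have htrB : (Aᴴ * A).trace = ((S : ℝ) : ℂ) := by
    rw [hspec, trace_unitary_conj_diag, hSdef]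
    push_cast
    rfl
  have hS_eq : ∑ i, ∑ j, ‖A i j‖ ^ 2 = S := by
    have h := (trace_conjTranspose_mul_self' A).symm.trans htrB
    exact_mod_cast h
  -- trace of B⁻¹
  set T : ℝ := ∑ i, (μ i)⁻¹ with hTdef
  have hBinv : (Aᴴ * A)⁻¹ = A⁻¹ * (A⁻¹)ᴴ := by
    rw [Matrix.mul_inv_rev, ← Matrix.conjTranspose_nonsing_inv]
  have htrBinv : ((Aᴴ * A)⁻¹).trace = ((T : ℝ) : ℂ) := by
    rw [hspec, inv_unitary_conj_diag _ _ (fun i => by exact_mod_cast (hμpos i).ne'),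
      trace_unitary_conj_diag, hTdef]
    push_cast
    rfl
  have hT_eq : ∑ i, ∑ j, ‖A⁻¹ i j‖ ^ 2 = T := by
    rw [hBinv] at htrBinv
    have h := (trace_self_mul_conjTranspose (A⁻¹)).symm.trans htrBinv
    exact_mod_cast h
  -- key inequality
  have hkey : T ≤ S ^ (n - 1) / P := by
    rw [le_div_iff₀ hPpos]
    calc T * P = ∑ i, ∏ k ∈ Finset.univ.erase i, μ k := by
          rw [hTdef, Finset.sum_mul]
          refine Finset.sum_congr rfl fun i _ => ?_
          rw [hPdef, ← Finset.mul_prod_erase Finset.univ μ (Finset.mem_univ i), ← mul_assoc,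
            inv_mul_cancel₀ (hμpos i).ne', one_mul]
      _ ≤ S ^ (n - 1) := aux_sum_prod_le' n μ hμ0
  rw [hS_eq, hT_eq]
  have hd_sqrt : d = Real.sqrt P := by rw [hPd, Real.sqrt_sq hdpos.le]
  have hsq : (Real.sqrt S ^ (n - 1)) ^ 2 = S ^ (n - 1) := by
    rw [← pow_mul, mul_comm, pow_mul, Real.sq_sqrt hSnn]
  calc Real.sqrt T ≤ Real.sqrt (S ^ (n - 1) / P) := Real.sqrt_le_sqrt hkey
    _ = Real.sqrt (S ^ (n - 1)) / Real.sqrt P := Real.sqrt_div (by positivity) _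
    _ = Real.sqrt S ^ (n - 1) / d := by
        rw [hd_sqrt, ← hsq, Real.sqrt_sq (pow_nonneg (Real.sqrt_nonneg S) _)]
end

section
/- For every integer n ≥ 2, one has ∫₀¹ (1−u)^{n−2} · (−u · log u) du = (Hₙ − 1) / (n(n−1)), where Hₙ = ∑_{i=1}^{n} 1/i is the n-th harmonic number. -/
open Real Finset MeasureTheory intervalIntegral Set

/-- For every integer `n ≥ 2`:
`∫₀¹ (1-u)^(n-2) * (-u log u) du = (Hₙ - 1) / (n (n-1))`. -/
theorem integral_one_sub_pow_mul_neg_mul_log (n : ℕ) (hn : 2 ≤ n) :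
    ∫ u in (0 : ℝ)..1, (1 - u) ^ (n - 2) * (-(u * Real.log u)) =
      ((∑ i ∈ Finset.range n, (1 : ℝ) / (i + 1)) - 1) /
        ((n : ℝ) * ((n : ℝ) - 1)) := by
  obtain ⟨m, rfl⟩ : ∃ m, n = m + 2 := ⟨n - 2, by omega⟩
  have hm2 : m + 2 - 2 = m := by omega
  rw [hm2]
  set M : ℝ := (m : ℝ) + 1 with hM
  set N : ℝ := (m : ℝ) + 2 with hN
  have hMpos : (0:ℝ) < M := by positivity
  have hNpos : (0:ℝ) < N := by positivity
  set G : ℝ → ℝ := fun u => ((∑ k ∈ range (m+1), (1-u)^k) - M*(1-u)^(m+1)) / (M*N) with hG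
  set A : ℝ → ℝ := fun u => (1 - (1-u)^(m+1)*(1+M*u)) / (M*N) with hA
  set B : ℝ → ℝ := fun u =>
    ((∑ k ∈ range (m+1), -((1-u)^(k+1)/((k:ℝ)+1))) + M*(1-u)^(m+2)/N) / (M*N) with hB
  set F : ℝ → ℝ := fun u => A u * (-Real.log u) + B u with hF
  have hAG : ∀ u : ℝ, A u = u * G u := by
    intro u
    have hgs := geom_sum_mul (1-u) (m+1)
    have h2 : u * ((∑ k ∈ range (m+1), (1-u)^k) - M*(1-u)^(m+1))
        = 1 - (1-u)^(m+1)*(1+M*u) := by linear_combination -hgs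
    simp only [hA, hG]
    rw [← mul_div_assoc, h2]
  -- the integrand
  have hfcont : Continuous (fun u : ℝ => (1 - u) ^ m * (-(u * Real.log u))) := by
    exact ((continuous_const.sub continuous_id).pow m).mul Real.continuous_mul_log.neg
  have hFeq : F = fun u => G u * (-(u * Real.log u)) + B u := by
    funext u
    simp only [hF]
    rw [hAG u]
    ring
  have hFcont : ContinuousOn F (Icc (0:ℝ) 1) := by
    rw [hFeq]
    apply Continuous.continuousOn
    apply Continuous.add
    · apply Continuous.mul _ Real.continuous_mul_log.neg
      apply Continuous.div_const
      apply Continuous.sub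
      · exact continuous_finset_sum _ fun k _ => (continuous_const.sub continuous_id).pow k
      · exact continuous_const.mul ((continuous_const.sub continuous_id).pow (m+1))
    · apply Continuous.div_const
      apply Continuous.add
      · exact continuous_finset_sum _ fun k _ =>
          (((continuous_const.sub continuous_id).pow (k+1)).div_const _).neg
      · exact (continuous_const.mul ((continuous_const.sub continuous_id).pow (m+2))).div_const _
  have hderiv : ∀ x ∈ Ioo (0:ℝ) 1,
      HasDerivAt F ((1 - x) ^ m * (-(x * Real.log x))) x := by
    intro x hx
    have hx0 : x ≠ 0 := ne_of_gt hx.1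
    have hsub : HasDerivAt (fun u : ℝ => 1 - u) (-1) x := by
      simpa using (hasDerivAt_id x).const_sub 1
    have hpow : ∀ k : ℕ, HasDerivAt (fun u : ℝ => (1-u)^(k+1))
        (-(((k:ℝ)+1) * (1-x)^k)) x := by
      intro k
      have := (hasDerivAt_pow (k+1) (1-x)).comp x hsub
      refine this.congr_deriv ?_
      push_cast
      ring
    have hA' : HasDerivAt A (x * (1-x)^m) x := by
      have hlin : HasDerivAt (fun u : ℝ => 1 + M*u) M x := by
        simpa using ((hasDerivAt_id x).const_mul M).const_add 1
      have := ((((hpow m).mul hlin).const_sub 1).div_const (M*N))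
      refine this.congr_deriv ?_
      have hne : M * N ≠ 0 := by positivity
      field_simp
      rw [pow_succ]
      simp only [hM, hN]
      push_cast
      ring
    have hB' : HasDerivAt B (G x) x := by
      have hsum : HasDerivAt (fun u : ℝ => ∑ k ∈ range (m+1), -((1-u)^(k+1)/((k:ℝ)+1)))
          (∑ k ∈ range (m+1), (1-x)^k) x := by
        apply HasDerivAt.fun_sum
        intro k _
        have := ((hpow k).div_const ((k:ℝ)+1)).neg
        refine this.congr_deriv ?_
        have hk : ((k:ℝ)+1) ≠ 0 := by positivity
        field_simp
      have hlast : HasDerivAt (fun u : ℝ => M*(1-u)^(m+2)/N) (-(M * N * (1-x)^(m+1)) / N) x := by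
        have := (((hpow (m+1)).const_mul M).div_const N)
        refine this.congr_deriv ?_
        simp only [hM, hN]
        push_cast
        ring
      have := (hsum.add hlast).div_const (M*N)
      refine this.congr_deriv ?_
      simp only [hG]
      have hNne : N ≠ 0 := ne_of_gt hNpos
      field_simp
      ring
    have hlog : HasDerivAt (fun u : ℝ => -Real.log u) (-x⁻¹) x :=
      (Real.hasDerivAt_log hx0).neg
    have := (hA'.mul hlog).add hB'
    refine this.congr_deriv ?_
    rw [hAG x]
    field_simp
    ring
  have hint : IntervalIntegrable (fun u : ℝ => (1 - u) ^ m * (-(u * Real.log u)))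
      volume 0 1 := hfcont.intervalIntegrable 0 1
  have key : ∫ u in (0:ℝ)..1, (1 - u) ^ m * (-(u * Real.log u)) = F 1 - F 0 :=
    integral_eq_sub_of_hasDeriv_right_of_le zero_le_one hFcont
      (fun x hx => (hderiv x hx).hasDerivWithinAt) hint
  rw [key]
  have hF1 : F 1 = 0 := by
    simp [hF, hA, hB, Real.log_one]
  have hF0 : F 0 = ((∑ k ∈ range (m+1), -((1:ℝ)/((k:ℝ)+1))) + M/N) / (M*N) := by
    simp [hF, hA, hB]
  rw [hF1, hF0, zero_sub]
  have hsum2 : ∑ i ∈ Finset.range (m+2), (1:ℝ)/((i:ℝ)+1)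
      = (∑ k ∈ Finset.range (m+1), (1:ℝ)/((k:ℝ)+1)) + 1/N := by
    rw [Finset.sum_range_succ]
    congr 1
    push_cast [hN]
    ring
  rw [hsum2]
  have hd : ((↑(m+2):ℝ)) * ((↑(m+2):ℝ) - 1) = M * N := by push_cast [hM, hN]; ring
  rw [hd, Finset.sum_neg_distrib]
  set S := ∑ k ∈ Finset.range (m+1), (1:ℝ)/((k:ℝ)+1) with hS
  have hMN : M * N ≠ 0 := by positivity
  have hNne : N ≠ 0 := ne_of_gt hNpos
  field_simp
  ring
end
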